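/- arXiv:0905.1861 — 5 statements merged into one kernel-verified Lean document; each statement's English description precedes it below -/
import Mathlib

section
/- Let f : B → ℍ be a function on an open ball B ⊆ ℍ with center at a real point p₀ and radius R > 0. Then f is slice regular on B if and only if there exists a sequence (aₙ)ₙ of quaternions such that the series Σₙ (q−p₀)ⁿ·aₙ converges to f(q) for all q ∈ B. -/
open Quaternion
open scoped ENNReal NNReal
noncomputable section

/-! ### quaternionic imaginary units -/

def qIu : ℍ[ℝ] := ⟨0, 1, 0, 0⟩
lemma qIu_mul_self : qIu * qIu = -1 := by ext <;> simp [Quaternion.re_mul, Quaternion.imI_mul, Quaternion.imJ_mul, Quaternion.imK_mul] <;> simp [qIu]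

lemma re_of_sq {I : ℍ[ℝ]} (h : I * I = -1) : I.re = 0 := by
  rw [Quaternion.ext_iff] at h
  obtain ⟨h1, h2, h3, h4⟩ := h
  simp [Quaternion.re_mul, Quaternion.imI_mul, Quaternion.imJ_mul, Quaternion.imK_mul] at h1 h2 h3 h4
  by_contra hre
  have hi : I.imI = 0 := by
    have : I.re * I.imI = 0 := by linarith
    exact (mul_eq_zero.mp this).resolve_left hre
  have hj : I.imJ = 0 := by
    have : I.re * I.imJ = 0 := by linarith
    exact (mul_eq_zero.mp this).resolve_left hre
  have hk : I.imK = 0 := by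
    have : I.re * I.imK = 0 := by linarith
    exact (mul_eq_zero.mp this).resolve_left hre
  rw [hi, hj, hk] at h1
  nlinarith

lemma norm_of_sq {I : ℍ[ℝ]} (h : I * I = -1) : ‖I‖ = 1 := by
  have hre := re_of_sq h
  have h1 : (I * I).re = (-1 : ℍ[ℝ]).re := by rw [h]
  simp [Quaternion.re_mul, hre] at h1
  have hns : Quaternion.normSq I = 1 := by
    rw [Quaternion.normSq_def', hre]; ring_nf; nlinarith
  have := Quaternion.normSq_eq_norm_mul_self I
  nlinarith [norm_nonneg I]

lemma mul_self_of_mem' {I : ℍ[ℝ]} (hre : I.re = 0) (hn : ‖I‖ = 1) : I * I = -1 := by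
  have hns : Quaternion.normSq I = 1 := by
    rw [Quaternion.normSq_eq_norm_mul_self, hn]; ring
  rw [Quaternion.normSq_def', hre] at hns
  ext <;> simp [Quaternion.re_mul, Quaternion.imI_mul, Quaternion.imJ_mul, Quaternion.imK_mul, hre] <;> nlinarith

open scoped Classical in
def fixI (I : ℍ[ℝ]) : ℍ[ℝ] := if I * I = -1 then I else qIu

lemma fixI_mul_self (I : ℍ[ℝ]) : fixI I * fixI I = -1 := by
  unfold fixI; split
  · assumption
  · exact qIu_mul_self

lemma fixI_eq_self {I : ℍ[ℝ]} (h : I * I = -1) : fixI I = I := by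
  unfold fixI; split
  · rfl
  · exact absurd h (by assumption)

/-! ### the embedding of ℂ determined by an imaginary unit -/

def emb (I : ℍ[ℝ]) : ℂ →ₐ[ℝ] ℍ[ℝ] := Complex.liftAux (fixI I) (fixI_mul_self I)

lemma emb_apply (I : ℍ[ℝ]) (z : ℂ) : emb I z = (z.re : ℍ[ℝ]) + z.im • fixI I := by
  simp [emb, Complex.liftAux_apply]

lemma norm_real_add_smul {J : ℍ[ℝ]} (hre : J.re = 0) (hn : ‖J‖ = 1) (x y : ℝ) :
    ‖(x : ℍ[ℝ]) + y • J‖ ^ 2 = x ^ 2 + y ^ 2 := by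
  have hns : Quaternion.normSq J = 1 := by
    rw [Quaternion.normSq_eq_norm_mul_self, hn]; ring
  rw [Quaternion.normSq_def', hre] at hns
  have key : Quaternion.normSq ((x : ℍ[ℝ]) + y • J) = x ^ 2 + y ^ 2 := by
    rw [Quaternion.normSq_def']
    simp [hre]
    ring_nf
    nlinarith [hns]
  have := Quaternion.normSq_eq_norm_mul_self ((x : ℍ[ℝ]) + y • J)
  nlinarith

lemma norm_emb (I : ℍ[ℝ]) (z : ℂ) : ‖emb I z‖ = ‖z‖ := by
  have h2 : ‖emb I z‖ ^ 2 = ‖z‖ ^ 2 := by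
    rw [emb_apply, norm_real_add_smul (re_of_sq (fixI_mul_self I)) (norm_of_sq (fixI_mul_self I)),
      Complex.sq_norm, Complex.normSq_apply]
    ring
  nlinarith [norm_nonneg (emb I z), norm_nonneg z]

lemma emb_ofReal (I : ℍ[ℝ]) (t : ℝ) : emb I ((t : ℂ)) = (t : ℍ[ℝ]) := by
  have := (emb I).commutes t
  simpa using this

/-! ### the slice as a complex Banach space -/

def Hsl (_I : ℍ[ℝ]) : Type := ℍ[ℝ]

namespace Hsl
variable {I : ℍ[ℝ]}

instance : NormedAddCommGroup (Hsl I) := inferInstanceAs (NormedAddCommGroup ℍ[ℝ])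
instance : Module ℂ (Hsl I) := Module.compHom ℍ[ℝ] (emb I).toRingHom

def ofH (q : ℍ[ℝ]) : Hsl I := q
def toH (q : Hsl I) : ℍ[ℝ] := q

@[simp] lemma toH_ofH (q : ℍ[ℝ]) : toH (ofH q : Hsl I) = q := rfl
@[simp] lemma ofH_toH (q : Hsl I) : ofH (toH q) = q := rfl
@[simp] lemma norm_toH (q : Hsl I) : ‖toH q‖ = ‖q‖ := rfl
@[simp] lemma toH_add (q r : Hsl I) : toH (q + r) = toH q + toH r := rfl
@[simp] lemma toH_sub (q r : Hsl I) : toH (q - r) = toH q - toH r := rfl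
@[simp] lemma toH_zero : toH (0 : Hsl I) = 0 := rfl

lemma smul_def (c : ℂ) (q : Hsl I) : toH (c • q) = emb I c * toH q := rfl

instance : NormedSpace ℂ (Hsl I) where
  norm_smul_le c q := by
    have : ‖c • q‖ = ‖toH (c • q)‖ := rfl
    rw [this, smul_def, norm_mul, norm_emb]
    exact le_of_eq rfl

instance : CompleteSpace (Hsl I) := inferInstanceAs (CompleteSpace ℍ[ℝ])

lemma real_smul_def (r : ℝ) (q : Hsl I) : toH (r • q) = ((r : ℝ) : ℍ[ℝ]) * toH q := by
  have : (r • q) = ((r : ℂ) • q) := rfl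
  rw [this, smul_def]
  congr 1
  exact emb_ofReal I r

lemma real_smul_toH (r : ℝ) (q : Hsl I) : toH (r • q) = r • toH q := by
  rw [real_smul_def, Quaternion.coe_mul_eq_smul]

lemma hasDerivAt_iff {g : ℝ → Hsl I} {L : Hsl I} {x : ℝ} :
    HasDerivAt g L x ↔ HasDerivAt (fun t => toH (g t)) (toH L) x := by
  rw [hasDerivAt_iff_isLittleO, hasDerivAt_iff_isLittleO]
  constructor <;> intro h <;>
  · refine h.congr' (Filter.Eventually.of_forall fun t => ?_) (Filter.Eventually.of_forall fun t => rfl)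
    first
      | exact (by simp [real_smul_toH] : toH (g t - g x - (t - x) • L) = toH (g t) - toH (g x) - (t - x) • toH L)
      | exact (by simp [real_smul_toH] : toH (g t - g x - (t - x) • L) = toH (g t) - toH (g x) - (t - x) • toH L).symm

lemma hasSum_iff {g : ℕ → Hsl I} {S : Hsl I} :
    HasSum g S ↔ HasSum (fun n => toH (g n)) (toH S) := Iff.rfl

lemma continuous_toH : Continuous (toH : Hsl I → ℍ[ℝ]) :=
  (continuous_id : Continuous (id : ℍ[ℝ] → ℍ[ℝ]))

lemma pow_smul_toH (w : ℂ) (n : ℕ) (q : Hsl I) :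
    toH (w ^ n • q) = (emb I w) ^ n * toH q := by
  rw [smul_def, map_pow]

end Hsl

lemma hasFDerivAt_of_partials {E : Type*} [NormedAddCommGroup E] [NormedSpace ℝ E]
    {H Hx Hy : ℝ × ℝ → E} {U : Set (ℝ × ℝ)} (hU : IsOpen U)
    (hx : ∀ p ∈ U, HasDerivAt (fun t => H (t, p.2)) (Hx p) p.1)
    (hy : ∀ p ∈ U, HasDerivAt (fun t => H (p.1, t)) (Hy p) p.2)
    (hcx : ContinuousOn Hx U) {p : ℝ × ℝ} (hp : p ∈ U) :
    HasFDerivAt H ((ContinuousLinearMap.fst ℝ ℝ ℝ).smulRight (Hx p) +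
      (ContinuousLinearMap.snd ℝ ℝ ℝ).smulRight (Hy p)) p := by
  rw [hasFDerivAt_iff_isLittleO_nhds_zero, Asymptotics.isLittleO_iff]
  intro ε hε
  have hε2 : 0 < ε / 2 := by linarith
  -- δ₁ : continuity of Hx at p
  have hcx' : ContinuousAt Hx p := hcx.continuousAt (hU.mem_nhds hp)
  obtain ⟨δ₁, hδ₁pos, hδ₁⟩ := Metric.continuousAt_iff.mp hcx' (ε / 2) hε2
  -- δ₂ : ball in U
  obtain ⟨δ₂, hδ₂pos, hδ₂⟩ := Metric.isOpen_iff.mp hU p hp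
  -- δ₃ : y-derivative estimate
  have hyp := (hy p hp)
  rw [hasDerivAt_iff_isLittleO, Asymptotics.isLittleO_iff] at hyp
  obtain ⟨δ₃, hδ₃pos, hδ₃⟩ := Metric.eventually_nhds_iff.mp (hyp hε2)
  set δ := min δ₁ (min δ₂ δ₃) with hδ
  have hδpos : 0 < δ := lt_min hδ₁pos (lt_min hδ₂pos hδ₃pos)
  rw [Metric.eventually_nhds_iff]
  refine ⟨δ, hδpos, fun {v} hv => ?_⟩
  rw [dist_zero_right] at hv
  have hv1 : ‖v.1‖ ≤ ‖v‖ := norm_fst_le v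
  have hv2 : ‖v.2‖ ≤ ‖v‖ := norm_snd_le v
  -- B estimate
  have hBmem : dist (p.2 + v.2) p.2 < δ₃ := by
    rw [dist_self_add_left]
    exact lt_of_le_of_lt hv2 (lt_of_lt_of_le hv (le_trans (min_le_right _ _) (min_le_right _ _)))
  have hB : ‖H (p.1, p.2 + v.2) - H (p.1, p.2) - (p.2 + v.2 - p.2) • Hy p‖
      ≤ ε / 2 * ‖p.2 + v.2 - p.2‖ := hδ₃ hBmem
  simp only [add_sub_cancel_left] at hB
  -- A estimate via MVT
  have hA : ‖H (p.1 + v.1, p.2 + v.2) - H (p.1, p.2 + v.2) - v.1 • Hx p‖ ≤ ε / 2 * ‖v.1‖ := by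
    set g : ℝ → E := fun s => H (p.1 + s, p.2 + v.2) - s • Hx p with hg
    have hmem : ∀ s ∈ Set.uIcc (0:ℝ) v.1, (p.1 + s, p.2 + v.2) ∈ U := by
      intro s hs
      apply hδ₂
      rw [Metric.mem_ball, Prod.dist_eq]
      have hs' : |s| ≤ |v.1| := by
        rcases Set.mem_uIcc.mp hs with h | h
        · rw [abs_of_nonneg h.1]; exact le_trans h.2 (le_abs_self _)
        · rw [abs_of_nonpos h.2]; exact le_trans (neg_le_neg h.1) (neg_le_abs _)
      have h1 : dist (p.1 + s) p.1 < δ₂ := by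
        rw [dist_self_add_left, Real.norm_eq_abs] at *
        calc |s| ≤ |v.1| := hs'
        _ ≤ ‖v‖ := hv1
        _ < δ := hv
        _ ≤ δ₂ := le_trans (min_le_right _ _) (min_le_left _ _)
      have h2 : dist (p.2 + v.2) p.2 < δ₂ := by
        rw [dist_self_add_left]
        exact lt_of_le_of_lt hv2 (lt_of_lt_of_le hv (le_trans (min_le_right _ _) (min_le_left _ _)))
      exact max_lt h1 h2
    have hderiv : ∀ s ∈ Set.uIcc (0:ℝ) v.1,
        HasDerivWithinAt g (Hx (p.1 + s, p.2 + v.2) - Hx p) (Set.uIcc (0:ℝ) v.1) s := by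
      intro s hs
      have h1 : HasDerivAt (fun t => H (t, p.2 + v.2)) (Hx (p.1 + s, p.2 + v.2)) (p.1 + s) :=
        hx _ (hmem s hs)
      have h2 : HasDerivAt (fun s' : ℝ => H (p.1 + s', p.2 + v.2)) (Hx (p.1 + s, p.2 + v.2)) s := by
        have := HasDerivAt.scomp (h := fun s' : ℝ => p.1 + s') s h1 ((hasDerivAt_id s).const_add p.1)
        simpa [Function.comp_def] using this
      have h3 : HasDerivAt (fun s' : ℝ => s' • Hx p) (Hx p) s := by
        simpa using (hasDerivAt_id s).smul_const (Hx p)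
      exact ((h2.sub h3)).hasDerivWithinAt
    have hbound : ∀ s ∈ Set.uIcc (0:ℝ) v.1, ‖Hx (p.1 + s, p.2 + v.2) - Hx p‖ ≤ ε / 2 := by
      intro s hs
      have : dist (p.1 + s, p.2 + v.2) p < δ₁ := by
        rw [Prod.dist_eq]
        have hs' : |s| ≤ |v.1| := by
          rcases Set.mem_uIcc.mp hs with h | h
          · rw [abs_of_nonneg h.1]; exact le_trans h.2 (le_abs_self _)
          · rw [abs_of_nonpos h.2]; exact le_trans (neg_le_neg h.1) (neg_le_abs _)
        have h1 : dist (p.1 + s) p.1 < δ₁ := by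
          rw [dist_self_add_left, Real.norm_eq_abs] at *
          calc |s| ≤ |v.1| := hs'
          _ ≤ ‖v‖ := hv1
          _ < δ := hv
          _ ≤ δ₁ := min_le_left _ _
        have h2 : dist (p.2 + v.2) p.2 < δ₁ := by
          rw [dist_self_add_left]
          exact lt_of_le_of_lt hv2 (lt_of_lt_of_le hv (min_le_left _ _))
        exact max_lt h1 h2
      have := hδ₁ this
      rw [dist_eq_norm] at this
      exact le_of_lt this
    have := Convex.norm_image_sub_le_of_norm_hasDerivWithin_le hderiv hbound
      (convex_uIcc _ _) (Set.left_mem_uIcc) (Set.right_mem_uIcc)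
    simp only [hg, zero_smul, sub_zero, add_zero] at this
    rw [sub_right_comm]
    simpa using this
  -- assemble
  have key : H (p + v) - H p - ((ContinuousLinearMap.fst ℝ ℝ ℝ).smulRight (Hx p) +
      (ContinuousLinearMap.snd ℝ ℝ ℝ).smulRight (Hy p)) v
      = (H (p.1 + v.1, p.2 + v.2) - H (p.1, p.2 + v.2) - v.1 • Hx p)
        + (H (p.1, p.2 + v.2) - H (p.1, p.2) - v.2 • Hy p) := by
    have hpv : p + v = (p.1 + v.1, p.2 + v.2) := rfl
    rw [hpv]
    simp [Prod.fst_add, Prod.snd_add]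
    abel
  rw [key]
  calc ‖_ + _‖ ≤ _ + _ := norm_add_le _ _
  _ ≤ ε / 2 * ‖v.1‖ + ε / 2 * ‖v.2‖ := add_le_add hA hB
  _ ≤ ε / 2 * ‖v‖ + ε / 2 * ‖v‖ := by
      apply add_le_add <;> apply mul_le_mul_of_nonneg_left _ (le_of_lt hε2) <;> assumption
  _ = ε * ‖v‖ := by ring

variable {𝕜 : Type*} [NontriviallyNormedField 𝕜] {E : Type*} [NormedAddCommGroup E] [NormedSpace 𝕜 E]

/-- The power series with coefficients `a`. -/
def psOf (𝕜 : Type*) [NontriviallyNormedField 𝕜] {E : Type*} [NormedAddCommGroup E]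
    [NormedSpace 𝕜 E] (a : ℕ → E) : FormalMultilinearSeries 𝕜 𝕜 E :=
  fun n => ContinuousMultilinearMap.mkPiRing 𝕜 (Fin n) (a n)

lemma psOf_apply (a : ℕ → E) (n : ℕ) (w : 𝕜) :
    (psOf 𝕜 a n fun _ => w) = w ^ n • a n := by
  simp [psOf]

lemma psOf_norm (a : ℕ → E) (n : ℕ) : ‖psOf 𝕜 a n‖ = ‖a n‖ :=
  ContinuousMultilinearMap.norm_mkPiRing _

lemma psOf_coeff (a : ℕ → E) (n : ℕ) : (psOf 𝕜 a).coeff n = a n := by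
  simp [FormalMultilinearSeries.coeff, psOf]

lemma psOf_radius {a : ℕ → E} {R : ℝ}
    (h : ∀ r : ℝ, 0 < r → r < R → Filter.Tendsto (fun n => ‖a n‖ * r ^ n) Filter.atTop (nhds 0)) :
    ENNReal.ofReal R ≤ (psOf 𝕜 a).radius := by
  apply ENNReal.le_of_forall_nnreal_lt
  intro r hr
  rcases eq_or_ne r 0 with rfl | hr0
  · simp
  have hrpos : (0:ℝ) < r := lt_of_le_of_ne r.coe_nonneg (Ne.symm (by exact_mod_cast hr0))
  have hrR : (r:ℝ) < R := by
    rw [← ENNReal.ofReal_coe_nnreal] at hr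
    exact (ENNReal.ofReal_lt_ofReal_iff_of_nonneg r.coe_nonneg).mp hr
  apply FormalMultilinearSeries.le_radius_of_tendsto (l := 0)
  refine (h r hrpos hrR).congr fun n => ?_
  rw [psOf_norm]

lemma hasFPowerSeriesOnBall_psOf {E : Type*} [NormedAddCommGroup E] [NormedSpace ℝ E]
    {R : ℝ} (hR : 0 < R) {g : ℝ → E} {b : ℕ → E}
    (hb : ∀ t : ℝ, |t| < R → HasSum (fun n => t ^ n • b n) (g t)) :
    HasFPowerSeriesOnBall g (psOf ℝ b) 0 (ENNReal.ofReal R) := by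
  constructor
  · apply psOf_radius
    intro r hrpos hrR
    have hs := (hb r (by rwa [abs_of_pos hrpos])).summable
    have := hs.tendsto_atTop_zero.norm
    rw [show ‖(0:E)‖ = 0 from norm_zero] at this
    refine this.congr fun n => ?_
    rw [norm_smul, norm_pow, Real.norm_eq_abs, abs_of_pos hrpos, mul_comm]
  · simpa using hR
  · intro y hy
    rw [Metric.mem_eball, edist_zero_right] at hy
    have hy' : |y| < R := by
      rw [← ofReal_norm] at hy
      rw [← Real.norm_eq_abs]
      exact (ENNReal.ofReal_lt_ofReal_iff_of_nonneg (norm_nonneg y)).mp hy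
    simpa [psOf_apply, psOf_coeff] using hb y hy'

lemma coeff_unique {E : Type*} [NormedAddCommGroup E] [NormedSpace ℝ E]
    {R : ℝ} (hR : 0 < R) {g : ℝ → E} {b c : ℕ → E}
    (hb : ∀ t : ℝ, |t| < R → HasSum (fun n => t ^ n • b n) (g t))
    (hc : ∀ t : ℝ, |t| < R → HasSum (fun n => t ^ n • c n) (g t)) : b = c := by
  have h1 := (hasFPowerSeriesOnBall_psOf hR hb).hasFPowerSeriesAt
  have h2 := (hasFPowerSeriesOnBall_psOf hR hc).hasFPowerSeriesAt
  have := h1.eq_formalMultilinearSeries h2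
  funext n
  rw [← psOf_coeff (𝕜 := ℝ) b n, this, psOf_coeff]

/-! ### slice coordinates -/

def Wc (p₀ x y : ℝ) : ℂ := ((x : ℂ) - (p₀ : ℂ)) + (y : ℂ) * Complex.I

@[simp] lemma Wc_re (p₀ x y : ℝ) : (Wc p₀ x y).re = x - p₀ := by simp [Wc]
@[simp] lemma Wc_im (p₀ x y : ℝ) : (Wc p₀ x y).im = y := by simp [Wc]

lemma mem_eball_iff {R : ℝ} {w : ℂ} :
    w ∈ Metric.eball (0:ℂ) (ENNReal.ofReal R) ↔ ‖w‖ < R := by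
  rw [Metric.mem_eball, edist_zero_right, ← ofReal_norm]
  exact ENNReal.ofReal_lt_ofReal_iff_of_nonneg (norm_nonneg w)

lemma emb_Wc {I : ℍ[ℝ]} (hI : I * I = -1) (p₀ x y : ℝ) :
    (p₀ : ℍ[ℝ]) + emb I (Wc p₀ x y) = (x : ℍ[ℝ]) + y • I := by
  rw [emb_apply, fixI_eq_self hI, Wc_re, Wc_im, ← add_assoc]
  push_cast
  abel

lemma norm_Wc {I : ℍ[ℝ]} (hI : I * I = -1) (p₀ x y : ℝ) :
    ‖Wc p₀ x y‖ = ‖(x : ℍ[ℝ]) + y • I - (p₀ : ℍ[ℝ])‖ := by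
  rw [← emb_Wc hI p₀ x y, add_sub_cancel_left, norm_emb]

lemma mem_ball_iff_Wc {I : ℍ[ℝ]} (hI : I * I = -1) {p₀ R : ℝ} (x y : ℝ) :
    (x : ℍ[ℝ]) + y • I ∈ Metric.ball (p₀ : ℍ[ℝ]) R ↔ ‖Wc p₀ x y‖ < R := by
  rw [Metric.mem_ball, dist_eq_norm, norm_Wc hI]
/-- The 2-sphere of imaginary units in the quaternions. -/
def SpH : Set ℍ[ℝ] := {q | q.re = 0 ∧ ‖q‖ = 1}

/-- The slice (complex plane) `L_I = {x + y I : x, y ∈ ℝ}`. -/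
def sliceL (I : ℍ[ℝ]) : Set ℍ[ℝ] := {q | ∃ x y : ℝ, q = (x : ℍ[ℝ]) + y • I}

/-- `f` has continuous partial derivatives on the `I`-slice part of `Ω` and satisfies the
Cauchy–Riemann equation `∂f/∂x + I ∂f/∂y = 0` there. -/
def SliceHolomorphicOn (I : ℍ[ℝ]) (f : ℍ[ℝ] → ℍ[ℝ]) (Ω : Set ℍ[ℝ]) : Prop :=
  ∃ fx fy : ℝ → ℝ → ℍ[ℝ],
    (∀ x y : ℝ, (x : ℍ[ℝ]) + y • I ∈ Ω →
      HasDerivAt (fun t : ℝ => f ((t : ℍ[ℝ]) + y • I)) (fx x y) x) ∧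
    (∀ x y : ℝ, (x : ℍ[ℝ]) + y • I ∈ Ω →
      HasDerivAt (fun t : ℝ => f ((x : ℍ[ℝ]) + t • I)) (fy x y) y) ∧
    ContinuousOn (fun p : ℝ × ℝ => fx p.1 p.2) {p : ℝ × ℝ | (p.1 : ℍ[ℝ]) + p.2 • I ∈ Ω} ∧
    ContinuousOn (fun p : ℝ × ℝ => fy p.1 p.2) {p : ℝ × ℝ | (p.1 : ℍ[ℝ]) + p.2 • I ∈ Ω} ∧
    ∀ x y : ℝ, (x : ℍ[ℝ]) + y • I ∈ Ω → fx x y + I * fy x y = 0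

/-- `f` is slice regular on `Ω`. -/
def SliceRegularOn (f : ℍ[ℝ] → ℍ[ℝ]) (Ω : Set ℍ[ℝ]) : Prop :=
  ∀ I ∈ SpH, SliceHolomorphicOn I f Ω

/-- `Ω` is axially symmetric. -/
def AxSymm (Ω : Set ℍ[ℝ]) : Prop :=
  ∀ (x y : ℝ), ∀ I ∈ SpH, (x : ℍ[ℝ]) + y • I ∈ Ω → ∀ J ∈ SpH, (x : ℍ[ℝ]) + y • J ∈ Ω

/-- `Ω` is an s-domain: a domain meeting the real axis whose slices are connected. -/
def IsSDomain (Ω : Set ℍ[ℝ]) : Prop :=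
  IsOpen Ω ∧ IsConnected Ω ∧ (∃ x : ℝ, (x : ℍ[ℝ]) ∈ Ω) ∧
    ∀ I ∈ SpH, IsConnected (Ω ∩ sliceL I)

/-- The axially symmetric completion of a set `S ⊆ ℍ`. -/
def symmComp (S : Set ℍ[ℝ]) : Set ℍ[ℝ] :=
  {q | ∃ (x y : ℝ) (I : ℍ[ℝ]), I ∈ SpH ∧ q = (x : ℍ[ℝ]) + y • I ∧
    ∃ J ∈ SpH, (x : ℍ[ℝ]) + y • J ∈ S}

/-- A domain of the slice `L_I`: a nonempty connected relatively open subset of `L_I`. -/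
def IsSliceDomain (I : ℍ[ℝ]) (D : Set ℍ[ℝ]) : Prop :=
  D ⊆ sliceL I ∧ IsConnected D ∧ IsOpen {p : ℝ × ℝ | (p.1 : ℍ[ℝ]) + p.2 • I ∈ D}


/-! ### reverse direction: power series gives slice holomorphy -/

lemma sliceHolo_of_hasSum {p₀ R : ℝ} (hR : 0 < R) {f : ℍ[ℝ] → ℍ[ℝ]} {a : ℕ → ℍ[ℝ]}
    (h : ∀ q ∈ Metric.ball (p₀ : ℍ[ℝ]) R,
      HasSum (fun n : ℕ => (q - (p₀ : ℍ[ℝ])) ^ n * a n) (f q))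
    {I : ℍ[ℝ]} (hI2 : I * I = -1) :
    SliceHolomorphicOn I f (Metric.ball (p₀ : ℍ[ℝ]) R) := by
  set A : ℕ → Hsl I := fun n => Hsl.ofH (a n) with hA
  set G : ℂ → Hsl I := fun w => Hsl.ofH (f ((p₀ : ℍ[ℝ]) + emb I w)) with hG
  have key0 : ∀ w : ℂ, ‖w‖ < R → HasSum (fun n => w ^ n • A n) (G w) := by
    intro w hw
    have hq : (p₀ : ℍ[ℝ]) + emb I w ∈ Metric.ball (p₀ : ℍ[ℝ]) R := by
      rw [Metric.mem_ball, dist_eq_norm, add_sub_cancel_left, norm_emb]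
      exact hw
    have hsum := h _ hq
    rw [add_sub_cancel_left] at hsum
    rw [Hsl.hasSum_iff]
    have heq : (fun n => Hsl.toH (w ^ n • A n)) = fun n => (emb I w) ^ n * a n := by
      funext n; rw [Hsl.pow_smul_toH]; simp [hA]
    rw [heq]
    exact hsum
  have hball : HasFPowerSeriesOnBall G (psOf ℂ A) 0 (ENNReal.ofReal R) := by
    constructor
    · apply psOf_radius
      intro r hrpos hrR
      have hs := (key0 (r : ℂ) (by rwa [Complex.norm_real, Real.norm_eq_abs, abs_of_pos hrpos])).summable
      have := hs.tendsto_atTop_zero.norm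
      rw [show ‖(0 : Hsl I)‖ = 0 from norm_zero] at this
      refine this.congr fun n => ?_
      rw [norm_smul, norm_pow, Complex.norm_real, Real.norm_eq_abs, abs_of_pos hrpos, mul_comm]
    · simpa using hR
    · intro y hy
      rw [mem_eball_iff] at hy
      simpa [psOf_apply, psOf_coeff] using key0 y hy
  have hanal : AnalyticOnNhd ℂ G (Metric.eball (0:ℂ) (ENNReal.ofReal R)) := hball.analyticOnNhd
  have hda : ∀ w : ℂ, ‖w‖ < R → HasDerivAt G (deriv G w) w := fun w hw =>
    ((hanal w (mem_eball_iff.mpr hw)).differentiableAt).hasDerivAt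
  have hcont : ContinuousOn (deriv G) (Metric.eball (0:ℂ) (ENNReal.ofReal R)) :=
    (hanal.deriv).continuousOn
  refine ⟨fun x y => Hsl.toH (deriv G (Wc p₀ x y)),
          fun x y => I * Hsl.toH (deriv G (Wc p₀ x y)), ?_, ?_, ?_, ?_, ?_⟩
  · -- x-derivative
    intro x y hmem
    have hw : ‖Wc p₀ x y‖ < R := (mem_ball_iff_Wc hI2 x y).mp hmem
    have hγ : HasDerivAt (fun t : ℝ => Wc p₀ t y) (1 : ℂ) x := by
      have h1 : HasDerivAt (fun t : ℝ => (t : ℂ)) (1 : ℂ) x := by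
        simpa using (hasDerivAt_id x).ofReal_comp
      simpa [Wc] using (h1.sub_const (p₀ : ℂ)).add_const ((y : ℂ) * Complex.I)
    have hcomp := (hda _ hw).scomp x hγ
    rw [one_smul] at hcomp
    rw [Hsl.hasDerivAt_iff] at hcomp
    refine hcomp.congr_of_eventuallyEq (Filter.Eventually.of_forall fun t => ?_)
    show f _ = _
    rw [← emb_Wc hI2 p₀ t y]
    rfl
  · -- y-derivative
    intro x y hmem
    have hw : ‖Wc p₀ x y‖ < R := (mem_ball_iff_Wc hI2 x y).mp hmem
    have hγ : HasDerivAt (fun t : ℝ => Wc p₀ x t) (Complex.I) y := by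
      have h1 : HasDerivAt (fun t : ℝ => (t : ℂ)) (1 : ℂ) y := by
        simpa using (hasDerivAt_id y).ofReal_comp
      simpa [Wc] using (h1.mul_const Complex.I).const_add ((x : ℂ) - (p₀ : ℂ))
    have hcomp := (hda _ hw).scomp y hγ
    have hval : Hsl.toH (Complex.I • deriv G (Wc p₀ x y)) = I * Hsl.toH (deriv G (Wc p₀ x y)) := by
      rw [Hsl.smul_def, emb_apply, fixI_eq_self hI2]
      simp
    rw [Hsl.hasDerivAt_iff, hval] at hcomp
    refine hcomp.congr_of_eventuallyEq (Filter.Eventually.of_forall fun t => ?_)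
    show f _ = _
    rw [← emb_Wc hI2 p₀ x t]
    rfl
  · -- continuity of fx
    have hWcont : Continuous fun p : ℝ × ℝ => Wc p₀ p.1 p.2 := by
      unfold Wc; fun_prop
    have hmaps : Set.MapsTo (fun p : ℝ × ℝ => Wc p₀ p.1 p.2)
        {p : ℝ × ℝ | ((p.1 : ℍ[ℝ]) + p.2 • I) ∈ Metric.ball (p₀ : ℍ[ℝ]) R}
        (Metric.eball (0:ℂ) (ENNReal.ofReal R)) := by
      intro p hp
      exact mem_eball_iff.mpr ((mem_ball_iff_Wc hI2 p.1 p.2).mp hp)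
    exact Hsl.continuous_toH.comp_continuousOn (hcont.comp hWcont.continuousOn hmaps)
  · -- continuity of fy
    have hWcont : Continuous fun p : ℝ × ℝ => Wc p₀ p.1 p.2 := by
      unfold Wc; fun_prop
    have hmaps : Set.MapsTo (fun p : ℝ × ℝ => Wc p₀ p.1 p.2)
        {p : ℝ × ℝ | ((p.1 : ℍ[ℝ]) + p.2 • I) ∈ Metric.ball (p₀ : ℍ[ℝ]) R}
        (Metric.eball (0:ℂ) (ENNReal.ofReal R)) := by
      intro p hp
      exact mem_eball_iff.mpr ((mem_ball_iff_Wc hI2 p.1 p.2).mp hp)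
    exact continuousOn_const.mul
      (Hsl.continuous_toH.comp_continuousOn (hcont.comp hWcont.continuousOn hmaps))
  · -- Cauchy-Riemann
    intro x y _
    rw [← mul_assoc, hI2, neg_one_mul, add_neg_cancel]

/-! ### forward direction: slice holomorphy gives a power series on the slice -/

lemma Hsl.toH_injective {I : ℍ[ℝ]} : Function.Injective (Hsl.toH : Hsl I → ℍ[ℝ]) :=
  fun _ _ h => h

lemma Hsl.real_smul_eq_complex {I : ℍ[ℝ]} (r : ℝ) (v : Hsl I) :
    r • v = ((r : ℂ)) • v := by
  apply Hsl.toH_injective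
  rw [Hsl.real_smul_def, Hsl.smul_def, emb_ofReal]

lemma emb_I_eq {I : ℍ[ℝ]} (hI2 : I * I = -1) : emb I Complex.I = I := by
  rw [emb_apply, fixI_eq_self hI2]
  simp

lemma exists_coeff_of_sliceHolo {p₀ R : ℝ} (hR : 0 < R) {f : ℍ[ℝ] → ℍ[ℝ]} {I : ℍ[ℝ]}
    (hI2 : I * I = -1) (hh : SliceHolomorphicOn I f (Metric.ball (p₀ : ℍ[ℝ]) R)) :
    ∃ c : ℕ → ℍ[ℝ], ∀ w : ℂ, ‖w‖ < R →
      HasSum (fun n : ℕ => (emb I w) ^ n * c n) (f ((p₀ : ℍ[ℝ]) + emb I w)) := by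
  obtain ⟨fx, fy, h1, h2, h3, h4, h5⟩ := hh
  set G : ℂ → Hsl I := fun w => Hsl.ofH (f ((p₀ : ℍ[ℝ]) + emb I w)) with hGdef
  set H : ℝ × ℝ → Hsl I := fun p => Hsl.ofH (f ((p.1 + p₀ : ℝ) + p.2 • I)) with hHdef
  set U : Set (ℝ × ℝ) :=
    {p : ℝ × ℝ | ((p.1 + p₀ : ℝ) : ℍ[ℝ]) + p.2 • I ∈ Metric.ball (p₀ : ℍ[ℝ]) R} with hUdef
  have hpt : ∀ w : ℂ, ((w.re + p₀ : ℝ) : ℍ[ℝ]) + w.im • I = (p₀ : ℍ[ℝ]) + emb I w := by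
    intro w
    rw [emb_apply, fixI_eq_self hI2]
    push_cast
    abel
  have hGH : ∀ w : ℂ, H (w.re, w.im) = G w := by
    intro w
    simp only [hHdef, hGdef]
    rw [hpt w]
  have hUopen : IsOpen U := by
    apply IsOpen.preimage (f := fun p : ℝ × ℝ => ((p.1 + p₀ : ℝ) : ℍ[ℝ]) + p.2 • I)
    · exact ((Quaternion.continuous_coe).comp (continuous_fst.add continuous_const)).add
        (continuous_snd.smul continuous_const)
    · exact Metric.isOpen_ball
  set Hx : ℝ × ℝ → Hsl I := fun p => Hsl.ofH (fx (p.1 + p₀) p.2) with hHx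
  set Hy : ℝ × ℝ → Hsl I := fun p => Hsl.ofH (fy (p.1 + p₀) p.2) with hHy
  have hpx : ∀ p ∈ U, HasDerivAt (fun t => H (t, p.2)) (Hx p) p.1 := by
    intro p hp
    rw [Hsl.hasDerivAt_iff]
    have h1' := h1 (p.1 + p₀) p.2 hp
    have h2' := h1'.scomp p.1 ((hasDerivAt_id p.1).add_const p₀)
    simp only [one_smul] at h2'
    simp only [hHdef, hHx, Hsl.toH_ofH]
    exact h2'
  have hpy : ∀ p ∈ U, HasDerivAt (fun t => H (p.1, t)) (Hy p) p.2 := by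
    intro p hp
    rw [Hsl.hasDerivAt_iff]
    simp only [hHdef, hHy, Hsl.toH_ofH]
    exact h2 (p.1 + p₀) p.2 hp
  have hcx : ContinuousOn Hx U := by
    have hsh : Continuous fun p : ℝ × ℝ => ((p.1 + p₀ : ℝ), p.2) := by fun_prop
    have hmaps : Set.MapsTo (fun p : ℝ × ℝ => ((p.1 + p₀ : ℝ), p.2)) U
        {p : ℝ × ℝ | ((p.1 : ℝ) : ℍ[ℝ]) + p.2 • I ∈ Metric.ball (p₀ : ℍ[ℝ]) R} :=
      fun p hp => hp
    exact h3.comp hsh.continuousOn hmaps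
  -- complex differentiability of G
  have hdiff : DifferentiableOn ℂ G (Metric.ball (0 : ℂ) R) := by
    intro w hw
    have hwU : (w.re, w.im) ∈ U := by
      show ((w.re + p₀ : ℝ) : ℍ[ℝ]) + w.im • I ∈ Metric.ball (p₀ : ℍ[ℝ]) R
      rw [hpt w, Metric.mem_ball, dist_eq_norm, add_sub_cancel_left, norm_emb]
      simpa [dist_eq_norm] using hw
    have hFD := hasFDerivAt_of_partials hUopen hpx hpy hcx hwU
    have hEq : HasFDerivAt G
        (((ContinuousLinearMap.fst ℝ ℝ ℝ).smulRight (Hx (w.re, w.im)) +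
          (ContinuousLinearMap.snd ℝ ℝ ℝ).smulRight (Hy (w.re, w.im))).comp
          (Complex.equivRealProdCLM : ℂ →L[ℝ] ℝ × ℝ)) w := by
      have hcomp := hFD.comp w Complex.equivRealProdCLM.hasFDerivAt
      refine hcomp.congr_of_eventuallyEq (Filter.Eventually.of_forall fun z => ?_)
      show G z = H (z.re, z.im)
      exact (hGH z).symm
    -- Cauchy-Riemann gives complex linearity
    have h5' := h5 (w.re + p₀) w.im hwU
    have hfyfx : I * fx (w.re + p₀) w.im = fy (w.re + p₀) w.im := by
      have hmul : I * fx (w.re + p₀) w.im + I * (I * fy (w.re + p₀) w.im) = 0 := by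
        rw [← mul_add, h5', mul_zero]
      rw [← mul_assoc, hI2, neg_one_mul] at hmul
      exact add_neg_eq_zero.mp hmul
    have hyx : Hy (w.re, w.im) = Complex.I • Hx (w.re, w.im) := by
      apply Hsl.toH_injective
      rw [Hsl.smul_def, emb_I_eq hI2]
      simp only [hHx, hHy, Hsl.toH_ofH]
      exact hfyfx.symm
    refine (hasFDerivAt_of_restrictScalars ℝ
      (f' := ContinuousLinearMap.smulRight (1 : ℂ →L[ℂ] ℂ) (Hx (w.re, w.im)))
      hEq ?_).differentiableAt.differentiableWithinAt
    apply ContinuousLinearMap.ext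
    intro c
    show c • Hx (w.re, w.im) = c.re • Hx (w.re, w.im) + c.im • Hy (w.re, w.im)
    rw [hyx, Hsl.real_smul_eq_complex, Hsl.real_smul_eq_complex, ← mul_smul, ← add_smul]
    congr 1
    exact (Complex.re_add_im c).symm
  -- power series expansion
  have key : ∀ r : ℝ, 0 < r → r < R →
      HasFPowerSeriesOnBall G (cauchyPowerSeries G 0 r.toNNReal) 0 (r.toNNReal : ℝ≥0∞) := by
    intro r hr0 hrR
    apply DifferentiableOn.hasFPowerSeriesOnBall
    · apply hdiff.mono
      intro z hz
      rw [Metric.mem_closedBall, Real.coe_toNNReal _ hr0.le] at hz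
      rw [Metric.mem_ball]
      linarith
    · exact Real.toNNReal_pos.mpr hr0
  refine ⟨fun n => Hsl.toH ((cauchyPowerSeries G 0 (R/2).toNNReal).coeff n), fun w hw => ?_⟩
  set r : ℝ := (‖w‖ + R) / 2 with hr
  have hr0 : 0 < r := by have := norm_nonneg w; simp only [hr]; linarith
  have hwr : ‖w‖ < r := by simp only [hr]; linarith
  have hrR : r < R := by simp only [hr]; linarith
  have h₁ := key r hr0 hrR
  have h₂ := key (R/2) (by linarith) (by linarith)
  have heq := h₁.hasFPowerSeriesAt.eq_formalMultilinearSeries h₂.hasFPowerSeriesAt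
  have hmem : w ∈ Metric.eball (0 : ℂ) (r.toNNReal : ℝ≥0∞) := by
    rw [Metric.mem_eball, edist_zero_right, enorm_eq_nnnorm]
    rw [show ((‖w‖₊ : ℝ≥0) : ℝ≥0∞) < (r.toNNReal : ℝ≥0∞) ↔ (‖w‖₊ : ℝ≥0) < r.toNNReal from
      ENNReal.coe_lt_coe]
    rw [← NNReal.coe_lt_coe, coe_nnnorm, Real.coe_toNNReal _ hr0.le]
    exact hwr
  have hsum := h₁.hasSum hmem
  rw [heq, zero_add] at hsum
  rw [Hsl.hasSum_iff] at hsum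
  have hfn : (fun n => Hsl.toH ((cauchyPowerSeries G 0 (R/2).toNNReal) n fun _ => w)) =
      fun n => (emb I w) ^ n * Hsl.toH ((cauchyPowerSeries G 0 (R/2).toNNReal).coeff n) := by
    funext n
    rw [FormalMultilinearSeries.apply_eq_pow_smul_coeff, Hsl.pow_smul_toH]
  rw [hfn] at hsum
  exact hsum

/-! ### the main theorem -/

lemma qIu_mem_SpH : qIu ∈ SpH := ⟨rfl, norm_of_sq qIu_mul_self⟩

theorem slice_regular_iff_power_series'
    (p₀ : ℝ) (R : ℝ) (hR : 0 < R) (f : ℍ[ℝ] → ℍ[ℝ]) :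
    SliceRegularOn f (Metric.ball (p₀ : ℍ[ℝ]) R) ↔
      ∃ a : ℕ → ℍ[ℝ], ∀ q ∈ Metric.ball (p₀ : ℍ[ℝ]) R,
        HasSum (fun n : ℕ => (q - (p₀ : ℍ[ℝ])) ^ n * a n) (f q) := by
  constructor
  · intro hreg
    obtain ⟨a, ha⟩ := exists_coeff_of_sliceHolo hR qIu_mul_self (hreg qIu qIu_mem_SpH)
    -- the real-axis sums determined by `a`
    have hreal : ∀ {I : ℍ[ℝ]} {c : ℕ → ℍ[ℝ]},
        (∀ w : ℂ, ‖w‖ < R → HasSum (fun n : ℕ => (emb I w) ^ n * c n) (f ((p₀ : ℍ[ℝ]) + emb I w)))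
        → ∀ t : ℝ, |t| < R → HasSum (fun n => t ^ n • c n) (f ((p₀ : ℍ[ℝ]) + (t : ℍ[ℝ]))) := by
      intro I c hc t ht
      have h := hc (t : ℂ) (by rwa [Complex.norm_real, Real.norm_eq_abs])
      rw [emb_ofReal] at h
      refine h.congr_fun fun n => ?_
      rw [← Quaternion.coe_mul_eq_smul]
      norm_cast
    refine ⟨a, fun q hq => ?_⟩
    -- choose a slice through q
    by_cases him : q.im = 0
    · -- q is real
      have hq_eq : q = ((q.re : ℝ) : ℍ[ℝ]) := by
        conv_lhs => rw [← Quaternion.re_add_im q]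
        rw [him, add_zero]
      have hqre : |q.re - p₀| < R := by
        rw [Metric.mem_ball, dist_eq_norm, hq_eq] at hq
        rw [← Real.norm_eq_abs]
        calc ‖q.re - p₀‖ = ‖((q.re - p₀ : ℝ) : ℍ[ℝ])‖ := (Quaternion.norm_coe _).symm
        _ < R := by rwa [Quaternion.coe_sub]
      have := hreal ha (q.re - p₀) hqre
      have hcoe : (p₀ : ℍ[ℝ]) + ((q.re - p₀ : ℝ) : ℍ[ℝ]) = ((q.re : ℝ) : ℍ[ℝ]) := by
        push_cast
        abel
      rw [hcoe] at this
      rw [hq_eq]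
      refine this.congr_fun fun n => ?_
      rw [← Quaternion.coe_mul_eq_smul]
      push_cast
      ring_nf
    · -- q is not real
      set I : ℍ[ℝ] := ‖q.im‖⁻¹ • q.im with hI
      have himnorm : ‖q.im‖ ≠ 0 := norm_ne_zero_iff.mpr him
      have hIre : I.re = 0 := by simp [hI, Quaternion.re_im]
      have hInorm : ‖I‖ = 1 := by
        rw [hI, norm_smul, Real.norm_eq_abs, abs_of_nonneg (inv_nonneg.mpr (norm_nonneg _)),
          inv_mul_cancel₀ himnorm]
      have hI2 : I * I = -1 := mul_self_of_mem' hIre hInorm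
      have hq_eq : ((q.re : ℝ) : ℍ[ℝ]) + ‖q.im‖ • I = q := by
        rw [hI, smul_smul, mul_inv_cancel₀ himnorm, one_smul, Quaternion.re_add_im]
      obtain ⟨c, hc⟩ := exists_coeff_of_sliceHolo hR hI2 (hreg I ⟨hIre, hInorm⟩)
      have hca : c = a :=
        coeff_unique hR (g := fun t : ℝ => f ((p₀ : ℍ[ℝ]) + (t : ℍ[ℝ]))) (hreal hc) (hreal ha)
      set w : ℂ := Wc p₀ q.re ‖q.im‖ with hw
      have hpoint : (p₀ : ℍ[ℝ]) + emb I w = q := by rw [hw, emb_Wc hI2, hq_eq]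
      have hwnorm : ‖w‖ < R := by
        rw [hw, norm_Wc hI2, hq_eq]
        rwa [Metric.mem_ball, dist_eq_norm] at hq
      have := hc w hwnorm
      rw [hpoint, hca] at this
      have hemb : emb I w = q - (p₀ : ℍ[ℝ]) := by
        rw [← hpoint]; abel
      rwa [hemb] at this
  · intro ⟨a, ha⟩
    intro I hI
    exact sliceHolo_of_hasSum hR ha (mul_self_of_mem' hI.1 hI.2)

/-- A function on a ball centered at a real point is slice regular if and only if it has a
power series expansion there. -/
theorem slice_regular_iff_power_series
    (p₀ : ℝ) (R : ℝ) (hR : 0 < R) (f : ℍ[ℝ] → ℍ[ℝ]) :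
    SliceRegularOn f (Metric.ball (p₀ : ℍ[ℝ]) R) ↔
      ∃ a : ℕ → ℍ[ℝ], ∀ q ∈ Metric.ball (p₀ : ℍ[ℝ]) R,
        HasSum (fun n : ℕ => (q - (p₀ : ℍ[ℝ])) ^ n * a n) (f q) :=
  slice_regular_iff_power_series' p₀ R hR f
end
end

section
/- Let Ω ⊆ ℍ be an axially symmetric s-domain and let f : Ω → ℍ be slice regular. Suppose there exists J ∈ 𝕊 such that f(Ω ∩ L_J) ⊆ L_J. If there exist x₀, y₀ ∈ ℝ and I ∈ 𝕊 with I ∉ L_J such that f(x₀+y₀I) = 0, then f(x₀+y₀L) = 0 for every L ∈ 𝕊. -/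
open Quaternion

noncomputable section

namespace ZS

-- placeholders for already-proven helpers
lemma re_mul_comm (a b : ℍ[ℝ]) : (a*b).re = (b*a).re := by
  simp [Quaternion.re_mul]; ring
lemma star_eq_neg' {L : ℍ[ℝ]} (h0 : L.re = 0) : star L = -L := by ext <;> simp [h0]
lemma sq_eq_neg_one {L : ℍ[ℝ]} (hL : L.re = 0 ∧ ‖L‖ = 1) : L * L = -1 := by
  have h2 : normSq L = 1 := by rw [normSq_eq_norm_mul_self, hL.2]; ring
  have hs : star L = -L := star_eq_neg' hL.1
  have := Quaternion.self_mul_star L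
  rw [hs, mul_neg, neg_eq_iff_eq_neg] at this
  rw [this, h2]; norm_num
def ipl (a : ℍ[ℝ]) : ℍ[ℝ] →L[ℝ] ℝ :=
  LinearMap.toContinuousLinearMap
  { toFun := fun v => (a * star v).re
    map_add' := by intro v w; simp [star_add, mul_add]
    map_smul' := by intro r v; simp [Quaternion.re_mul, smul_mul_assoc, mul_smul_comm] }
lemma ipl_apply (a v : ℍ[ℝ]) : ipl a v = (a * star v).re := rfl
lemma ipl_mul_left {L : ℍ[ℝ]} (h0 : L.re = 0) (a v : ℍ[ℝ]) :
    ipl a (L * v) = - ipl (L * a) v := by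
  rw [ipl_apply, ipl_apply, StarMul.star_mul, star_eq_neg' h0]
  calc (a * (star v * -L)).re = -((a * star v) * L).re := by simp [mul_neg, mul_assoc]
    _ = -((L * (a * star v)).re) := by rw [re_mul_comm]
    _ = -((L * a * star v).re) := by rw [mul_assoc]
lemma ipl_mul_both {L : ℍ[ℝ]} (hL : L.re = 0 ∧ ‖L‖ = 1) (a v : ℍ[ℝ]) :
    ipl (L * a) (L * v) = ipl a v := by
  rw [ipl_mul_left hL.1, ← mul_assoc, sq_eq_neg_one hL]
  simp [ipl_apply]
lemma ipl_one (v : ℍ[ℝ]) : ipl 1 v = v.re := by simp [ipl_apply]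
def qi : ℍ[ℝ] := ⟨0,1,0,0⟩
def qj : ℍ[ℝ] := ⟨0,0,1,0⟩
def qk : ℍ[ℝ] := ⟨0,0,0,1⟩
lemma ipl_qi (v : ℍ[ℝ]) : ipl qi v = v.imI := by rw [ipl_apply, Quaternion.re_mul]; simp [qi]
lemma ipl_qj (v : ℍ[ℝ]) : ipl qj v = v.imJ := by rw [ipl_apply, Quaternion.re_mul]; simp [qj]
lemma ipl_qk (v : ℍ[ℝ]) : ipl qk v = v.imK := by rw [ipl_apply, Quaternion.re_mul]; simp [qk]
def lam (L a : ℍ[ℝ]) : ℍ[ℝ] →L[ℝ] ℂ :=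
  Complex.ofRealCLM.comp (ipl a) + (ipl (L * a)).smulRight Complex.I
lemma lam_re (L a v : ℍ[ℝ]) : (lam L a v).re = ipl a v := by simp [lam, Complex.real_smul]
lemma lam_im (L a v : ℍ[ℝ]) : (lam L a v).im = ipl (L * a) v := by simp [lam, Complex.real_smul]
lemma lam_mul_L {L : ℍ[ℝ]} (hL : L.re = 0 ∧ ‖L‖ = 1) (a v : ℍ[ℝ]) :
    lam L a (L * v) = Complex.I * lam L a v := by
  apply Complex.ext
  · rw [lam_re, ipl_mul_left hL.1]; simp [Complex.mul_re, lam_im]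
  · rw [lam_im, ipl_mul_both hL]; simp [Complex.mul_im, lam_re]

lemma cr_differentiableOn {U : Set ℂ} (hU : IsOpen U) {ψ ψx ψy : ℂ → ℂ}
    (hx : ∀ z ∈ U, HasDerivAt (fun t : ℝ => ψ ((t : ℂ) + (z.im : ℂ) * Complex.I)) (ψx z) z.re)
    (hy : ∀ z ∈ U, HasDerivAt (fun t : ℝ => ψ ((z.re : ℂ) + (t : ℂ) * Complex.I)) (ψy z) z.im)
    (hcx : ContinuousOn ψx U) (hcy : ContinuousOn ψy U)
    (hcr : ∀ z ∈ U, ψy z = Complex.I * ψx z) :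
    DifferentiableOn ℂ ψ U := by
  intro z₀ hz₀
  suffices h : DifferentiableAt ℂ ψ z₀ from h.differentiableWithinAt
  refine HasFDerivAt.differentiableAt (f' := (1 : ℂ →L[ℂ] ℂ).smulRight (ψx z₀)) ?_
  rw [hasFDerivAt_iff_isLittleO_nhds_zero, Asymptotics.isLittleO_iff]
  intro c hc
  have hc2 : (0:ℝ) < c/2 := by linarith
  have hcxa : ContinuousAt ψx z₀ := hcx.continuousAt (hU.mem_nhds hz₀)
  have hcya : ContinuousAt ψy z₀ := hcy.continuousAt (hU.mem_nhds hz₀)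
  obtain ⟨δ₁, hδ₁pos, hδ₁⟩ := Metric.continuousAt_iff.1 hcxa (c/2) hc2
  obtain ⟨δ₂, hδ₂pos, hδ₂⟩ := Metric.continuousAt_iff.1 hcya (c/2) hc2
  obtain ⟨δ₃, hδ₃pos, hδ₃⟩ := Metric.isOpen_iff.1 hU z₀ hz₀
  set δ := min δ₁ (min δ₂ δ₃) with hδdef
  have hδpos : 0 < δ := lt_min hδ₁pos (lt_min hδ₂pos hδ₃pos)
  have hball : ∀ w : ℂ, dist w z₀ < δ → w ∈ U ∧ ‖ψx w - ψx z₀‖ ≤ c/2 ∧ ‖ψy w - ψy z₀‖ ≤ c/2 := by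
    intro w hw
    refine ⟨hδ₃ ?_, ?_, ?_⟩
    · have : dist w z₀ < δ₃ := lt_of_lt_of_le hw (le_trans (min_le_right _ _) (min_le_right _ _))
      simpa [Metric.mem_ball] using this
    · have : dist w z₀ < δ₁ := lt_of_lt_of_le hw (min_le_left _ _)
      simpa [dist_eq_norm] using le_of_lt (hδ₁ this)
    · have : dist w z₀ < δ₂ := lt_of_lt_of_le hw (le_trans (min_le_right _ _) (min_le_left _ _))
      simpa [dist_eq_norm] using le_of_lt (hδ₂ this)
  have hev : ∀ᶠ h : ℂ in nhds 0, ‖h‖ < δ/3 := by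
    filter_upwards [Metric.ball_mem_nhds (0:ℂ) (show (0:ℝ) < δ/3 by linarith)] with h hh
    simpa [Metric.mem_ball] using hh
  filter_upwards [hev] with h hh
  set a := h.re with ha
  set b := h.im with hb
  have hra : |a| ≤ ‖h‖ := Complex.abs_re_le_norm h
  have hrb : |b| ≤ ‖h‖ := Complex.abs_im_le_norm h
  set x₁ := z₀.re + a with hx₁
  -- horizontal estimate
  have claim1 : ‖ψ ((x₁:ℂ) + (z₀.im:ℂ)*Complex.I) - ψ z₀ - a • ψx z₀‖ ≤ (c/2) * |a| := by
    set g : ℝ → ℂ := fun t => ψ ((t:ℂ) + (z₀.im:ℂ)*Complex.I) - t • ψx z₀ with hg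
    have hmemw : ∀ t ∈ Set.uIcc z₀.re x₁, dist ((t:ℂ) + (z₀.im:ℂ)*Complex.I) z₀ < δ := by
      intro t ht
      have h1 : |t - z₀.re| ≤ |x₁ - z₀.re| := Set.abs_sub_left_of_mem_uIcc ht
      have h2 : |x₁ - z₀.re| = |a| := by rw [hx₁]; ring_nf
      have h3 : ((t:ℂ) + (z₀.im:ℂ)*Complex.I) - z₀ = ((t - z₀.re : ℝ) : ℂ) := by
        apply Complex.ext <;> simp
      rw [dist_eq_norm, h3]
      calc ‖((t - z₀.re : ℝ) : ℂ)‖ = |t - z₀.re| := by rw [Complex.norm_real, Real.norm_eq_abs]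
        _ ≤ |a| := by rw [← h2]; exact h1
        _ ≤ ‖h‖ := hra
        _ < δ := by linarith
    have hder : ∀ t ∈ Set.uIcc z₀.re x₁,
        HasDerivWithinAt g (ψx ((t:ℂ) + (z₀.im:ℂ)*Complex.I) - ψx z₀) (Set.uIcc z₀.re x₁) t := by
      intro t ht
      set w : ℂ := (t:ℂ) + (z₀.im:ℂ)*Complex.I with hw
      have hwU : w ∈ U := (hball w (hmemw t ht)).1
      have hd1 := hx w hwU
      have hwre : w.re = t := by simp [hw]
      have hwim : w.im = z₀.im := by simp [hw]
      rw [hwre, hwim] at hd1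
      have hd2 : HasDerivAt (fun t : ℝ => t • ψx z₀) ((1:ℝ) • ψx z₀) t :=
        (hasDerivAt_id t).smul_const (ψx z₀)
      have := (hd1.sub hd2).hasDerivWithinAt (s := Set.uIcc z₀.re x₁)
      rw [one_smul] at this; exact this
    have hbound : ∀ t ∈ Set.uIcc z₀.re x₁,
        ‖ψx ((t:ℂ) + (z₀.im:ℂ)*Complex.I) - ψx z₀‖ ≤ c/2 := fun t ht =>
      (hball _ (hmemw t ht)).2.1
    have key := Convex.norm_image_sub_le_of_norm_hasDerivWithin_le hder hbound (convex_uIcc _ _)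
      Set.left_mem_uIcc Set.right_mem_uIcc
    have hend : g x₁ - g z₀.re = ψ ((x₁:ℂ) + (z₀.im:ℂ)*Complex.I) - ψ z₀ - a • ψx z₀ := by
      rw [hg]
      simp only []
      rw [Complex.re_add_im z₀, hx₁, add_smul]
      abel
    rw [hend] at key
    calc ‖ψ ((x₁:ℂ) + (z₀.im:ℂ)*Complex.I) - ψ z₀ - a • ψx z₀‖ ≤ (c/2) * ‖x₁ - z₀.re‖ := key
      _ = (c/2) * |a| := by rw [Real.norm_eq_abs]; congr 1; rw [hx₁]; ring_nf
  -- vertical estimate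
  have claim2 : ‖ψ ((x₁:ℂ) + ((z₀.im + b :ℝ):ℂ)*Complex.I)
      - ψ ((x₁:ℂ) + (z₀.im:ℂ)*Complex.I) - b • ψy z₀‖ ≤ (c/2) * |b| := by
    set g : ℝ → ℂ := fun t => ψ ((x₁:ℂ) + (t:ℂ)*Complex.I) - t • ψy z₀ with hg
    have hmemw : ∀ t ∈ Set.uIcc z₀.im (z₀.im + b), dist ((x₁:ℂ) + (t:ℂ)*Complex.I) z₀ < δ := by
      intro t ht
      have h1 : |t - z₀.im| ≤ |(z₀.im + b) - z₀.im| := Set.abs_sub_left_of_mem_uIcc ht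
      have h2 : |(z₀.im + b) - z₀.im| = |b| := by ring_nf
      have h3 : ((x₁:ℂ) + (t:ℂ)*Complex.I) - z₀ = ((a:ℝ):ℂ) + ((t - z₀.im:ℝ):ℂ)*Complex.I := by
        rw [hx₁]; apply Complex.ext <;> simp <;> ring
      rw [dist_eq_norm, h3]
      calc ‖((a:ℝ):ℂ) + ((t - z₀.im:ℝ):ℂ)*Complex.I‖
          ≤ ‖((a:ℝ):ℂ)‖ + ‖((t - z₀.im:ℝ):ℂ)*Complex.I‖ := norm_add_le _ _
        _ = |a| + |t - z₀.im| := by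
              rw [norm_mul, Complex.norm_I, mul_one, Complex.norm_real, Complex.norm_real,
                Real.norm_eq_abs, Real.norm_eq_abs]
        _ ≤ ‖h‖ + |b| := by rw [h2] at h1; exact add_le_add hra h1
        _ ≤ ‖h‖ + ‖h‖ := by linarith
        _ < δ := by linarith
    have hder : ∀ t ∈ Set.uIcc z₀.im (z₀.im + b),
        HasDerivWithinAt g (ψy ((x₁:ℂ) + (t:ℂ)*Complex.I) - ψy z₀)
          (Set.uIcc z₀.im (z₀.im + b)) t := by
      intro t ht
      set w : ℂ := (x₁:ℂ) + (t:ℂ)*Complex.I with hw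
      have hwU : w ∈ U := (hball w (hmemw t ht)).1
      have hd1 := hy w hwU
      have hwre : w.re = x₁ := by simp [hw]
      have hwim : w.im = t := by simp [hw]
      rw [hwre, hwim] at hd1
      have hd2 : HasDerivAt (fun t : ℝ => t • ψy z₀) ((1:ℝ) • ψy z₀) t :=
        (hasDerivAt_id t).smul_const (ψy z₀)
      have := (hd1.sub hd2).hasDerivWithinAt (s := Set.uIcc z₀.im (z₀.im + b))
      rw [one_smul] at this; exact this
    have hbound : ∀ t ∈ Set.uIcc z₀.im (z₀.im + b),
        ‖ψy ((x₁:ℂ) + (t:ℂ)*Complex.I) - ψy z₀‖ ≤ c/2 := fun t ht =>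
      (hball _ (hmemw t ht)).2.2
    have key := Convex.norm_image_sub_le_of_norm_hasDerivWithin_le hder hbound (convex_uIcc _ _)
      Set.left_mem_uIcc Set.right_mem_uIcc
    have hend : g (z₀.im + b) - g z₀.im = ψ ((x₁:ℂ) + ((z₀.im + b :ℝ):ℂ)*Complex.I)
        - ψ ((x₁:ℂ) + (z₀.im:ℂ)*Complex.I) - b • ψy z₀ := by
      rw [hg]
      simp only []
      rw [add_smul]
      abel
    rw [hend] at key
    calc ‖ψ ((x₁:ℂ) + ((z₀.im + b :ℝ):ℂ)*Complex.I)
        - ψ ((x₁:ℂ) + (z₀.im:ℂ)*Complex.I) - b • ψy z₀‖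
        ≤ (c/2) * ‖(z₀.im + b) - z₀.im‖ := key
      _ = (c/2) * |b| := by rw [Real.norm_eq_abs]; congr 1; ring_nf
  -- combine
  have hzh : z₀ + h = (x₁:ℂ) + ((z₀.im + b :ℝ):ℂ)*Complex.I := by
    rw [hx₁]; apply Complex.ext <;> simp [ha, hb]
  have hsmul : a • ψx z₀ + b • ψy z₀ = ((1 : ℂ →L[ℂ] ℂ).smulRight (ψx z₀)) h := by
    rw [hcr z₀ hz₀, ContinuousLinearMap.smulRight_apply, ContinuousLinearMap.one_apply]
    rw [Complex.real_smul, Complex.real_smul]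
    calc (a:ℂ) * ψx z₀ + (b:ℂ) * (Complex.I * ψx z₀) = ((a:ℂ) + (b:ℂ)*Complex.I) * ψx z₀ := by ring
      _ = h * ψx z₀ := by rw [ha, hb, Complex.re_add_im]
      _ = h • ψx z₀ := rfl
  have hsplit : ψ (z₀ + h) - ψ z₀ - ((1 : ℂ →L[ℂ] ℂ).smulRight (ψx z₀)) h
      = (ψ ((x₁:ℂ) + ((z₀.im + b :ℝ):ℂ)*Complex.I) - ψ ((x₁:ℂ) + (z₀.im:ℂ)*Complex.I)
          - b • ψy z₀)
        + (ψ ((x₁:ℂ) + (z₀.im:ℂ)*Complex.I) - ψ z₀ - a • ψx z₀) := by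
    rw [hzh, ← hsmul]
    abel
  rw [hsplit]
  calc ‖_ + _‖ ≤ (c/2) * |b| + (c/2) * |a| := norm_add_le_of_le claim2 claim1
    _ ≤ (c/2) * ‖h‖ + (c/2) * ‖h‖ := by
        have := mul_le_mul_of_nonneg_left hrb (le_of_lt hc2)
        have := mul_le_mul_of_nonneg_left hra (le_of_lt hc2)
        linarith
    _ = c * ‖h‖ := by ring

lemma spH_coords {J : ℍ[ℝ]} (hJ : J ∈ SpH) :
    J.re = 0 ∧ J.imI^2 + J.imJ^2 + J.imK^2 = 1 := by
  obtain ⟨h0, h1⟩ := hJ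
  refine ⟨h0, ?_⟩
  have h2 : normSq J = 1 := by rw [normSq_eq_norm_mul_self, h1]; ring
  rw [normSq_def'] at h2
  rw [h0] at h2
  linarith [h2]
lemma slice_eq_zero {J : ℍ[ℝ]} (hJ : J ∈ SpH) {x y : ℝ} (h : (x : ℍ[ℝ]) + y • J = 0) :
    x = 0 ∧ y = 0 := by
  obtain ⟨hJ0, hn⟩ := spH_coords hJ
  have hre := congrArg QuaternionAlgebra.re h
  have h1 := congrArg QuaternionAlgebra.imI h
  have h2 := congrArg QuaternionAlgebra.imJ h
  have h3 := congrArg QuaternionAlgebra.imK h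
  simp [hJ0] at hre h1 h2 h3
  refine ⟨hre, ?_⟩
  rcases h1 with h1 | h1
  · exact h1
  rcases h2 with h2 | h2
  · exact h2
  rcases h3 with h3 | h3
  · exact h3
  exfalso; rw [h1, h2, h3] at hn; norm_num at hn

-- the embedding of ℂ onto the slice L_J
def emb (J : ℍ[ℝ]) : ℂ →ₗ[ℝ] ℍ[ℝ] where
  toFun := fun z => ((z.re : ℍ[ℝ]) + z.im • J)
  map_add' := by
    intro z w
    simp only [Complex.add_re, Complex.add_im, Quaternion.coe_add, add_smul]
    abel
  map_smul' := by
    intro r z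
    simp only [Complex.real_smul, Complex.mul_re, Complex.mul_im, Complex.ofReal_re,
      Complex.ofReal_im, RingHom.id_apply]
    rw [smul_add, smul_smul]
    norm_num
    rw [Quaternion.coe_mul_eq_smul]

lemma emb_cont (J : ℍ[ℝ]) : Continuous fun z : ℂ => ((z.re : ℍ[ℝ]) + z.im • J) := by
  have h1 : Continuous fun r : ℝ => (r : ℍ[ℝ]) := by
    have : (fun r : ℝ => (r : ℍ[ℝ])) = fun r => r • (1 : ℍ[ℝ]) := by
      funext r
      rw [show (1 : ℍ[ℝ]) = ((1:ℝ) : ℍ[ℝ]) from rfl, Quaternion.smul_coe, mul_one]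
    rw [this]
    exact continuous_id.smul continuous_const
  exact (h1.comp Complex.continuous_re).add (Complex.continuous_im.smul continuous_const)

lemma emb_inj {J : ℍ[ℝ]} (hJ : J ∈ SpH) : LinearMap.ker (emb J) = ⊥ := by
  rw [LinearMap.ker_eq_bot']
  intro z hz
  have h := slice_eq_zero hJ (hz : ((z.re : ℍ[ℝ]) + z.im • J) = 0)
  exact Complex.ext h.1 h.2

lemma emb_range {J : ℍ[ℝ]} : Set.range (fun z : ℂ => ((z.re : ℍ[ℝ]) + z.im • J)) = sliceL J := by
  ext q
  constructor
  · rintro ⟨z, rfl⟩; exact ⟨z.re, z.im, rfl⟩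
  · rintro ⟨x, y, rfl⟩; exact ⟨⟨x, y⟩, rfl⟩

end ZS

namespace ZS

lemma slice_mul {J : ℍ[ℝ]} (hJ : J ∈ SpH) (x y u v : ℝ) :
    ((x : ℍ[ℝ]) + y • J) * ((u : ℍ[ℝ]) + v • J)
      = ((x*u - y*v : ℝ) : ℍ[ℝ]) + (x*v + y*u) • J := by
  obtain ⟨hJ0, hn⟩ := spH_coords hJ
  ext <;> simp [Quaternion.re_mul, Quaternion.imI_mul, Quaternion.imJ_mul, Quaternion.imK_mul,
    hJ0] <;> ring_nf <;> linear_combination (- y * v) * hn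

lemma slice_inv {J : ℍ[ℝ]} (hJ : J ∈ SpH) (x y : ℝ) :
    ((x : ℍ[ℝ]) + y • J)⁻¹ ∈ sliceL J := by
  by_cases h : (x : ℍ[ℝ]) + y • J = 0
  · rw [h, inv_zero]; exact ⟨0, 0, by simp⟩
  · have hxy : x^2 + y^2 ≠ 0 := by
      intro hc
      have hx : x = 0 := by nlinarith [sq_nonneg x, sq_nonneg y]
      have hy : y = 0 := by nlinarith [sq_nonneg x, sq_nonneg y]
      exact h (by rw [hx, hy]; simp)
    have hmul : ((x : ℍ[ℝ]) + y • J) * (((x^2+y^2)⁻¹ * x : ℝ) + (-((x^2+y^2)⁻¹ * y)) • J) = 1 := by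
      rw [slice_mul hJ]
      have e1 : x * ((x^2+y^2)⁻¹ * x) - y * (-((x^2+y^2)⁻¹ * y)) = 1 := by
        field_simp; ring
      have e2 : x * (-((x^2+y^2)⁻¹ * y)) + y * ((x^2+y^2)⁻¹ * x) = 0 := by ring
      rw [e1, e2]
      simp
    exact ⟨_, _, (inv_eq_of_mul_eq_one_right hmul)⟩

lemma slice_closed_mul {J : ℍ[ℝ]} (hJ : J ∈ SpH) {a b : ℍ[ℝ]}
    (ha : a ∈ sliceL J) (hb : b ∈ sliceL J) : a * b ∈ sliceL J := by
  obtain ⟨x, y, rfl⟩ := ha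
  obtain ⟨u, v, rfl⟩ := hb
  rw [slice_mul hJ]
  exact ⟨_, _, rfl⟩

lemma slice_closed_neg {J : ℍ[ℝ]} {a : ℍ[ℝ]} (ha : a ∈ sliceL J) : -a ∈ sliceL J := by
  obtain ⟨x, y, rfl⟩ := ha
  exact ⟨-x, -y, by push_cast [neg_add]; rw [neg_smul]⟩

lemma slice_closed_inv {J : ℍ[ℝ]} (hJ : J ∈ SpH) {a : ℍ[ℝ]} (ha : a ∈ sliceL J) :
    a⁻¹ ∈ sliceL J := by
  obtain ⟨x, y, rfl⟩ := ha
  exact slice_inv hJ x y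


lemma rep_formula (Ω : Set ℍ[ℝ]) (hΩ : IsSDomain Ω) (hax : AxSymm Ω)
    (f : ℍ[ℝ] → ℍ[ℝ]) (hf : SliceRegularOn f Ω)
    (J : ℍ[ℝ]) (hJ : J ∈ SpH) (L : ℍ[ℝ]) (hL : L ∈ SpH)
    (x y : ℝ) (hxy : (x : ℍ[ℝ]) + y • J ∈ Ω) :
    f ((x : ℍ[ℝ]) + y • L) = (2⁻¹ : ℝ) • ((f ((x:ℍ[ℝ]) + y • J) + f ((x:ℍ[ℝ]) + y • (-J)))
      + (L * J) * (f ((x:ℍ[ℝ]) + y • (-J)) - f ((x:ℍ[ℝ]) + y • J))) := by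
  obtain ⟨hJ0, hJ1⟩ := hJ
  obtain ⟨hL0, hL1⟩ := hL
  have hJS : J ∈ SpH := ⟨hJ0, hJ1⟩
  have hLS : L ∈ SpH := ⟨hL0, hL1⟩
  have hmJ : -J ∈ SpH := ⟨by simp [hJ0], by simp [hJ1]⟩
  have hJJ : J * J = -1 := sq_eq_neg_one ⟨hJ0, hJ1⟩
  have hLL : L * L = -1 := sq_eq_neg_one ⟨hL0, hL1⟩
  obtain ⟨Fx, Fy, hFx, hFy, hFcx, hFcy, hFcr⟩ := hf L hLS
  obtain ⟨Px, Py, hPx, hPy, hPcx, hPcy, hPcr⟩ := hf J hJS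
  obtain ⟨Nx, Ny, hNx, hNy, hNcx, hNcy, hNcr⟩ := hf (-J) hmJ
  set U : Set ℂ := {z : ℂ | ((z.re : ℍ[ℝ]) + z.im • J) ∈ Ω} with hUdef
  have hmem : ∀ K ∈ SpH, ∀ z : ℂ, z ∈ U → ((z.re : ℍ[ℝ]) + z.im • K) ∈ Ω := by
    intro K hK z hz
    exact hax z.re z.im J hJS hz K hK
  have hUopen : IsOpen U := (emb_cont J).isOpen_preimage Ω hΩ.1
  -- preconnectedness of U
  have hUpre : IsPreconnected U := by
    have hce : Topology.IsClosedEmbedding (emb J) :=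
      LinearMap.isClosedEmbedding_of_injective (emb_inj hJS)
    have himage : (fun z : ℂ => ((z.re : ℍ[ℝ]) + z.im • J)) '' U = Ω ∩ sliceL J := by
      rw [show U = (fun z : ℂ => ((z.re : ℍ[ℝ]) + z.im • J)) ⁻¹' Ω from rfl,
        Set.image_preimage_eq_inter_range, emb_range]
    have := hce.isInducing.isPreconnected_image (s := U)
    rw [show ⇑(emb J) = fun z : ℂ => ((z.re : ℍ[ℝ]) + z.im • J) from rfl, himage] at this
    exact this.mp (hΩ.2.2.2 J hJS).isPreconnected
  -- base real point
  obtain ⟨xr, hxr⟩ := hΩ.2.2.1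
  have hxrU : ((xr : ℝ) : ℂ) ∈ U := by
    show (((((xr : ℝ) : ℂ)).re : ℍ[ℝ]) + (((xr : ℝ) : ℂ)).im • J) ∈ Ω
    simpa using hxr
  -- the two functions
  set F : ℂ → ℍ[ℝ] := fun w => f ((w.re : ℍ[ℝ]) + w.im • L) with hFdef
  set G : ℂ → ℍ[ℝ] := fun w => (2⁻¹ : ℝ) •
      ((f ((w.re : ℍ[ℝ]) + w.im • J) + f ((w.re : ℍ[ℝ]) + w.im • (-J)))
        + (L * J) * (f ((w.re : ℍ[ℝ]) + w.im • (-J)) - f ((w.re : ℍ[ℝ]) + w.im • J))) with hGdef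
  set Gx : ℂ → ℍ[ℝ] := fun z => (2⁻¹ : ℝ) • ((Px z.re z.im + Nx z.re z.im)
    + (L * J) * (Nx z.re z.im - Px z.re z.im)) with hGxdef
  set Gy : ℂ → ℍ[ℝ] := fun z => (2⁻¹ : ℝ) • ((Py z.re z.im + Ny z.re z.im)
    + (L * J) * (Ny z.re z.im - Py z.re z.im)) with hGydef
  -- derivatives of F along horizontal and vertical lines
  have hFh : ∀ z ∈ U, HasDerivAt (fun t : ℝ => F ((t:ℂ) + (z.im:ℂ) * Complex.I))
      (Fx z.re z.im) z.re := by
    intro z hz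
    have hb := hFx z.re z.im (hmem L hLS z hz)
    have he : (fun t : ℝ => F ((t:ℂ) + (z.im:ℂ) * Complex.I))
        = fun t : ℝ => f ((t : ℍ[ℝ]) + z.im • L) := by
      funext t; rw [hFdef]; simp
    rw [he]; exact hb
  have hFv : ∀ z ∈ U, HasDerivAt (fun t : ℝ => F ((z.re:ℂ) + (t:ℂ) * Complex.I))
      (Fy z.re z.im) z.im := by
    intro z hz
    have hb := hFy z.re z.im (hmem L hLS z hz)
    have he : (fun t : ℝ => F ((z.re:ℂ) + (t:ℂ) * Complex.I))
        = fun t : ℝ => f ((z.re : ℍ[ℝ]) + t • L) := by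
      funext t; rw [hFdef]; simp
    rw [he]; exact hb
  have hGh : ∀ z ∈ U, HasDerivAt (fun t : ℝ => G ((t:ℂ) + (z.im:ℂ) * Complex.I))
      (Gx z) z.re := by
    intro z hz
    have hp := hPx z.re z.im (hmem J hJS z hz)
    have hn := hNx z.re z.im (hmem (-J) hmJ z hz)
    have hb := HasDerivAt.const_smul (2⁻¹ : ℝ)
      ((hp.add hn).add (HasDerivAt.const_mul (L * J) (hn.sub hp)))
    have he : (fun t : ℝ => G ((t:ℂ) + (z.im:ℂ) * Complex.I))
        = fun t : ℝ => (2⁻¹ : ℝ) • ((f ((t : ℍ[ℝ]) + z.im • J) + f ((t : ℍ[ℝ]) + z.im • (-J)))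
          + (L * J) * (f ((t : ℍ[ℝ]) + z.im • (-J)) - f ((t : ℍ[ℝ]) + z.im • J))) := by
      funext t; rw [hGdef]; simp
    rw [he, hGxdef]; exact hb
  have hGv : ∀ z ∈ U, HasDerivAt (fun t : ℝ => G ((z.re:ℂ) + (t:ℂ) * Complex.I))
      (Gy z) z.im := by
    intro z hz
    have hp := hPy z.re z.im (hmem J hJS z hz)
    have hn := hNy z.re z.im (hmem (-J) hmJ z hz)
    have hb := HasDerivAt.const_smul (2⁻¹ : ℝ)
      ((hp.add hn).add (HasDerivAt.const_mul (L * J) (hn.sub hp)))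
    have he : (fun t : ℝ => G ((z.re:ℂ) + (t:ℂ) * Complex.I))
        = fun t : ℝ => (2⁻¹ : ℝ) • ((f ((z.re : ℍ[ℝ]) + t • J) + f ((z.re : ℍ[ℝ]) + t • (-J)))
          + (L * J) * (f ((z.re : ℍ[ℝ]) + t • (-J)) - f ((z.re : ℍ[ℝ]) + t • J))) := by
      funext t; rw [hGdef]; simp
    rw [he, hGydef]; exact hb
  -- Cauchy-Riemann relations in the form fy = L * fx
  have hFyx : ∀ z ∈ U, Fy z.re z.im = L * Fx z.re z.im := by
    intro z hz
    have h := hFcr z.re z.im (hmem L hLS z hz)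
    have h2 : L * Fx z.re z.im + L * (L * Fy z.re z.im) = 0 := by
      rw [← mul_add, h, mul_zero]
    rw [← mul_assoc, hLL, neg_one_mul] at h2
    exact (add_neg_eq_zero.mp h2).symm
  have hGyx : ∀ z ∈ U, Gy z = L * Gx z := by
    intro z hz
    set p := Py z.re z.im with hp
    set n := Ny z.re z.im with hn
    have hPxy : Px z.re z.im = -(J * p) := by
      have h := hPcr z.re z.im (hmem J hJS z hz)
      exact eq_neg_of_add_eq_zero_left h
    have hNxy : Nx z.re z.im = J * n := by
      have h := hNcr z.re z.im (hmem (-J) hmJ z hz)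
      rw [neg_mul] at h
      exact add_neg_eq_zero.mp h
    rw [hGydef, hGxdef]
    simp only []
    rw [hPxy, hNxy, mul_smul_comm]
    congr 1
    have hJmul : ∀ w : ℍ[ℝ], J*(J*w) = -w := by
      intro w
      rw [← mul_assoc, hJJ, neg_one_mul]
    have hLmul : ∀ w : ℍ[ℝ], L*(L*w) = -w := by
      intro w
      rw [← mul_assoc, hLL, neg_one_mul]
    simp only [sub_neg_eq_add, mul_add, mul_sub, mul_neg, mul_assoc, hJmul, hLmul, neg_neg]
    abel
  -- continuity of partials on U
  have hmapsJ : Set.MapsTo (fun z : ℂ => (z.re, z.im)) U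
      {p : ℝ × ℝ | (p.1 : ℍ[ℝ]) + p.2 • J ∈ Ω} := fun z hz => hmem J hJS z hz
  have hmapsL : Set.MapsTo (fun z : ℂ => (z.re, z.im)) U
      {p : ℝ × ℝ | (p.1 : ℍ[ℝ]) + p.2 • L ∈ Ω} := fun z hz => hmem L hLS z hz
  have hmapsN : Set.MapsTo (fun z : ℂ => (z.re, z.im)) U
      {p : ℝ × ℝ | (p.1 : ℍ[ℝ]) + p.2 • (-J) ∈ Ω} := fun z hz => hmem (-J) hmJ z hz
  have hzc : Continuous fun z : ℂ => (z.re, z.im) :=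
    Complex.continuous_re.prodMk Complex.continuous_im
  have hFcx' : ContinuousOn (fun z : ℂ => Fx z.re z.im) U :=
    hFcx.comp hzc.continuousOn hmapsL
  have hFcy' : ContinuousOn (fun z : ℂ => Fy z.re z.im) U :=
    hFcy.comp hzc.continuousOn hmapsL
  have hPcx' : ContinuousOn (fun z : ℂ => Px z.re z.im) U :=
    hPcx.comp hzc.continuousOn hmapsJ
  have hPcy' : ContinuousOn (fun z : ℂ => Py z.re z.im) U :=
    hPcy.comp hzc.continuousOn hmapsJ
  have hNcx' : ContinuousOn (fun z : ℂ => Nx z.re z.im) U :=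
    hNcx.comp hzc.continuousOn hmapsN
  have hNcy' : ContinuousOn (fun z : ℂ => Ny z.re z.im) U :=
    hNcy.comp hzc.continuousOn hmapsN
  have hGcx : ContinuousOn Gx U := by
    rw [hGxdef]
    exact (((hPcx'.add hNcx').add ((continuousOn_const : ContinuousOn (fun _ : ℂ => L * J) U).mul (hNcx'.sub hPcx'))).const_smul (2⁻¹ : ℝ))
  have hGcy : ContinuousOn Gy U := by
    rw [hGydef]
    exact (((hPcy'.add hNcy').add ((continuousOn_const : ContinuousOn (fun _ : ℂ => L * J) U).mul (hNcy'.sub hPcy'))).const_smul (2⁻¹ : ℝ))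
  -- equality at real points
  have hreal : ∀ t : ℝ, F ((t : ℝ) : ℂ) = G ((t : ℝ) : ℂ) := by
    intro t
    rw [hFdef, hGdef]
    simp only [Complex.ofReal_re, Complex.ofReal_im, zero_smul, add_zero]
    rw [sub_self, mul_zero, add_zero, ← two_smul ℝ (f ((t:ℝ):ℍ[ℝ])), smul_smul]
    norm_num
  -- frequently equal near the real base point
  have hfreq : ∃ᶠ w in nhdsWithin ((xr : ℝ) : ℂ) {((xr : ℝ) : ℂ)}ᶜ, F w = G w := by
    have hten : Filter.Tendsto (fun n : ℕ => ((xr + 1/(n+1) : ℝ) : ℂ)) Filter.atTop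
        (nhdsWithin ((xr : ℝ) : ℂ) {((xr : ℝ) : ℂ)}ᶜ) := by
      apply tendsto_nhdsWithin_of_tendsto_nhds_of_eventually_within
      · have h1 : Filter.Tendsto (fun n : ℕ => xr + 1/(n+1 : ℝ)) Filter.atTop (nhds xr) := by
          have : Filter.Tendsto (fun n : ℕ => 1 / ((n : ℝ) + 1)) Filter.atTop (nhds 0) :=
            tendsto_one_div_add_atTop_nhds_zero_nat
          have h2 := Filter.Tendsto.const_add xr this
          simpa using h2
        exact (Complex.continuous_ofReal.tendsto xr).comp h1
      · apply Filter.Eventually.of_forall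
        intro n
        simp only [Set.mem_compl_iff, Set.mem_singleton_iff]
        intro hcon
        have := Complex.ofReal_injective hcon
        have hpos : 0 < 1/(n+1 : ℝ) := by positivity
        linarith
    exact hten.frequently (Filter.Frequently.of_forall fun n => hreal _)
  -- key identity via complex analysis
  have key : ∀ a : ℍ[ℝ], Set.EqOn (fun z => lam L a (F z)) (fun z => lam L a (G z)) U := by
    intro a
    have hdF : DifferentiableOn ℂ (fun z => lam L a (F z)) U := by
      apply cr_differentiableOn hUopen (ψx := fun z => lam L a (Fx z.re z.im))
        (ψy := fun z => lam L a (Fy z.re z.im))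
      · intro z hz
        exact ((lam L a).hasFDerivAt.comp_hasDerivAt z.re (hFh z hz))
      · intro z hz
        exact ((lam L a).hasFDerivAt.comp_hasDerivAt z.im (hFv z hz))
      · exact (lam L a).continuous.comp_continuousOn hFcx'
      · exact (lam L a).continuous.comp_continuousOn hFcy'
      · intro z hz
        rw [hFyx z hz, lam_mul_L ⟨hL0, hL1⟩]
    have hdG : DifferentiableOn ℂ (fun z => lam L a (G z)) U := by
      apply cr_differentiableOn hUopen (ψx := fun z => lam L a (Gx z))
        (ψy := fun z => lam L a (Gy z))
      · intro z hz
        exact ((lam L a).hasFDerivAt.comp_hasDerivAt z.re (hGh z hz))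
      · intro z hz
        exact ((lam L a).hasFDerivAt.comp_hasDerivAt z.im (hGv z hz))
      · exact (lam L a).continuous.comp_continuousOn hGcx
      · exact (lam L a).continuous.comp_continuousOn hGcy
      · intro z hz
        rw [hGyx z hz, lam_mul_L ⟨hL0, hL1⟩]
    exact (hdF.analyticOnNhd hUopen).eqOn_of_preconnected_of_frequently_eq
      (hdG.analyticOnNhd hUopen) hUpre hxrU
      (hfreq.mono fun w hw => by rw [hw])
  -- conclude F = G on U
  have hFG : ∀ z ∈ U, F z = G z := by
    intro z hz
    have h1 := key 1 hz
    have hi := key qi hz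
    have hj := key qj hz
    have hk := key qk hz
    simp only [] at h1 hi hj hk
    have e1 := congrArg Complex.re h1
    have ei := congrArg Complex.re hi
    have ej := congrArg Complex.re hj
    have ek := congrArg Complex.re hk
    rw [lam_re, lam_re, ipl_one, ipl_one] at e1
    rw [lam_re, lam_re, ipl_qi, ipl_qi] at ei
    rw [lam_re, lam_re, ipl_qj, ipl_qj] at ej
    rw [lam_re, lam_re, ipl_qk, ipl_qk] at ek
    apply Quaternion.ext
    exacts [e1, ei, ej, ek]
  -- evaluate at the target point
  have hz₁ : ((x : ℂ) + (y : ℂ) * Complex.I) ∈ U := by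
    show ((((x : ℂ) + (y : ℂ) * Complex.I).re : ℍ[ℝ])
      + ((x : ℂ) + (y : ℂ) * Complex.I).im • J) ∈ Ω
    simpa using hxy
  have := hFG _ hz₁
  rw [hFdef, hGdef] at this
  simpa using this

end ZS

/-- A slice-preserving regular function vanishing at one point of a sphere not on the
preserved slice vanishes on the whole sphere. -/
theorem zeros_spherical
    (Ω : Set ℍ[ℝ]) (hΩ : IsSDomain Ω) (hax : AxSymm Ω)
    (f : ℍ[ℝ] → ℍ[ℝ]) (hf : SliceRegularOn f Ω)
    (J : ℍ[ℝ]) (hJ : J ∈ SpH) (hmaps : ∀ q ∈ Ω ∩ sliceL J, f q ∈ sliceL J)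
    (x₀ y₀ : ℝ) (I : ℍ[ℝ]) (hI : I ∈ SpH) (hInot : I ∉ sliceL J)
    (hq : (x₀ : ℍ[ℝ]) + y₀ • I ∈ Ω) (hz : f ((x₀ : ℍ[ℝ]) + y₀ • I) = 0) :
    ∀ L ∈ SpH, f ((x₀ : ℍ[ℝ]) + y₀ • L) = 0 := by
  intro L hL
  obtain ⟨hJ0, hJ1⟩ := hJ
  have hJS : J ∈ SpH := ⟨hJ0, hJ1⟩
  have hmJ : -J ∈ SpH := ⟨by simp [hJ0], by simp [hJ1]⟩
  have hxyJ : (x₀ : ℍ[ℝ]) + y₀ • J ∈ Ω := hax x₀ y₀ I hI hq J hJS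
  have hmemp : ((x₀:ℍ[ℝ]) + y₀ • J) ∈ Ω ∩ sliceL J := ⟨hxyJ, ⟨x₀, y₀, rfl⟩⟩
  have hnegΩ : (x₀:ℍ[ℝ]) + y₀ • (-J) ∈ Ω := hax x₀ y₀ J hJS hxyJ (-J) hmJ
  have hmemn : ((x₀:ℍ[ℝ]) + y₀ • (-J)) ∈ Ω ∩ sliceL J :=
    ⟨hnegΩ, ⟨x₀, -y₀, by rw [neg_smul, ← smul_neg]⟩⟩
  obtain ⟨p, q, hpq⟩ := hmaps _ hmemp
  obtain ⟨r, s, hrs⟩ := hmaps _ hmemn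
  set fp := f ((x₀:ℍ[ℝ]) + y₀ • J) with hfp
  set fn := f ((x₀:ℍ[ℝ]) + y₀ • (-J)) with hfn
  have hI' := ZS.rep_formula Ω hΩ hax f hf J hJS I hI x₀ y₀ hxyJ
  rw [hz] at hI'
  have hSD : (fp + fn) + (I*J)*(fn - fp) = 0 := by
    rcases smul_eq_zero.mp hI'.symm with h | h
    · norm_num at h
    · exact h
  have hSslice : fp + fn ∈ sliceL J := by
    rw [hpq, hrs]
    exact ⟨p + r, q + s, by push_cast [add_smul]; abel⟩
  have hDslice : fn - fp ∈ sliceL J := by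
    rw [hpq, hrs]
    exact ⟨r - p, s - q, by push_cast [sub_smul]; abel⟩
  have hJslice : J ∈ sliceL J := ⟨0, 1, by simp⟩
  set w := J * (fn - fp) with hw
  have hwslice : w ∈ sliceL J := ZS.slice_closed_mul hJS hJslice hDslice
  have hIw : I * w = -(fp + fn) := by
    rw [hw, ← mul_assoc]
    exact eq_neg_of_add_eq_zero_right hSD
  by_cases hw0 : w = 0
  · -- spherical vanishing
    have hD : fn - fp = 0 := by
      rcases mul_eq_zero.mp (hw ▸ hw0) with h | h
      · exfalso; rw [h] at hJ1; simp at hJ1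
      · exact h
    have hS : fp + fn = 0 := by
      have := hIw
      rw [hw0, mul_zero] at this
      exact neg_eq_zero.mp this.symm
    have hrep := ZS.rep_formula Ω hΩ hax f hf J hJS L hL x₀ y₀ hxyJ
    rw [← hfp, ← hfn, hS, hD] at hrep
    rw [hrep]
    simp
  · exfalso
    have hI2 : I = -(fp + fn) * w⁻¹ := by
      rw [eq_mul_inv_iff_mul_eq₀ hw0]
      exact hIw
    have : I ∈ sliceL J := by
      rw [hI2]
      exact ZS.slice_closed_mul hJS (ZS.slice_closed_neg hSslice)
        (ZS.slice_closed_inv hJS hwslice)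
    exact hInot this

end
end

section
/- Let Ω ⊆ ℍ be an axially symmetric s-domain, let f, g : Ω → ℍ be slice regular, fix I, J ∈ 𝕊 with I ⊥ J, and split f(z) = F(z)+G(z)·J and g(z) = H(z)+K(z)·J on Ω ∩ L_I with F, G, H, K holomorphic into L_I. Let f∗g denote the unique slice regular function on Ω whose restriction to Ω ∩ L_I equals (FH − G·conj(K∘conj)) + (FK + G·conj(H∘conj))·J; for a slice regular function p with splitting p = P + Q·J on Ω ∩ L_I, let p^c denote the unique slice regular function on Ω whose restriction to Ω ∩ L_I equals conj(P∘conj) − Q·J. Then (f∗g)^c = g^c ∗ f^c on Ω. -/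
open Quaternion

noncomputable section

section AuxSliceRegular
open Asymptotics Set Quaternion


namespace SliceAux


lemma hasFDerivAt_of_partials {E : Type*} [NormedAddCommGroup E] [NormedSpace ℝ E]
    {U : Set ℂ} (hU : IsOpen U) (f fx fy : ℂ → E)
    (hx : ∀ z ∈ U, HasDerivAt (fun t : ℝ => f ⟨t, z.im⟩) (fx z) z.re)
    (hy : ∀ z ∈ U, HasDerivAt (fun t : ℝ => f ⟨z.re, t⟩) (fy z) z.im)
    (hcx : ContinuousOn fx U) {z : ℂ} (hz : z ∈ U) :
    HasFDerivAt f (Complex.reCLM.smulRight (fx z) + Complex.imCLM.smulRight (fy z)) z := by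
  apply HasFDerivAt.of_isLittleO
  rw [isLittleO_iff]
  intro c hc
  have hc2 : 0 < c / 2 := by positivity
  have hfxc : ContinuousAt fx z := hcx.continuousAt (hU.mem_nhds hz)
  obtain ⟨δ₂, hδ₂pos, hδ₂⟩ := Metric.continuousAt_iff.1 hfxc (c / 2) hc2
  obtain ⟨δ₃, hδ₃pos, hδ₃⟩ := Metric.isOpen_iff.1 hU z hz
  set δ := min δ₂ δ₃ with hδdef
  have hδpos : 0 < δ := lt_min hδ₂pos hδ₃pos
  have h2 : ∀ᶠ t in nhds z.im,
      ‖f ⟨z.re, t⟩ - f ⟨z.re, z.im⟩ - (t - z.im) • fy z‖ ≤ c / 2 * ‖t - z.im‖ :=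
    isLittleO_iff.1 (hasDerivAt_iff_isLittleO.1 (hy z hz)) hc2
  have h2' : ∀ᶠ w in nhds z,
      ‖f ⟨z.re, w.im⟩ - f ⟨z.re, z.im⟩ - (w.im - z.im) • fy z‖ ≤ c / 2 * ‖w.im - z.im‖ :=
    (Complex.continuous_im.tendsto z).eventually h2
  filter_upwards [h2', Metric.ball_mem_nhds z hδpos] with w hw2 hwδ
  have hre : ∀ t ∈ Set.uIcc z.re w.re, |t - z.re| ≤ |w.re - z.re| := by
    intro t ht
    rcases le_total z.re w.re with h | h
    · rw [Set.uIcc_of_le h] at ht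
      rw [_root_.abs_of_nonneg (by linarith [ht.1]), _root_.abs_of_nonneg (by linarith)]; linarith [ht.2]
    · rw [Set.uIcc_of_ge h] at ht
      rw [_root_.abs_of_nonpos (by linarith [ht.2]), _root_.abs_of_nonpos (by linarith)]; linarith [ht.1]
  have hseg : ∀ t ∈ Set.uIcc z.re w.re, (⟨t, w.im⟩ : ℂ) ∈ Metric.ball z δ := by
    intro t ht
    have h1 := hre t ht
    have hsq : (t - z.re) ^ 2 ≤ (w.re - z.re) ^ 2 := by
      rw [← _root_.sq_abs (t - z.re), ← _root_.sq_abs (w.re - z.re)]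
      exact pow_le_pow_left₀ (abs_nonneg _) h1 2
    have hd : dist (⟨t, w.im⟩ : ℂ) z ≤ dist w z := by
      rw [Complex.dist_eq_re_im, Complex.dist_eq_re_im]
      exact Real.sqrt_le_sqrt (by simp only []; gcongr)
    exact lt_of_le_of_lt hd hwδ
  -- bound on the horizontal part via MVT
  have hA : ‖f ⟨w.re, w.im⟩ - f ⟨z.re, w.im⟩ - (w.re - z.re) • fx z‖
      ≤ c / 2 * ‖w.re - z.re‖ := by
    set φ : ℝ → E := fun t => f ⟨t, w.im⟩ - t • fx z with hφ
    have hder : ∀ t ∈ Set.uIcc z.re w.re,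
        HasDerivWithinAt φ (fx ⟨t, w.im⟩ - fx z) (Set.uIcc z.re w.re) t := by
      intro t ht
      have hmem : (⟨t, w.im⟩ : ℂ) ∈ U := hδ₃ (Metric.ball_subset_ball (min_le_right _ _) (hseg t ht))
      have h := ((hx ⟨t, w.im⟩ hmem).sub
        ((hasDerivAt_id t).smul_const (fx z))).hasDerivWithinAt (s := Set.uIcc z.re w.re)
      have h' : φ = (fun t => f ⟨t, w.im⟩) - fun y => y • fx z := by
        funext s; simp [hφ]
      rw [h']
      simpa only [one_smul, id] using h
    have hbd : ∀ t ∈ Set.uIcc z.re w.re, ‖fx ⟨t, w.im⟩ - fx z‖ ≤ c / 2 := by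
      intro t ht
      have : dist (⟨t, w.im⟩ : ℂ) z < δ₂ := lt_of_lt_of_le (hseg t ht) (min_le_left _ _)
      have := hδ₂ this
      rw [dist_eq_norm] at this
      exact this.le
    have := Convex.norm_image_sub_le_of_norm_hasDerivWithin_le hder hbd (convex_uIcc _ _)
      (Set.left_mem_uIcc) (Set.right_mem_uIcc)
    calc ‖f ⟨w.re, w.im⟩ - f ⟨z.re, w.im⟩ - (w.re - z.re) • fx z‖
        = ‖φ w.re - φ z.re‖ := by rw [hφ]; congr 1; simp [sub_smul]; abel
      _ ≤ c / 2 * ‖w.re - z.re‖ := this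
  have heta_w : (⟨w.re, w.im⟩ : ℂ) = w := Complex.eta w
  have heta_z : (⟨z.re, z.im⟩ : ℂ) = z := Complex.eta z
  have hL : (Complex.reCLM.smulRight (fx z) + Complex.imCLM.smulRight (fy z)) (w - z)
      = (w.re - z.re) • fx z + (w.im - z.im) • fy z := by
    simp [Complex.sub_re, Complex.sub_im]
  calc ‖f w - f z - (Complex.reCLM.smulRight (fx z) + Complex.imCLM.smulRight (fy z)) (w - z)‖
      = ‖(f ⟨w.re, w.im⟩ - f ⟨z.re, w.im⟩ - (w.re - z.re) • fx z)
          + (f ⟨z.re, w.im⟩ - f ⟨z.re, z.im⟩ - (w.im - z.im) • fy z)‖ := by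
        rw [hL, heta_w, heta_z]; congr 1; abel
    _ ≤ ‖f ⟨w.re, w.im⟩ - f ⟨z.re, w.im⟩ - (w.re - z.re) • fx z‖
          + ‖f ⟨z.re, w.im⟩ - f ⟨z.re, z.im⟩ - (w.im - z.im) • fy z‖ := norm_add_le _ _
    _ ≤ c / 2 * ‖w.re - z.re‖ + c / 2 * ‖w.im - z.im‖ := add_le_add hA hw2
    _ ≤ c / 2 * ‖w - z‖ + c / 2 * ‖w - z‖ := by
        have h1 : ‖w.re - z.re‖ ≤ ‖w - z‖ := by
          rw [Real.norm_eq_abs, ← Complex.sub_re]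
          exact (Complex.abs_re_le_norm _).trans_eq rfl
        have h2 : ‖w.im - z.im‖ ≤ ‖w - z‖ := by
          rw [Real.norm_eq_abs, ← Complex.sub_im]
          exact (Complex.abs_im_le_norm _).trans_eq rfl
        gcongr
    _ = c * ‖w - z‖ := by ring


instance : Module ℂ ℍ[ℝ] := Module.compHom ℍ[ℝ] (Quaternion.ofComplex.toRingHom)

lemma complex_smul_def (z : ℂ) (q : ℍ[ℝ]) : z • q = (z : ℍ[ℝ]) * q := rfl

/-- The quaternion `i` as image of the complex `I`. -/
def qi : ℍ[ℝ] := ((Complex.I : ℂ) : ℍ[ℝ])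

lemma qi_mul_qi : qi * qi = -1 := by
  rw [qi, ← Quaternion.coeComplex_mul, Complex.I_mul_I]
  ext <;> simp

lemma norm_coeComplex (z : ℂ) : ‖(z : ℍ[ℝ])‖ = ‖z‖ := by
  have h1 : normSq (z : ℍ[ℝ]) = Complex.normSq z := by
    rw [Quaternion.normSq_def', Complex.normSq_apply]
    simp [sq]
  have h2 : ‖(z : ℍ[ℝ])‖ * ‖(z : ℍ[ℝ])‖ = ‖z‖ * ‖z‖ := by
    rw [← Quaternion.normSq_eq_norm_mul_self, h1, ← Complex.sq_norm]
    ring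
  nlinarith [norm_nonneg (z : ℍ[ℝ]), norm_nonneg z]

instance : NormedSpace ℂ ℍ[ℝ] where
  norm_smul_le z q := by
    rw [complex_smul_def, norm_mul, norm_coeComplex]

instance : IsScalarTower ℝ ℂ ℍ[ℝ] := by
  constructor
  intro r z q
  rw [complex_smul_def, complex_smul_def]
  have : ((r • z : ℂ) : ℍ[ℝ]) = r • (z : ℍ[ℝ]) := by ext <;> simp
  rw [this, smul_mul_assoc]

lemma coeComplex_eq (w : ℂ) : (w : ℍ[ℝ]) = ((w.re : ℝ) : ℍ[ℝ]) + w.im • qi := by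
  ext <;> simp [qi]

/-- Cauchy–Riemann with continuous partials gives complex differentiability. -/
lemma differentiableOn_of_partials {U : Set ℂ} (hU : IsOpen U) (f fx fy : ℂ → ℍ[ℝ])
    (hx : ∀ z ∈ U, HasDerivAt (fun t : ℝ => f ⟨t, z.im⟩) (fx z) z.re)
    (hy : ∀ z ∈ U, HasDerivAt (fun t : ℝ => f ⟨z.re, t⟩) (fy z) z.im)
    (hcx : ContinuousOn fx U)
    (hCR : ∀ z ∈ U, fx z + qi * fy z = 0) :
    DifferentiableOn ℂ f U := by
  intro z hz
  have hfy : fy z = qi * fx z := by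
    have h := hCR z hz
    have h2 : qi * (fx z + qi * fy z) = 0 := by rw [h, mul_zero]
    rw [mul_add, ← mul_assoc, qi_mul_qi, neg_one_mul] at h2
    rw [← sub_eq_add_neg] at h2
    exact (sub_eq_zero.mp h2).symm
  have hF := hasFDerivAt_of_partials hU f fx fy hx hy hcx hz
  have hE : (((1 : ℂ →L[ℂ] ℂ).smulRight (fx z)).restrictScalars ℝ)
      = Complex.reCLM.smulRight (fx z) + Complex.imCLM.smulRight (fy z) := by
    apply ContinuousLinearMap.ext
    intro w
    show w • fx z = w.re • fx z + w.im • fy z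
    rw [complex_smul_def, coeComplex_eq, add_mul, Quaternion.coe_mul_eq_smul, smul_mul_assoc, hfy]
  exact (hasFDerivAt_of_restrictScalars ℝ hF hE).differentiableAt.differentiableWithinAt

end SliceAux



namespace SliceAux

def qj : ℍ[ℝ] := ⟨0,0,1,0⟩

lemma qj_ne_zero : qj ≠ 0 := by
  intro h
  have : (qj).imJ = 0 := by rw [h]; rfl
  simp [qj] at this

lemma qj_mul_qi : qj * qi = -(qi * qj) := by
  ext <;> simp [Quaternion.re_mul, Quaternion.imI_mul, Quaternion.imJ_mul, Quaternion.imK_mul] <;> simp [qi, qj, Quaternion.coeComplex] <;> ring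

lemma SpH.mul_self {u : ℍ[ℝ]} (hu : u ∈ SpH) : u * u = -1 := by
  have hstar : star u = -u := by ext <;> simp [hu.1]
  have h1 : u * star u = ((normSq u : ℝ) : ℍ[ℝ]) := Quaternion.self_mul_star u
  have h2 : normSq u = 1 := by
    rw [Quaternion.normSq_eq_norm_mul_self, hu.2, one_mul]
  rw [hstar, h2, mul_neg] at h1
  have h3 : -(u * u) = 1 := by rw [h1]; ext <;> simp
  exact neg_eq_iff_eq_neg.mp h3

end SliceAux
namespace SliceAux

lemma star_coe_q (r : ℝ) : star ((r : ℝ) : ℍ[ℝ]) = ((r : ℝ) : ℍ[ℝ]) := by ext <;> simp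

lemma star_slice_pt {u : ℍ[ℝ]} (hu : u.re = 0) (x y : ℝ) :
    star ((x : ℍ[ℝ]) + y • u) = (x : ℍ[ℝ]) + (-y) • u := by
  have hsu : star u = -u := by ext <;> simp [hu]
  rw [star_add, star_coe_q, Quaternion.star_smul, hsu, smul_neg, ← neg_smul]

lemma mem_sliceL_pt (u : ℍ[ℝ]) (x y : ℝ) : (x : ℍ[ℝ]) + y • u ∈ sliceL u := ⟨x, y, rfl⟩

lemma coe_mem_sliceL (u : ℍ[ℝ]) (x : ℝ) : ((x : ℝ) : ℍ[ℝ]) ∈ sliceL u :=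
  ⟨x, 0, by simp⟩

lemma star_mem_sliceL {u z : ℍ[ℝ]} (hu : u.re = 0) (hz : z ∈ sliceL u) :
    star z ∈ sliceL u := by
  obtain ⟨x, y, rfl⟩ := hz
  rw [star_slice_pt hu]
  exact ⟨x, -y, rfl⟩

lemma sliceL_comm {u a b : ℍ[ℝ]} (ha : a ∈ sliceL u) (hb : b ∈ sliceL u) :
    a * b = b * a := by
  obtain ⟨x, y, rfl⟩ := ha
  obtain ⟨p, q, rfl⟩ := hb
  have h1 : ∀ r : ℝ, ∀ w : ℍ[ℝ], (r : ℍ[ℝ]) * w = w * (r : ℍ[ℝ]) := fun r w =>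
    Quaternion.coe_commutes r w
  simp only [add_mul, mul_add, smul_add, smul_mul_assoc, mul_smul_comm, smul_smul]
  rw [h1 x, h1 p, h1 x u, h1 p u, mul_comm q y]
  abel

lemma neg_mem_SpH {u : ℍ[ℝ]} (hu : u ∈ SpH) : -u ∈ SpH := by
  constructor
  · show (-u).re = 0
    simp [hu.1]
  · rw [norm_neg]; exact hu.2

lemma exists_conj {u : ℍ[ℝ]} (hu : u ∈ SpH) : ∃ c : ℍ[ℝ], c ≠ 0 ∧ c * qi = u * c := by
  by_cases h : u = -qi
  · refine ⟨qj, qj_ne_zero, ?_⟩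
    rw [h, qj_mul_qi, neg_mul]
  · refine ⟨qi + u, ?_, ?_⟩
    · intro h0
      apply h
      rw [← neg_eq_of_add_eq_zero_right h0]
    · rw [add_mul, mul_add, qi_mul_qi, SpH.mul_self hu, add_comm]

end SliceAux


namespace SliceAux

/-- The real-linear embedding of `ℂ` into `ℍ` along the imaginary unit `u`. -/
def phiL (u : ℍ[ℝ]) : ℂ →ₗ[ℝ] ℍ[ℝ] where
  toFun z := ((z.re : ℝ) : ℍ[ℝ]) + z.im • u
  map_add' a b := by
    simp only [Complex.add_re, Complex.add_im, Quaternion.coe_add, add_smul]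
    abel
  map_smul' r a := by
    simp only [Complex.smul_re, Complex.smul_im, RingHom.id_apply, smul_add, smul_smul]
    congr 1
    rw [smul_eq_mul, Quaternion.coe_mul, Quaternion.coe_mul_eq_smul]

lemma continuous_phiL (u : ℍ[ℝ]) : Continuous (phiL u) := by
  show Continuous fun z : ℂ => ((z.re : ℝ) : ℍ[ℝ]) + z.im • u
  exact ((Quaternion.continuous_coe).comp Complex.continuous_re).add
    (Complex.continuous_im.smul continuous_const)

lemma phiL_inj {u : ℍ[ℝ]} (hu : u ∈ SpH) : Function.Injective (phiL u) := by
  intro a b hab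
  have h : ((a.re : ℝ) : ℍ[ℝ]) + a.im • u = ((b.re : ℝ) : ℍ[ℝ]) + b.im • u := hab
  have hre : a.re = b.re := by
    have := congrArg QuaternionAlgebra.re h
    simpa [hu.1] using this
  have him : a.im = b.im := by
    have h2 : a.im • u = b.im • u := by
      have := h
      rw [hre] at this
      exact add_left_cancel this
    have hu0 : u ≠ 0 := by
      intro h0
      exact one_ne_zero (hu.2.symm.trans (by rw [h0, norm_zero]))
    have h3 : (a.im - b.im) • u = 0 := by rw [sub_smul, h2, sub_self]
    rcases smul_eq_zero.mp h3 with h4 | h4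
    · linarith [sub_eq_zero.mp (by linarith : a.im - b.im = 0)]
    · exact absurd h4 hu0
  exact Complex.ext hre him

end SliceAux
namespace SliceAux

lemma range_phiL (u : ℍ[ℝ]) : Set.range (phiL u) = sliceL u := by
  ext q
  constructor
  · rintro ⟨z, rfl⟩
    exact ⟨z.re, z.im, rfl⟩
  · rintro ⟨x, y, rfl⟩
    exact ⟨⟨x, y⟩, rfl⟩

lemma isOpen_sliceSet {Ω : Set ℍ[ℝ]} (hΩ : IsOpen Ω) (u : ℍ[ℝ]) :
    IsOpen {z : ℂ | ((z.re : ℝ) : ℍ[ℝ]) + z.im • u ∈ Ω} :=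
  hΩ.preimage (continuous_phiL u)

lemma isPreconnected_sliceSet {Ω : Set ℍ[ℝ]} {u : ℍ[ℝ]} (hu : u ∈ SpH)
    (hcon : IsConnected (Ω ∩ sliceL u)) :
    IsPreconnected {z : ℂ | ((z.re : ℝ) : ℍ[ℝ]) + z.im • u ∈ Ω} := by
  have hemb : Topology.IsClosedEmbedding (phiL u) := by
    apply LinearMap.isClosedEmbedding_of_injective
    rw [LinearMap.ker_eq_bot]
    exact phiL_inj hu
  have himg : (phiL u) '' ((phiL u) ⁻¹' Ω) = Ω ∩ sliceL u := by
    rw [Set.image_preimage_eq_inter_range, range_phiL]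
  have := hemb.toIsEmbedding.toIsInducing.isPreconnected_image (s := (phiL u) ⁻¹' Ω)
  rw [himg] at this
  exact this.mp hcon.isPreconnected

end SliceAux

end AuxSliceRegular

/-- `(f ∗ g)ᶜ = gᶜ ∗ fᶜ`. -/
theorem regular_conjugate_of_product
    (Ω : Set ℍ[ℝ]) (hΩ : IsSDomain Ω) (hax : AxSymm Ω)
    (f g : ℍ[ℝ] → ℍ[ℝ]) (hf : SliceRegularOn f Ω) (hg : SliceRegularOn g Ω)
    (I J : ℍ[ℝ]) (hI : I ∈ SpH) (hJ : J ∈ SpH) (hperp : (I * star J).re = 0)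
    (F G H K : ℍ[ℝ] → ℍ[ℝ])
    (hF : SliceHolomorphicOn I F (Ω ∩ sliceL I)) (hFm : Set.MapsTo F (Ω ∩ sliceL I) (sliceL I))
    (hG : SliceHolomorphicOn I G (Ω ∩ sliceL I)) (hGm : Set.MapsTo G (Ω ∩ sliceL I) (sliceL I))
    (hH : SliceHolomorphicOn I H (Ω ∩ sliceL I)) (hHm : Set.MapsTo H (Ω ∩ sliceL I) (sliceL I))
    (hK : SliceHolomorphicOn I K (Ω ∩ sliceL I)) (hKm : Set.MapsTo K (Ω ∩ sliceL I) (sliceL I))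
    (hfs : ∀ z ∈ Ω ∩ sliceL I, f z = F z + G z * J)
    (hgs : ∀ z ∈ Ω ∩ sliceL I, g z = H z + K z * J)
    -- the splitting components of the regular product `f ∗ g`
    (P Q : ℍ[ℝ] → ℍ[ℝ])
    (hP : ∀ z : ℍ[ℝ], P z = F z * H z - G z * star (K (star z)))
    (hQ : ∀ z : ℍ[ℝ], Q z = F z * K z + G z * star (H (star z)))
    -- `c₁ = (f ∗ g)ᶜ`
    (c₁ : ℍ[ℝ] → ℍ[ℝ]) (hc₁reg : SliceRegularOn c₁ Ω)
    (hc₁ : ∀ z ∈ Ω ∩ sliceL I, c₁ z = star (P (star z)) - Q z * J)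
    -- the splitting components of `gᶜ = H₂ + K₂ J` and of `fᶜ = F₃ + G₃ J`
    (H₂ K₂ F₃ G₃ : ℍ[ℝ] → ℍ[ℝ])
    (hH₂ : ∀ z : ℍ[ℝ], H₂ z = star (H (star z))) (hK₂ : ∀ z : ℍ[ℝ], K₂ z = -K z)
    (hF₃ : ∀ z : ℍ[ℝ], F₃ z = star (F (star z))) (hG₃ : ∀ z : ℍ[ℝ], G₃ z = -G z)
    -- `c₂ = gᶜ ∗ fᶜ`
    (c₂ : ℍ[ℝ] → ℍ[ℝ]) (hc₂reg : SliceRegularOn c₂ Ω)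
    (hc₂ : ∀ z ∈ Ω ∩ sliceL I, c₂ z =
      (H₂ z * F₃ z - K₂ z * star (G₃ (star z))) +
        (H₂ z * G₃ z + K₂ z * star (F₃ (star z))) * J) :
    Set.EqOn c₁ c₂ Ω := by
  have hΩopen : IsOpen Ω := hΩ.1
  -- Step 1: the two functions agree on the distinguished slice `L_I`.
  have slice_eq : ∀ z ∈ Ω ∩ sliceL I, c₁ z = c₂ z := by
    intro z hz
    have hIre : I.re = 0 := hI.1
    have hsz : star z ∈ Ω ∩ sliceL I := by
      obtain ⟨x, y, hzeq⟩ := hz.2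
      constructor
      · rw [hzeq, SliceAux.star_slice_pt hIre]
        have hmem : (x : ℍ[ℝ]) + y • I ∈ Ω := hzeq ▸ hz.1
        have hmem2 := hax x y I hI hmem (-I) (SliceAux.neg_mem_SpH hI)
        rw [smul_neg, ← neg_smul] at hmem2
        exact hmem2
      · rw [hzeq, SliceAux.star_slice_pt hIre]; exact ⟨x, -y, rfl⟩
    have hFz := hFm hz
    have hGz := hGm hz
    have hKz := hKm hz
    have hHs := hHm hsz
    have hstarH : star (H (star z)) ∈ sliceL I := SliceAux.star_mem_sliceL hIre hHs
    have comm1 : F z * K z = K z * F z := SliceAux.sliceL_comm hFz hKz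
    have comm2 : G z * star (H (star z)) = star (H (star z)) * G z :=
      SliceAux.sliceL_comm hGz hstarH
    rw [hc₁ z hz, hc₂ z hz]
    simp only [hP, hQ, hH₂, hK₂, hF₃, hG₃, star_star, star_sub, star_mul, star_neg,
      neg_mul, mul_neg, neg_neg]
    rw [comm1, comm2]
    noncomm_ring
  -- Step 2: equality propagates to every slice by the identity principle.
  have key : ∀ u ∈ SpH, ∀ x y : ℝ, ((x : ℍ[ℝ]) + y • u) ∈ Ω →
      c₁ ((x : ℍ[ℝ]) + y • u) = c₂ ((x : ℍ[ℝ]) + y • u) := by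
    intro u hu x y hxy
    obtain ⟨c, hc0, hconj⟩ := SliceAux.exists_conj hu
    have hinv0 : c⁻¹ ≠ 0 := inv_ne_zero hc0
    have hqic : SliceAux.qi * c⁻¹ = c⁻¹ * u := by
      apply mul_left_cancel₀ hc0
      rw [← mul_assoc, hconj, mul_assoc, mul_inv_cancel₀ hc0, mul_one,
        ← mul_assoc, mul_inv_cancel₀ hc0, one_mul]
    set U : Set ℂ := {z : ℂ | ((z.re : ℝ) : ℍ[ℝ]) + z.im • u ∈ Ω} with hUdef
    have hUopen : IsOpen U := SliceAux.isOpen_sliceSet hΩopen u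
    have hUpre : IsPreconnected U := SliceAux.isPreconnected_sliceSet hu (hΩ.2.2.2 u hu)
    obtain ⟨x₀, hx₀⟩ := hΩ.2.2.1
    obtain ⟨ax₁, ay₁, hax₁, hay₁, hcx₁, -, hCR₁⟩ := hc₁reg u hu
    obtain ⟨ax₂, ay₂, hax₂, hay₂, hcx₂, -, hCR₂⟩ := hc₂reg u hu
    set g₁ : ℂ → ℍ[ℝ] := fun z => c⁻¹ * c₁ ((z.re : ℍ[ℝ]) + z.im • u) with hg₁
    set g₂ : ℂ → ℍ[ℝ] := fun z => c⁻¹ * c₂ ((z.re : ℍ[ℝ]) + z.im • u) with hg₂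
    have mkdiff : ∀ (cf : ℍ[ℝ] → ℍ[ℝ]) (axf ayf : ℝ → ℝ → ℍ[ℝ]),
        (∀ a b : ℝ, (a : ℍ[ℝ]) + b • u ∈ Ω →
          HasDerivAt (fun t : ℝ => cf ((t : ℍ[ℝ]) + b • u)) (axf a b) a) →
        (∀ a b : ℝ, (a : ℍ[ℝ]) + b • u ∈ Ω →
          HasDerivAt (fun t : ℝ => cf ((a : ℍ[ℝ]) + t • u)) (ayf a b) b) →
        ContinuousOn (fun p : ℝ × ℝ => axf p.1 p.2) {p : ℝ × ℝ | ((p.1 : ℝ) : ℍ[ℝ]) + p.2 • u ∈ Ω} →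
        (∀ a b : ℝ, (a : ℍ[ℝ]) + b • u ∈ Ω → axf a b + u * ayf a b = 0) →
        DifferentiableOn ℂ (fun z : ℂ => c⁻¹ * cf ((z.re : ℍ[ℝ]) + z.im • u)) U := by
      intro cf axf ayf hx' hy' hcx' hCR'
      apply SliceAux.differentiableOn_of_partials hUopen _
        (fun z => c⁻¹ * axf z.re z.im) (fun z => c⁻¹ * ayf z.re z.im)
      · intro z hz
        exact (hx' z.re z.im hz).const_mul c⁻¹
      · intro z hz
        exact (hy' z.re z.im hz).const_mul c⁻¹
      · have h1 : ContinuousOn (fun z : ℂ => axf z.re z.im) U := by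
          have h2 := hcx'.comp
            (Continuous.continuousOn (Complex.continuous_re.prodMk Complex.continuous_im))
            (fun (z : ℂ) (hz : z ∈ U) => hz)
          exact h2
        exact continuousOn_const.mul h1
      · intro z hz
        rw [← mul_assoc, hqic, mul_assoc, ← mul_add, hCR' z.re z.im hz, mul_zero]
    have hd₁ := mkdiff c₁ ax₁ ay₁ hax₁ hay₁ hcx₁ hCR₁
    have hd₂ := mkdiff c₂ ax₂ ay₂ hax₂ hay₂ hcx₂ hCR₂
    have hA₁ : AnalyticOnNhd ℂ g₁ U := hd₁.analyticOnNhd hUopen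
    have hA₂ : AnalyticOnNhd ℂ g₂ U := hd₂.analyticOnNhd hUopen
    have hz₀ : ((x₀ : ℝ) : ℂ) ∈ U := by
      show (((x₀ : ℂ).re : ℝ) : ℍ[ℝ]) + ((x₀ : ℂ).im) • u ∈ Ω
      simpa using hx₀
    obtain ⟨ε, hεpos, hball⟩ := Metric.isOpen_iff.1 hΩopen _ hx₀
    have hrealmem : ∀ n : ℕ, (((x₀ + ε / (n + 2) : ℝ)) : ℍ[ℝ]) ∈ Ω := by
      intro n
      apply hball
      rw [Metric.mem_ball, dist_eq_norm, ← Quaternion.coe_sub, Quaternion.norm_coe]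
      have he : x₀ + ε / (n + 2) - x₀ = ε / (n + 2) := by ring
      rw [he, Real.norm_eq_abs, abs_of_pos (by positivity)]
      have hn2 : (1 : ℝ) < (n : ℝ) + 2 := by
        have : (0 : ℝ) ≤ (n : ℝ) := Nat.cast_nonneg n
        linarith
      exact div_lt_self hεpos hn2
    have hfreq : ∃ᶠ z in nhdsWithin ((x₀ : ℝ) : ℂ) {((x₀ : ℝ) : ℂ)}ᶜ, g₁ z = g₂ z := by
      have h0 : Filter.Tendsto (fun n : ℕ => ε / ((n : ℝ) + 2)) Filter.atTop (nhds 0) := by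
        apply Filter.Tendsto.div_atTop tendsto_const_nhds
        apply Filter.tendsto_atTop_add_const_right
        exact tendsto_natCast_atTop_atTop
      have htr : Filter.Tendsto (fun n : ℕ => (x₀ + ε / ((n : ℝ) + 2) : ℝ)) Filter.atTop (nhds x₀) := by
        simpa using (tendsto_const_nhds (x := x₀) (f := Filter.atTop (α := ℕ))).add h0
      have htend : Filter.Tendsto (fun n : ℕ => (((x₀ + ε / (n + 2) : ℝ)) : ℂ)) Filter.atTop
          (nhdsWithin ((x₀ : ℝ) : ℂ) {((x₀ : ℝ) : ℂ)}ᶜ) := by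
        apply tendsto_nhdsWithin_of_tendsto_nhds_of_eventually_within
        · exact (Complex.continuous_ofReal.tendsto x₀).comp htr
        · apply Filter.Eventually.of_forall
          intro n
          simp only [Set.mem_compl_iff, Set.mem_singleton_iff]
          intro hcontra
          have h1 : x₀ + ε / ((n : ℝ) + 2) = x₀ := Complex.ofReal_injective hcontra
          have h2 : ε / ((n : ℝ) + 2) = 0 := by linarith
          have h3 : (0 : ℝ) < ε / ((n : ℝ) + 2) := by positivity
          linarith
      apply htend.frequently
      apply Filter.Frequently.of_forall
      intro n
      set a : ℝ := x₀ + ε / (n + 2) with ha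
      have hmem := hrealmem n
      have hmemslice : ((a : ℝ) : ℍ[ℝ]) ∈ Ω ∩ sliceL I :=
        ⟨hmem, SliceAux.coe_mem_sliceL I _⟩
      have hcc := slice_eq _ hmemslice
      show g₁ ((a : ℝ) : ℂ) = g₂ ((a : ℝ) : ℂ)
      rw [hg₁, hg₂]
      simp only []
      rw [show ((((a : ℝ) : ℂ).re : ℝ) : ℍ[ℝ])
          + (((a : ℝ) : ℂ).im) • u = ((a : ℝ) : ℍ[ℝ]) by simp]
      rw [hcc]
    have hEq := hA₁.eqOn_of_preconnected_of_frequently_eq hA₂ hUpre hz₀ hfreq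
    have hzq : (⟨x, y⟩ : ℂ) ∈ U := by
      show ((x : ℝ) : ℍ[ℝ]) + y • u ∈ Ω
      exact hxy
    have hgg := hEq hzq
    have h1 : c⁻¹ * c₁ ((x : ℍ[ℝ]) + y • u) = c⁻¹ * c₂ ((x : ℍ[ℝ]) + y • u) := hgg
    exact mul_left_cancel₀ hinv0 h1
  -- Step 3: conclude.
  intro q hq
  set v : ℍ[ℝ] := q - ((q.re : ℝ) : ℍ[ℝ]) with hv
  have hvre : v.re = 0 := by simp [hv]
  by_cases hv0 : v = 0
  · have hqr : q = ((q.re : ℝ) : ℍ[ℝ]) := by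
      have := sub_eq_zero.mp hv0
      exact this.symm ▸ rfl
    have hmem : q ∈ Ω ∩ sliceL I := ⟨hq, by rw [hqr]; exact SliceAux.coe_mem_sliceL I q.re⟩
    exact slice_eq q hmem
  · set u : ℍ[ℝ] := ‖v‖⁻¹ • v with hu
    have hvn0 : ‖v‖ ≠ 0 := norm_ne_zero_iff.mpr hv0
    have huS : u ∈ SpH := by
      constructor
      · show u.re = 0
        rw [hu]
        simp [hvre]
      · show ‖u‖ = 1
        rw [hu, norm_smul, norm_inv, norm_norm, inv_mul_cancel₀ hvn0]
    have hq_eq : q = ((q.re : ℝ) : ℍ[ℝ]) + ‖v‖ • u := by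
      rw [hu, smul_smul, mul_inv_cancel₀ hvn0, one_smul, hv, add_sub_cancel]
    rw [hq_eq]
    exact key u huS q.re ‖v‖ (hq_eq ▸ hq)
end
end

section
/- Let Ω ⊆ ℍ be an axially symmetric s-domain, let f, g : Ω → ℍ be slice regular, fix I, J ∈ 𝕊 with I ⊥ J, and split f = F+G·J and g = H+K·J on Ω ∩ L_I with F, G, H, K holomorphic into L_I. For a slice regular function p with splitting p = P+Q·J on Ω ∩ L_I, let p^s (the symmetrization of p) denote the unique slice regular function on Ω whose restriction to Ω ∩ L_I equals P·conj(P∘conj) + Q·conj(Q∘conj), and let f∗g denote the regular product, the unique slice regular function whose restriction to Ω ∩ L_I equals (FH − G·conj(K∘conj)) + (FK + G·conj(H∘conj))·J. Then (f∗g)^s(q) = f^s(q)·g^s(q) = g^s(q)·f^s(q) for every q ∈ Ω, where · is pointwise quaternion multiplication. -/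
open Quaternion

noncomputable section

namespace SliceProof

variable {u : ℍ[ℝ]}

lemma spH_star (hu : u ∈ SpH) : star u = -u := Quaternion.star_eq_neg.2 hu.1

lemma spH_sq (hu : u ∈ SpH) : u * u = -1 := by
  have h1 : u * star u = ((normSq u : ℝ) : ℍ[ℝ]) := Quaternion.self_mul_star u
  have h2 : normSq u = 1 := by
    rw [Quaternion.normSq_eq_norm_mul_self, hu.2, one_mul]
  rw [spH_star hu, h2, mul_neg] at h1
  have h3 : -(u*u) = (1:ℍ[ℝ]) := by rw [h1]; norm_num
  rw [← h3]; norm_num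

lemma spH_neg (hu : u ∈ SpH) : -u ∈ SpH := by
  refine ⟨?_, by rw [norm_neg]; exact hu.2⟩
  show (-u).re = 0; simp [hu.1]

/-- The embedding of `ℂ` into the slice generated by `u`. -/
def toQ (u : ℍ[ℝ]) (hu : u * u = -1) : ℂ →+* ℍ[ℝ] where
  toFun z := z.re • (1 : ℍ[ℝ]) + z.im • u
  map_one' := by simp
  map_zero' := by simp
  map_add' a b := by simp only [Complex.add_re, Complex.add_im, add_smul]; module
  map_mul' a b := by
    simp only [Complex.mul_re, Complex.mul_im, add_mul, mul_add, smul_mul_smul_comm, hu,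
      one_mul, mul_one, smul_neg, sub_smul, add_smul]
    module

lemma toQ_apply (hu : u * u = -1) (z : ℂ) :
    toQ u hu z = z.re • (1 : ℍ[ℝ]) + z.im • u := rfl

lemma toQ_star (hu : u ∈ SpH) (z : ℂ) :
    star (toQ u (spH_sq hu) z) = toQ u (spH_sq hu) (starRingEnd ℂ z) := by
  simp only [toQ_apply, star_add, Quaternion.star_smul, star_one, spH_star hu,
    Complex.conj_re, Complex.conj_im, smul_neg, neg_smul]

lemma toQ_coe (hu : u * u = -1) (x : ℝ) : toQ u hu (x : ℂ) = (x : ℍ[ℝ]) := by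
  simp [toQ_apply, ← Quaternion.coe_mul_eq_smul]

lemma toQ_norm (hu : u ∈ SpH) (z : ℂ) : ‖toQ u (spH_sq hu) z‖ = ‖z‖ := by
  have h1 : toQ u (spH_sq hu) z * star (toQ u (spH_sq hu) z)
      = ((Complex.normSq z : ℝ) : ℍ[ℝ]) := by
    rw [toQ_star hu, ← map_mul, Complex.mul_conj, toQ_coe]
  have h2 : ((normSq (toQ u (spH_sq hu) z) : ℝ) : ℍ[ℝ]) = ((Complex.normSq z : ℝ) : ℍ[ℝ]) := by
    rw [← Quaternion.self_mul_star]; exact h1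
  have h3 := Quaternion.coe_injective h2
  have h4 : ‖toQ u (spH_sq hu) z‖ * ‖toQ u (spH_sq hu) z‖ = ‖z‖ * ‖z‖ := by
    rw [← Quaternion.normSq_eq_norm_mul_self, h3,
      ← Complex.sq_norm, sq]
  nlinarith [norm_nonneg (toQ u (spH_sq hu) z), norm_nonneg z]

lemma mem_sliceL_iff (hu : u * u = -1) {q : ℍ[ℝ]} :
    q ∈ sliceL u ↔ ∃ z : ℂ, q = toQ u hu z := by
  constructor
  · rintro ⟨x, y, rfl⟩
    exact ⟨⟨x, y⟩, by simp [toQ_apply, ← Quaternion.coe_mul_eq_smul]⟩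
  · rintro ⟨z, rfl⟩
    exact ⟨z.re, z.im, by simp [toQ_apply, ← Quaternion.coe_mul_eq_smul]⟩



/-- Differentiability from partial derivatives: if `f : ℂ → E` has partial derivatives `fx, fy`
at every point of an open set `U`, with `fx` continuous on `U`, then `f` is (real) Fréchet
differentiable at every point of `U`. -/
lemma hasFDerivAt_of_partials {E : Type*} [NormedAddCommGroup E] [NormedSpace ℝ E]
    (f fx fy : ℂ → E) (U : Set ℂ) (hU : IsOpen U)
    (hx : ∀ w ∈ U, HasDerivAt (fun t : ℝ => f ⟨t, w.im⟩) (fx w) w.re)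
    (hy : ∀ w ∈ U, HasDerivAt (fun t : ℝ => f ⟨w.re, t⟩) (fy w) w.im)
    (hcx : ContinuousOn fx U) {z : ℂ} (hz : z ∈ U) :
    HasFDerivAt f ((Complex.reCLM.smulRight (fx z)) + (Complex.imCLM.smulRight (fy z))) z := by
  rw [hasFDerivAt_iff_isLittleO_nhds_zero, Asymptotics.isLittleO_iff]
  intro c hc
  have hc2 : 0 < c / 2 := by linarith
  -- δ₀ : ball ⊆ U
  obtain ⟨δ₀, hδ₀, hball⟩ := Metric.isOpen_iff.1 hU z hz
  -- δ₁ : continuity of fx at z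
  have hcont : ContinuousAt fx z := hcx.continuousAt (hU.mem_nhds hz)
  obtain ⟨δ₁, hδ₁, hfx⟩ := Metric.continuousAt_iff.1 hcont (c / 2) hc2
  -- δ₂ : little-o for the y-partial at z
  have hyz := (hasDerivAt_iff_isLittleO.1 (hy z hz))
  have hyz2 := Asymptotics.isLittleO_iff.1 hyz hc2
  obtain ⟨δ₂, hδ₂, hfy⟩ := Metric.eventually_nhds_iff.1 hyz2
  set δ : ℝ := min (min δ₀ δ₁ / 2) δ₂ with hδdef
  have hδ : 0 < δ := by
    apply lt_min (by positivity) hδ₂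
  rw [Metric.eventually_nhds_iff]
  refine ⟨δ, hδ, fun {h} hh => ?_⟩
  rw [dist_zero_right] at hh
  set w : ℂ := z + h with hw
  have hre : w.re - z.re = h.re := by simp [hw]
  have him : w.im - z.im = h.im := by simp [hw]
  have habs_re : |h.re| ≤ ‖h‖ := by
    simpa [Real.norm_eq_abs] using Complex.abs_re_le_norm h
  have habs_im : |h.im| ≤ ‖h‖ := by
    simpa [Real.norm_eq_abs] using Complex.abs_im_le_norm h
  -- membership facts for points in the rectangle
  have hmem : ∀ t : ℝ, t ∈ Set.uIcc z.re w.re → dist (⟨t, w.im⟩ : ℂ) z < min δ₀ δ₁ := by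
    intro t ht
    have h1 : |t - z.re| ≤ |h.re| := by
      have := Set.abs_sub_left_of_mem_uIcc ht
      rwa [hre] at this
    have h2 : dist (⟨t, w.im⟩ : ℂ) z ≤ |t - z.re| + |w.im - z.im| := by
      have := Complex.norm_le_abs_re_add_abs_im ((⟨t, w.im⟩ : ℂ) - z)
      simpa [Complex.dist_eq, Complex.sub_re, Complex.sub_im] using this
    have h3 : dist (⟨t, w.im⟩ : ℂ) z ≤ ‖h‖ + ‖h‖ := by
      rw [him] at h2
      calc dist (⟨t, w.im⟩ : ℂ) z ≤ |t - z.re| + |h.im| := h2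
        _ ≤ ‖h‖ + ‖h‖ := add_le_add (le_trans h1 habs_re) habs_im
    calc dist (⟨t, w.im⟩ : ℂ) z ≤ ‖h‖ + ‖h‖ := h3
      _ < δ + δ := by linarith
      _ ≤ min δ₀ δ₁ / 2 + min δ₀ δ₁ / 2 := by
          have := min_le_left (min δ₀ δ₁ / 2) δ₂; linarith
      _ = min δ₀ δ₁ := by ring
  have hmemU : ∀ t : ℝ, t ∈ Set.uIcc z.re w.re → (⟨t, w.im⟩ : ℂ) ∈ U := by
    intro t ht
    exact hball (Metric.mem_ball.2 (lt_of_lt_of_le (hmem t ht) (min_le_left _ _)))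
  -- the vertical piece
  have hB : ‖f ⟨z.re, w.im⟩ - f z - h.im • fy z‖ ≤ c / 2 * ‖h‖ := by
    have hdist : dist w.im z.im < δ₂ := by
      rw [Real.dist_eq, him]
      exact lt_of_le_of_lt habs_im (lt_of_lt_of_le hh (min_le_right _ _))
    have h4 := hfy hdist
    have h5 : (⟨z.re, z.im⟩ : ℂ) = z := rfl
    rw [h5, him] at h4
    calc ‖f ⟨z.re, w.im⟩ - f z - h.im • fy z‖ ≤ c / 2 * ‖h.im‖ := h4
      _ = c / 2 * |h.im| := by rw [Real.norm_eq_abs]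
      _ ≤ c / 2 * ‖h‖ := by nlinarith
  -- the horizontal piece, by MVT
  have hA : ‖f ⟨w.re, w.im⟩ - f ⟨z.re, w.im⟩ - h.re • fx z‖ ≤ c / 2 * ‖h‖ := by
    set g : ℝ → E := fun t => f ⟨t, w.im⟩ - t • fx z with hg
    have hgd : ∀ t ∈ Set.uIcc z.re w.re,
        HasDerivWithinAt g (fx ⟨t, w.im⟩ - fx z) (Set.uIcc z.re w.re) t := by
      intro t ht
      have h1 : HasDerivAt (fun s : ℝ => f ⟨s, w.im⟩) (fx ⟨t, w.im⟩) t :=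
        hx ⟨t, w.im⟩ (hmemU t ht)
      have h2 : HasDerivAt (fun s : ℝ => s • fx z) ((1:ℝ) • fx z) t :=
        (hasDerivAt_id t).smul_const (fx z)
      rw [one_smul] at h2
      exact (h1.sub h2).hasDerivWithinAt
    have hbound : ∀ t ∈ Set.uIcc z.re w.re, ‖fx ⟨t, w.im⟩ - fx z‖ ≤ c / 2 := by
      intro t ht
      have := hfx (lt_of_lt_of_le (hmem t ht) (min_le_right _ _))
      rw [dist_eq_norm] at this
      exact this.le
    have hmvt := (convex_uIcc z.re w.re).norm_image_sub_le_of_norm_hasDerivWithin_le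
      hgd hbound (Set.left_mem_uIcc) (Set.right_mem_uIcc)
    have heq : g w.re - g z.re = f ⟨w.re, w.im⟩ - f ⟨z.re, w.im⟩ - h.re • fx z := by
      rw [hg]; simp only [← hre]; rw [sub_smul]; abel
    rw [heq] at hmvt
    calc ‖f ⟨w.re, w.im⟩ - f ⟨z.re, w.im⟩ - h.re • fx z‖ ≤ c / 2 * ‖w.re - z.re‖ := hmvt
      _ = c / 2 * |h.re| := by rw [hre, Real.norm_eq_abs]
      _ ≤ c / 2 * ‖h‖ := by nlinarith
  -- combine
  have hwf : (⟨w.re, w.im⟩ : ℂ) = w := rfl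
  have hsplit : f (z + h) - f z - (Complex.reCLM.smulRight (fx z)
      + Complex.imCLM.smulRight (fy z)) h
      = (f ⟨w.re, w.im⟩ - f ⟨z.re, w.im⟩ - h.re • fx z)
        + (f ⟨z.re, w.im⟩ - f z - h.im • fy z) := by
    rw [hwf, ← hw]
    simp only [ContinuousLinearMap.add_apply, ContinuousLinearMap.smulRight_apply,
      Complex.reCLM_apply, Complex.imCLM_apply]
    abel
  rw [hsplit]
  calc ‖(f ⟨w.re, w.im⟩ - f ⟨z.re, w.im⟩ - h.re • fx z)
        + (f ⟨z.re, w.im⟩ - f z - h.im • fy z)‖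
      ≤ ‖f ⟨w.re, w.im⟩ - f ⟨z.re, w.im⟩ - h.re • fx z‖
        + ‖f ⟨z.re, w.im⟩ - f z - h.im • fy z‖ := norm_add_le _ _
    _ ≤ c / 2 * ‖h‖ + c / 2 * ‖h‖ := add_le_add hA hB
    _ = c * ‖h‖ := by ring


theorem identity_principle (u : ℍ[ℝ]) (hu : u ∈ SpH) (U : Set ℂ)
    (hUo : IsOpen U) (hUc : IsPreconnected U)
    (m₁ m₂ m₁x m₁y m₂x m₂y : ℂ → ℍ[ℝ])
    (h1x : ∀ w ∈ U, HasDerivAt (fun t : ℝ => m₁ ⟨t, w.im⟩) (m₁x w) w.re)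
    (h1y : ∀ w ∈ U, HasDerivAt (fun t : ℝ => m₁ ⟨w.re, t⟩) (m₁y w) w.im)
    (h1c : ContinuousOn m₁x U)
    (h1cr : ∀ w ∈ U, m₁x w + u * m₁y w = 0)
    (h2x : ∀ w ∈ U, HasDerivAt (fun t : ℝ => m₂ ⟨t, w.im⟩) (m₂x w) w.re)
    (h2y : ∀ w ∈ U, HasDerivAt (fun t : ℝ => m₂ ⟨w.re, t⟩) (m₂y w) w.im)
    (h2c : ContinuousOn m₂x U)
    (h2cr : ∀ w ∈ U, m₂x w + u * m₂y w = 0)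
    (z₀ : ℂ) (hz₀ : z₀ ∈ U) (hfreq : ∃ᶠ z in nhdsWithin z₀ {z₀}ᶜ, m₁ z = m₂ z) :
    Set.EqOn m₁ m₂ U := by
  letI mod : Module ℂ ℍ[ℝ] := Module.compHom _ (toQ u (spH_sq hu))
  have smul_def : ∀ (z : ℂ) (q : ℍ[ℝ]), z • q = toQ u (spH_sq hu) z * q := fun _ _ => rfl
  letI : NormedSpace ℂ ℍ[ℝ] :=
    { norm_smul_le := fun z q => by
        rw [smul_def, norm_mul, toQ_norm hu] }
  letI : IsScalarTower ℝ ℂ ℍ[ℝ] :=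
    ⟨fun r z q => by
      rw [smul_def, smul_def, Complex.real_smul, map_mul, toQ_coe, mul_assoc,
        Quaternion.coe_mul_eq_smul]⟩
  have key : ∀ (m mx my : ℂ → ℍ[ℝ]),
      (∀ w ∈ U, HasDerivAt (fun t : ℝ => m ⟨t, w.im⟩) (mx w) w.re) →
      (∀ w ∈ U, HasDerivAt (fun t : ℝ => m ⟨w.re, t⟩) (my w) w.im) →
      ContinuousOn mx U → (∀ w ∈ U, mx w + u * my w = 0) →
      AnalyticOnNhd ℂ m U := by
    intro m mx my hx hy hc hcr
    have hdiff : DifferentiableOn ℂ m U := by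
      intro z hz
      have hre := hasFDerivAt_of_partials m mx my U hUo hx hy hc hz
      have hmy : my z = u * mx z := by
        have h1 := hcr z hz
        have h2 : u * (mx z + u * my z) = 0 := by rw [h1, mul_zero]
        rw [mul_add, ← mul_assoc, spH_sq hu, neg_one_mul, ← sub_eq_add_neg] at h2
        exact (eq_of_sub_eq_zero h2).symm
      have hL : ContinuousLinearMap.restrictScalars ℝ
            (ContinuousLinearMap.smulRight (1 : ℂ →L[ℂ] ℂ) (mx z))
          = Complex.reCLM.smulRight (mx z) + Complex.imCLM.smulRight (my z) := by
        apply ContinuousLinearMap.ext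
        intro w
        have hlhs : (ContinuousLinearMap.restrictScalars ℝ
            (ContinuousLinearMap.smulRight (1 : ℂ →L[ℂ] ℂ) (mx z))) w = w • mx z := rfl
        rw [hlhs]
        simp only [ContinuousLinearMap.add_apply, ContinuousLinearMap.smulRight_apply,
          Complex.reCLM_apply, Complex.imCLM_apply]
        rw [smul_def, toQ_apply, add_mul, smul_mul_assoc, smul_mul_assoc, one_mul, hmy]
      exact (hasFDerivAt_of_restrictScalars ℝ hre hL).differentiableAt.differentiableWithinAt
    exact hdiff.analyticOnNhd hUo
  exact (key m₁ m₁x m₁y h1x h1y h1c h1cr).eqOn_of_preconnected_of_frequently_eq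
    (key m₂ m₂x m₂y h2x h2y h2c h2cr) hUc hz₀ hfreq

lemma cr_combine (I J a b p q : ℍ[ℝ]) (hI : I * I = -1) (hJ : J * J = -1)
    (ha : a + I * p = 0) (hb : b + I * q = 0) :
    ((2:ℝ)⁻¹ • (a + b + (J * I) * (b - a)))
      + J * ((2:ℝ)⁻¹ • (p + -q + (J * I) * (-q - p))) = 0 := by
  have ha' : a = -(I * p) := eq_neg_of_add_eq_zero_left ha
  have hb' : b = -(I * q) := eq_neg_of_add_eq_zero_left hb
  subst ha' hb'
  rw [mul_smul_comm, ← smul_add]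
  have hII : ∀ v : ℍ[ℝ], I * (I * v) = -v := fun v => by rw [← mul_assoc, hI, neg_one_mul]
  have hJJ : ∀ v : ℍ[ℝ], J * (J * v) = -v := fun v => by rw [← mul_assoc, hJ, neg_one_mul]
  have : -(I * p) + -(I * q) + J * I * (-(I * q) - -(I * p))
      + J * (p + -q + J * I * (-q - p)) = 0 := by
    simp only [mul_add, mul_sub, mul_neg, neg_neg, mul_assoc, hII, hJJ]
    abel
  rw [this, smul_zero]

/-- The representation formula for slice regular functions. -/
theorem rep_formula (Ω : Set ℍ[ℝ]) (hΩ : IsSDomain Ω) (hax : AxSymm Ω)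
    (h : ℍ[ℝ] → ℍ[ℝ]) (hreg : SliceRegularOn h Ω)
    (I J' : ℍ[ℝ]) (hI : I ∈ SpH) (hJ' : J' ∈ SpH)
    (x y : ℝ) (hq : (x : ℍ[ℝ]) + y • J' ∈ Ω) :
    h ((x : ℍ[ℝ]) + y • J') = (2:ℝ)⁻¹ • (h ((x : ℍ[ℝ]) + y • I) + h ((x : ℍ[ℝ]) + (-y) • I)
      + (J' * I) * (h ((x : ℍ[ℝ]) + (-y) • I) - h ((x : ℍ[ℝ]) + y • I))) := by
  classical
  set U : Set ℂ := {z : ℂ | (z.re : ℍ[ℝ]) + z.im • J' ∈ Ω} with hU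
  have hφcont : Continuous fun z : ℂ => (z.re : ℍ[ℝ]) + z.im • J' :=
    (Quaternion.continuous_coe.comp Complex.continuous_re).add
      (Complex.continuous_im.smul continuous_const)
  have hUo : IsOpen U := hΩ.1.preimage hφcont
  -- the slice projection
  set ψ : ℍ[ℝ] → ℂ := fun q => ((q.re : ℂ) + ((q * star J').re : ℂ) * Complex.I) with hψ
  have hψre : ∀ q, (ψ q).re = q.re := by intro q; simp [hψ]
  have hψim : ∀ q, (ψ q).im = (q * star J').re := by intro q; simp [hψ]
  have hψcont : Continuous ψ := by
    apply Continuous.add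
    · exact Complex.continuous_ofReal.comp Quaternion.continuous_re
    · exact ((Complex.continuous_ofReal.comp
        (Quaternion.continuous_re.comp (continuous_mul_right (star J')))).mul continuous_const)
  have hψφ : ∀ a b : ℝ, ψ ((a : ℍ[ℝ]) + b • J') = ⟨a, b⟩ := by
    intro a b
    have hre : ((a : ℍ[ℝ]) + b • J').re = a := by
      simp [Quaternion.re_add, Quaternion.re_smul, hJ'.1]
    have him : (((a : ℍ[ℝ]) + b • J') * star J').re = b := by
      rw [spH_star hJ', add_mul, mul_neg, Quaternion.coe_mul_eq_smul]
      have h2 : (b • J') * -J' = b • (1 : ℍ[ℝ]) := by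
        rw [smul_mul_assoc, mul_neg, spH_sq hJ', neg_neg]
      rw [h2]
      simp [Quaternion.re_neg, Quaternion.re_smul, hJ'.1]
    apply Complex.ext
    · rw [hψre, hre]
    · rw [hψim, him]
  have hUeq : U = ψ '' (Ω ∩ sliceL J') := by
    apply Set.eq_of_subset_of_subset
    · intro z hz
      refine ⟨(z.re : ℍ[ℝ]) + z.im • J', ⟨hz, ⟨z.re, z.im, rfl⟩⟩, ?_⟩
      rw [hψφ]
    · rintro _ ⟨q, ⟨hqΩ, ⟨a, b, rfl⟩⟩, rfl⟩
      rw [hψφ]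
      exact hqΩ
  have hUc : IsPreconnected U := by
    rw [hUeq]
    exact ((hΩ.2.2.2 J' hJ').image ψ hψcont.continuousOn).isPreconnected
  -- the two functions
  set m₁ : ℂ → ℍ[ℝ] := fun z => h ((z.re : ℍ[ℝ]) + z.im • J') with hm₁
  set m₂ : ℂ → ℍ[ℝ] := fun z => (2:ℝ)⁻¹ • (h ((z.re : ℍ[ℝ]) + z.im • I)
      + h ((z.re : ℍ[ℝ]) + (-z.im) • I)
      + (J' * I) * (h ((z.re : ℍ[ℝ]) + (-z.im) • I) - h ((z.re : ℍ[ℝ]) + z.im • I))) with hm₂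
  obtain ⟨fx, fy, hfx, hfy, hfxc, -, hfcr⟩ := hreg J' hJ'
  obtain ⟨gx, gy, hgx, hgy, hgxc, -, hgcr⟩ := hreg I hI
  -- memberships
  have memJ : ∀ w : ℂ, w ∈ U → (w.re : ℍ[ℝ]) + w.im • J' ∈ Ω := fun w hw => hw
  have memIp : ∀ a b : ℝ, (a : ℍ[ℝ]) + b • J' ∈ Ω → (a : ℍ[ℝ]) + b • I ∈ Ω := by
    intro a b hb; exact hax a b J' hJ' hb I hI
  have memIm : ∀ a b : ℝ, (a : ℍ[ℝ]) + b • J' ∈ Ω → (a : ℍ[ℝ]) + (-b) • I ∈ Ω := by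
    intro a b hb
    have := hax a b J' hJ' hb (-I) (spH_neg hI)
    rwa [smul_neg, ← neg_smul] at this
  -- partial data for m₁
  have h1x : ∀ w ∈ U, HasDerivAt (fun t : ℝ => m₁ ⟨t, w.im⟩) (fx w.re w.im) w.re :=
    fun w hw => hfx w.re w.im (memJ w hw)
  have h1y : ∀ w ∈ U, HasDerivAt (fun t : ℝ => m₁ ⟨w.re, t⟩) (fy w.re w.im) w.im :=
    fun w hw => hfy w.re w.im (memJ w hw)
  have h1c : ContinuousOn (fun z : ℂ => fx z.re z.im) U := by
    apply hfxc.comp (Complex.continuous_re.prodMk Complex.continuous_im).continuousOn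
    intro w hw
    exact memJ w hw
  have h1cr : ∀ w ∈ U, fx w.re w.im + J' * fy w.re w.im = 0 :=
    fun w hw => hfcr w.re w.im (memJ w hw)
  -- partial data for m₂
  set m₂x : ℂ → ℍ[ℝ] := fun z => (2:ℝ)⁻¹ • (gx z.re z.im + gx z.re (-z.im)
      + (J' * I) * (gx z.re (-z.im) - gx z.re z.im)) with hm₂x
  set m₂y : ℂ → ℍ[ℝ] := fun z => (2:ℝ)⁻¹ • (gy z.re z.im + -(gy z.re (-z.im))
      + (J' * I) * (-(gy z.re (-z.im)) - gy z.re z.im)) with hm₂y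
  have h2x : ∀ w ∈ U, HasDerivAt (fun t : ℝ => m₂ ⟨t, w.im⟩) (m₂x w) w.re := by
    intro w hw
    have d1 := hgx w.re w.im (memIp w.re w.im (memJ w hw))
    have d2 := hgx w.re (-w.im) (memIm w.re w.im (memJ w hw))
    exact (((d1.add d2).add ((d2.sub d1).const_mul (J' * I))).const_smul ((2:ℝ)⁻¹))
  have h2y : ∀ w ∈ U, HasDerivAt (fun t : ℝ => m₂ ⟨w.re, t⟩) (m₂y w) w.im := by
    intro w hw
    have e1 := hgy w.re w.im (memIp w.re w.im (memJ w hw))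
    have e2' := hgy w.re (-w.im) (memIm w.re w.im (memJ w hw))
    have e2 : HasDerivAt (fun t : ℝ => h ((w.re : ℍ[ℝ]) + (-t) • I))
        (-(gy w.re (-w.im))) w.im := by
      have h3 := e2'.scomp w.im (hasDerivAt_neg w.im)
      simpa only [Function.comp_def, neg_one_smul] using h3
    exact (((e1.add e2).add ((e2.sub e1).const_mul (J' * I))).const_smul ((2:ℝ)⁻¹))
  have h2c : ContinuousOn m₂x U := by
    have c1 : ContinuousOn (fun z : ℂ => gx z.re z.im) U := by
      apply hgxc.comp (Complex.continuous_re.prodMk Complex.continuous_im).continuousOn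
      intro w hw
      exact memIp w.re w.im (memJ w hw)
    have c2 : ContinuousOn (fun z : ℂ => gx z.re (-z.im)) U := by
      apply hgxc.comp
        (Complex.continuous_re.prodMk Complex.continuous_im.neg).continuousOn
      intro w hw
      exact memIm w.re w.im (memJ w hw)
    exact (((c1.add c2).add (continuousOn_const.mul (c2.sub c1))).const_smul ((2:ℝ)⁻¹))
  have h2cr : ∀ w ∈ U, m₂x w + J' * m₂y w = 0 := by
    intro w hw
    exact cr_combine I J' (gx w.re w.im) (gx w.re (-w.im)) (gy w.re w.im) (gy w.re (-w.im))
      (spH_sq hI) (spH_sq hJ')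
      (hgcr w.re w.im (memIp w.re w.im (memJ w hw)))
      (hgcr w.re (-w.im) (memIm w.re w.im (memJ w hw)))
  -- the base point and frequent agreement
  obtain ⟨x₀, hx₀⟩ := hΩ.2.2.1
  have hz₀ : ((x₀ : ℝ) : ℂ) ∈ U := by
    show ((((x₀ : ℝ) : ℂ).re : ℝ) : ℍ[ℝ]) + (((x₀ : ℝ) : ℂ)).im • J' ∈ Ω
    simp only [Complex.ofReal_re, Complex.ofReal_im, zero_smul, add_zero]
    exact hx₀
  have hrealeq : ∀ t : ℝ, m₁ ((t : ℝ) : ℂ) = m₂ ((t : ℝ) : ℂ) := by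
    intro t
    rw [hm₁, hm₂]
    simp only [Complex.ofReal_re, Complex.ofReal_im, zero_smul, add_zero, neg_zero,
      sub_self, mul_zero]
    rw [← two_smul ℝ (h ((t : ℍ[ℝ]))), smul_smul]
    norm_num
  have hfreq : ∃ᶠ z in nhdsWithin ((x₀ : ℝ) : ℂ) {((x₀ : ℝ) : ℂ)}ᶜ, m₁ z = m₂ z := by
    have htend0 : Filter.Tendsto (fun n : ℕ => x₀ + 1 / (n + 1) : ℕ → ℝ)
        Filter.atTop (nhds x₀) := by
      have := tendsto_one_div_add_atTop_nhds_zero_nat (𝕜 := ℝ)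
      have h2 := Filter.Tendsto.add (tendsto_const_nhds (x := x₀) (f := Filter.atTop)) this
      simpa using h2
    have htend : Filter.Tendsto (fun n : ℕ => ((x₀ + 1 / (n + 1) : ℝ) : ℂ))
        Filter.atTop (nhdsWithin ((x₀ : ℝ) : ℂ) {((x₀ : ℝ) : ℂ)}ᶜ) := by
      apply tendsto_nhdsWithin_of_tendsto_nhds_of_eventually_within
      · exact (Complex.continuous_ofReal.tendsto x₀).comp htend0
      · apply Filter.Eventually.of_forall
        intro n
        simp only [Set.mem_compl_iff, Set.mem_singleton_iff]
        intro hcon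
        have := Complex.ofReal_injective hcon
        have hpos : (0:ℝ) < 1 / (n + 1) := by positivity
        linarith
    exact htend.frequently (Filter.Frequently.of_forall fun n => hrealeq _)
  have heq := identity_principle J' hJ' U hUo hUc m₁ m₂
    (fun z => fx z.re z.im) (fun z => fy z.re z.im) m₂x m₂y
    h1x h1y h1c h1cr h2x h2y h2c h2cr ((x₀ : ℝ) : ℂ) hz₀ hfreq
  have hmem : (⟨x, y⟩ : ℂ) ∈ U := hq
  have := heq hmem
  exact this

lemma toQ_mk {u : ℍ[ℝ]} (hu : u * u = -1) (a b : ℝ) :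
    toQ u hu ⟨a, b⟩ = (a : ℍ[ℝ]) + b • u := by
  simp [toQ_apply, ← Quaternion.coe_mul_eq_smul]

lemma toQ_mem_symm {Ω : Set ℍ[ℝ]} (hax : AxSymm Ω) {I : ℍ[ℝ]} (hI : I ∈ SpH) (c : ℂ)
    (hc : toQ I (spH_sq hI) c ∈ Ω) : toQ I (spH_sq hI) (starRingEnd ℂ c) ∈ Ω := by
  have h1 : toQ I (spH_sq hI) c = (c.re : ℍ[ℝ]) + c.im • I := by
    rw [← toQ_mk (spH_sq hI)]
  have h2 := hax c.re c.im I hI (h1 ▸ hc) (-I) (spH_neg hI)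
  have h3 : toQ I (spH_sq hI) (starRingEnd ℂ c) = (c.re : ℍ[ℝ]) + (-c.im) • I := by
    have h4 : (starRingEnd ℂ) c = (⟨c.re, -c.im⟩ : ℂ) := by apply Complex.ext <;> simp
    rw [h4, toQ_mk]
  rw [h3, neg_smul, ← smul_neg]
  exact h2

/-- The main pointwise computation on the distinguished slice. -/
lemma slice_values
    (Ω : Set ℍ[ℝ]) (hax : AxSymm Ω)
    (I : ℍ[ℝ]) (hI : I ∈ SpH)
    (F G H K : ℍ[ℝ] → ℍ[ℝ])
    (hFm : Set.MapsTo F (Ω ∩ sliceL I) (sliceL I))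
    (hGm : Set.MapsTo G (Ω ∩ sliceL I) (sliceL I))
    (hHm : Set.MapsTo H (Ω ∩ sliceL I) (sliceL I))
    (hKm : Set.MapsTo K (Ω ∩ sliceL I) (sliceL I))
    (P Q : ℍ[ℝ] → ℍ[ℝ])
    (hP : ∀ z : ℍ[ℝ], P z = F z * H z - G z * star (K (star z)))
    (hQ : ∀ z : ℍ[ℝ], Q z = F z * K z + G z * star (H (star z)))
    (s₁ : ℍ[ℝ] → ℍ[ℝ])
    (hs₁ : ∀ z ∈ Ω ∩ sliceL I, s₁ z = P z * star (P (star z)) + Q z * star (Q (star z)))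
    (s₂ : ℍ[ℝ] → ℍ[ℝ])
    (hs₂ : ∀ z ∈ Ω ∩ sliceL I, s₂ z = F z * star (F (star z)) + G z * star (G (star z)))
    (s₃ : ℍ[ℝ] → ℍ[ℝ])
    (hs₃ : ∀ z ∈ Ω ∩ sliceL I, s₃ z = H z * star (H (star z)) + K z * star (K (star z)))
    (z : ℍ[ℝ]) (hz : z ∈ Ω ∩ sliceL I) :
    ∃ c₂ c₃ : ℂ,
      s₂ z = toQ I (spH_sq hI) c₂ ∧ s₃ z = toQ I (spH_sq hI) c₃ ∧
      s₁ z = toQ I (spH_sq hI) (c₂ * c₃) ∧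
      s₂ (star z) = toQ I (spH_sq hI) (starRingEnd ℂ c₂) ∧
      s₃ (star z) = toQ I (spH_sq hI) (starRingEnd ℂ c₃) ∧
      s₁ (star z) = toQ I (spH_sq hI) (starRingEnd ℂ (c₂ * c₃)) := by
  obtain ⟨w, hw⟩ := (mem_sliceL_iff (spH_sq hI)).1 hz.2
  have hstarz : star z = toQ I (spH_sq hI) (starRingEnd ℂ w) := by rw [hw, toQ_star hI]
  have hzstar : star z ∈ Ω ∩ sliceL I := by
    constructor
    · rw [hstarz]; exact toQ_mem_symm hax hI w (hw ▸ hz.1)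
    · rw [hstarz]; exact (mem_sliceL_iff (spH_sq hI)).2 ⟨_, rfl⟩
  have hzz : star (star z) = z := star_star z
  obtain ⟨a, ha⟩ := (mem_sliceL_iff (spH_sq hI)).1 (hFm hz)
  obtain ⟨b, hb⟩ := (mem_sliceL_iff (spH_sq hI)).1 (hGm hz)
  obtain ⟨c, hc⟩ := (mem_sliceL_iff (spH_sq hI)).1 (hHm hz)
  obtain ⟨d, hd⟩ := (mem_sliceL_iff (spH_sq hI)).1 (hKm hz)
  obtain ⟨a', ha'⟩ := (mem_sliceL_iff (spH_sq hI)).1 (hFm hzstar)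
  obtain ⟨b', hb'⟩ := (mem_sliceL_iff (spH_sq hI)).1 (hGm hzstar)
  obtain ⟨c', hc'⟩ := (mem_sliceL_iff (spH_sq hI)).1 (hHm hzstar)
  obtain ⟨d', hd'⟩ := (mem_sliceL_iff (spH_sq hI)).1 (hKm hzstar)
  refine ⟨a * starRingEnd ℂ a' + b * starRingEnd ℂ b',
    c * starRingEnd ℂ c' + d * starRingEnd ℂ d', ?_, ?_, ?_, ?_, ?_, ?_⟩
  · rw [hs₂ z hz, ha, hb, ha', hb']
    simp only [toQ_star hI, ← map_mul, ← map_add]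
  · rw [hs₃ z hz, hc, hd, hc', hd']
    simp only [toQ_star hI, ← map_mul, ← map_add]
  · rw [hs₁ z hz, hP, hP, hQ, hQ, hzz, ha, hb, hc, hd, ha', hb', hc', hd']
    simp only [toQ_star hI, ← map_mul, ← map_sub, ← map_add]
    refine congrArg _ ?_
    simp only [map_add, map_sub, map_mul, Complex.conj_conj]
    ring
  · rw [hs₂ (star z) hzstar, hzz, ha, hb, ha', hb']
    simp only [toQ_star hI, ← map_mul, ← map_add]
    refine congrArg _ ?_
    simp only [map_add, map_mul, Complex.conj_conj]
    ring
  · rw [hs₃ (star z) hzstar, hzz, hc, hd, hc', hd']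
    simp only [toQ_star hI, ← map_mul, ← map_add]
    refine congrArg _ ?_
    simp only [map_add, map_mul, Complex.conj_conj]
    ring
  · rw [hs₁ (star z) hzstar, hP, hP, hQ, hQ, hzz, ha, hb, hc, hd, ha', hb', hc', hd']
    simp only [toQ_star hI, ← map_mul, ← map_sub, ← map_add]
    refine congrArg _ ?_
    simp only [map_add, map_sub, map_mul, Complex.conj_conj]
    ring

/-- Evaluating the representation-formula combination of an intrinsic pair of values. -/
lemma bridge {I J' : ℍ[ℝ]} (hI : I ∈ SpH) (hJ' : J' ∈ SpH) (c : ℂ) :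
    (2:ℝ)⁻¹ • (toQ I (spH_sq hI) c + toQ I (spH_sq hI) (starRingEnd ℂ c)
      + (J' * I) * (toQ I (spH_sq hI) (starRingEnd ℂ c) - toQ I (spH_sq hI) c))
    = toQ J' (spH_sq hJ') c := by
  simp only [toQ_apply, Complex.conj_re, Complex.conj_im]
  have hX : (c.re • (1:ℍ[ℝ]) + (-c.im) • I) - (c.re • 1 + c.im • I) = (-(2*c.im)) • I := by
    module
  rw [hX, mul_smul_comm, mul_assoc, spH_sq hI, mul_neg_one]
  module

end SliceProof

open SliceProof

/-- `(f ∗ g)ˢ = fˢ gˢ = gˢ fˢ`. -/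
theorem symmetrization_of_product
    (Ω : Set ℍ[ℝ]) (hΩ : IsSDomain Ω) (hax : AxSymm Ω)
    (f g : ℍ[ℝ] → ℍ[ℝ]) (hf : SliceRegularOn f Ω) (hg : SliceRegularOn g Ω)
    (I J : ℍ[ℝ]) (hI : I ∈ SpH) (hJ : J ∈ SpH) (hperp : (I * star J).re = 0)
    (F G H K : ℍ[ℝ] → ℍ[ℝ])
    (hF : SliceHolomorphicOn I F (Ω ∩ sliceL I)) (hFm : Set.MapsTo F (Ω ∩ sliceL I) (sliceL I))
    (hG : SliceHolomorphicOn I G (Ω ∩ sliceL I)) (hGm : Set.MapsTo G (Ω ∩ sliceL I) (sliceL I))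
    (hH : SliceHolomorphicOn I H (Ω ∩ sliceL I)) (hHm : Set.MapsTo H (Ω ∩ sliceL I) (sliceL I))
    (hK : SliceHolomorphicOn I K (Ω ∩ sliceL I)) (hKm : Set.MapsTo K (Ω ∩ sliceL I) (sliceL I))
    (hfs : ∀ z ∈ Ω ∩ sliceL I, f z = F z + G z * J)
    (hgs : ∀ z ∈ Ω ∩ sliceL I, g z = H z + K z * J)
    -- the splitting components of the regular product `f ∗ g`
    (P Q : ℍ[ℝ] → ℍ[ℝ])
    (hP : ∀ z : ℍ[ℝ], P z = F z * H z - G z * star (K (star z)))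
    (hQ : ∀ z : ℍ[ℝ], Q z = F z * K z + G z * star (H (star z)))
    -- `s₁ = (f ∗ g)ˢ`
    (s₁ : ℍ[ℝ] → ℍ[ℝ]) (hs₁reg : SliceRegularOn s₁ Ω)
    (hs₁ : ∀ z ∈ Ω ∩ sliceL I, s₁ z = P z * star (P (star z)) + Q z * star (Q (star z)))
    -- `s₂ = fˢ`
    (s₂ : ℍ[ℝ] → ℍ[ℝ]) (hs₂reg : SliceRegularOn s₂ Ω)
    (hs₂ : ∀ z ∈ Ω ∩ sliceL I, s₂ z = F z * star (F (star z)) + G z * star (G (star z)))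
    -- `s₃ = gˢ`
    (s₃ : ℍ[ℝ] → ℍ[ℝ]) (hs₃reg : SliceRegularOn s₃ Ω)
    (hs₃ : ∀ z ∈ Ω ∩ sliceL I, s₃ z = H z * star (H (star z)) + K z * star (K (star z))) :
    ∀ q ∈ Ω, s₁ q = s₂ q * s₃ q ∧ s₁ q = s₃ q * s₂ q := by
  intro q hq
  by_cases him : q.im = 0
  · -- q is real, hence lies on the distinguished slice
    have hqe : q = ((q.re : ℝ) : ℍ[ℝ]) := by
      conv_lhs => rw [← Quaternion.re_add_im q]
      rw [him, add_zero]
    have hzslice : q ∈ Ω ∩ sliceL I := by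
      refine ⟨hq, ⟨q.re, 0, ?_⟩⟩
      rw [zero_smul, add_zero, ← hqe]
    obtain ⟨c₂, c₃, h2, h3, h1, -, -, -⟩ := slice_values Ω hax I hI F G H K hFm hGm hHm hKm
      P Q hP hQ s₁ hs₁ s₂ hs₂ s₃ hs₃ q hzslice
    constructor
    · rw [h1, h2, h3, map_mul]
    · rw [h1, h2, h3, ← map_mul, mul_comm c₃ c₂]
  · -- q is not real
    set n : ℝ := ‖q.im‖ with hn
    have hn0 : n ≠ 0 := norm_ne_zero_iff.2 him
    have hnpos : 0 < n := lt_of_le_of_ne (norm_nonneg _) (Ne.symm hn0)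
    set J' : ℍ[ℝ] := n⁻¹ • q.im with hJ'def
    have hJ' : J' ∈ SpH := by
      constructor
      · show (n⁻¹ • q.im).re = 0
        rw [Quaternion.re_smul, Quaternion.re_im, smul_eq_mul, mul_zero]
      · show ‖n⁻¹ • q.im‖ = 1
        rw [norm_smul, Real.norm_eq_abs, abs_inv, abs_of_pos hnpos, ← hn,
          inv_mul_cancel₀ hn0]
    have hdecomp : ((q.re : ℝ) : ℍ[ℝ]) + n • J' = q := by
      rw [hJ'def, smul_smul, mul_inv_cancel₀ hn0, one_smul]
      exact Quaternion.re_add_im q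
    have hqΩ' : ((q.re : ℝ) : ℍ[ℝ]) + n • J' ∈ Ω := by rw [hdecomp]; exact hq
    -- the two evaluation points on the distinguished slice
    have hzpΩ : ((q.re : ℝ) : ℍ[ℝ]) + n • I ∈ Ω := hax q.re n J' hJ' hqΩ' I hI
    have hzpslice : ((q.re : ℝ) : ℍ[ℝ]) + n • I ∈ Ω ∩ sliceL I := ⟨hzpΩ, ⟨q.re, n, rfl⟩⟩
    obtain ⟨c₂, c₃, h2, h3, h1, h2', h3', h1'⟩ := slice_values Ω hax I hI F G H K hFm hGm hHm hKm
      P Q hP hQ s₁ hs₁ s₂ hs₂ s₃ hs₃ (((q.re : ℝ) : ℍ[ℝ]) + n • I) hzpslice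
    have hstarzp : star (((q.re : ℝ) : ℍ[ℝ]) + n • I) = ((q.re : ℝ) : ℍ[ℝ]) + (-n) • I := by
      rw [show ((q.re : ℝ) : ℍ[ℝ]) + n • I = toQ I (spH_sq hI) ⟨q.re, n⟩ from
        (toQ_mk (spH_sq hI) q.re n).symm, toQ_star hI]
      rw [show (starRingEnd ℂ) (⟨q.re, n⟩ : ℂ) = (⟨q.re, -n⟩ : ℂ) from by
        apply Complex.ext <;> simp, toQ_mk]
    -- representation formulas
    have key : ∀ s : ℍ[ℝ] → ℍ[ℝ], SliceRegularOn s Ω →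
        ∀ c : ℂ, s (((q.re : ℝ) : ℍ[ℝ]) + n • I) = toQ I (spH_sq hI) c →
        s (star (((q.re : ℝ) : ℍ[ℝ]) + n • I)) = toQ I (spH_sq hI) (starRingEnd ℂ c) →
        s q = toQ J' (spH_sq hJ') c := by
      intro s hsreg c hc hc'
      have hrep := rep_formula Ω hΩ hax s hsreg I J' hI hJ' q.re n hqΩ'
      rw [hdecomp] at hrep
      rw [hrep, ← hstarzp, hc, hc', bridge hI hJ']
    have k1 : s₁ q = toQ J' (spH_sq hJ') (c₂ * c₃) := key s₁ hs₁reg (c₂ * c₃) h1 h1'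
    have k2 : s₂ q = toQ J' (spH_sq hJ') c₂ := key s₂ hs₂reg c₂ h2 h2'
    have k3 : s₃ q = toQ J' (spH_sq hJ') c₃ := key s₃ hs₃reg c₃ h3 h3'
    constructor
    · rw [k1, k2, k3, map_mul]
    · rw [k1, k2, k3, ← map_mul, mul_comm c₃ c₂]
end
end

section
/- Let Ω ⊆ ℍ be an axially symmetric s-domain, let f, g : Ω → ℍ be slice regular, and let f∗g denote their regular product (the unique slice regular function on Ω whose restriction to a slice Ω ∩ L_I is given by the splitting formula). Then for every q ∈ Ω, (f∗g)(q) = f(q)·g(f(q)⁻¹·q·f(q)) if f(q) ≠ 0, and (f∗g)(q) = 0 if f(q) = 0. -/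
open Quaternion

noncomputable section

set_option maxHeartbeats 1600000

section Core
open Complex Asymptotics Filter

lemma coreReal {E : Type} [NormedAddCommGroup E] [NormedSpace ℝ E]
    (U : Set ℂ) (hUo : IsOpen U)
    (v vx vy : ℂ → E)
    (hx : ∀ z ∈ U, HasDerivAt (fun t : ℝ => v ⟨t, z.im⟩) (vx z) z.re)
    (hy : ∀ z ∈ U, HasDerivAt (fun t : ℝ => v ⟨z.re, t⟩) (vy z) z.im)
    (hcy : ContinuousOn vy U)
    {z : ℂ} (hz : z ∈ U) :
    HasFDerivAt v ((Complex.reCLM.smulRight (vx z)) + (Complex.imCLM.smulRight (vy z))) z := by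
  rw [hasFDerivAt_iff_isLittleO_nhds_zero]
  have heq : ∀ w : ℂ,
      v (z + w) - v z - ((Complex.reCLM.smulRight (vx z)) + (Complex.imCLM.smulRight (vy z))) w
      = (v (z + w) - v (z + (w.re : ℂ)) - w.im • vy z)
        + (v (z + (w.re : ℂ)) - v z - w.re • vx z) := by
    intro w
    simp [ContinuousLinearMap.smulRight_apply]
    abel
  have term2 : (fun w : ℂ => v (z + (w.re : ℂ)) - v z - w.re • vx z) =o[nhds 0] fun w => w := by
    have h1 : (fun h : ℝ => v ⟨z.re + h, z.im⟩ - v ⟨z.re, z.im⟩ - h • vx z) =o[nhds 0]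
        fun h : ℝ => h := by
      have := (hx z hz).hasFDerivAt
      rw [hasFDerivAt_iff_isLittleO_nhds_zero] at this
      simpa using this
    have h2 : Filter.Tendsto (fun w : ℂ => w.re) (nhds 0) (nhds 0) := by
      simpa using (Complex.continuous_re.tendsto 0)
    have h3 := h1.comp_tendsto h2
    have h4 : (fun w : ℂ => ((w.re : ℝ))) =O[nhds 0] fun w => w := by
      apply Asymptotics.isBigO_of_le
      intro w
      simpa using Complex.abs_re_le_norm w
    have h5 := h3.trans_isBigO h4
    convert h5 using 2 with w
    case e'_5 => rfl
    have e1 : z + (w.re : ℂ) = (⟨z.re + w.re, z.im⟩ : ℂ) := by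
      apply Complex.ext <;> simp
    have e2 : z = (⟨z.re, z.im⟩ : ℂ) := by apply Complex.ext <;> simp
    rw [e1]; nth_rewrite 2 [e2]
    rfl
  have term1 : (fun w : ℂ => v (z + w) - v (z + (w.re : ℂ)) - w.im • vy z) =o[nhds 0]
      fun w => w := by
    rw [Asymptotics.isLittleO_iff]
    intro c hc
    obtain ⟨r, hr, hball⟩ := Metric.isOpen_iff.1 hUo z hz
    have hcont : ContinuousAt vy z := hcy.continuousAt (hUo.mem_nhds hz)
    obtain ⟨δ1, hδ1, hδ1P⟩ := Metric.continuousAt_iff.1 hcont c hc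
    set δ := min δ1 r with hδdef
    have hδ : 0 < δ := lt_min hδ1 hr
    filter_upwards [Metric.ball_mem_nhds (0 : ℂ) (by positivity : (0:ℝ) < δ/2)] with w hw
    have hwn : ‖w‖ < δ/2 := by simpa [Complex.dist_eq] using hw
    -- the vertical segment
    set x' : ℝ := z.re + w.re with hx'
    have hmem : ∀ t : ℝ, t ∈ Set.uIcc z.im (z.im + w.im) → (⟨x', t⟩ : ℂ) ∈ Metric.ball z δ := by
      intro t ht
      have h1 : |t - z.im| ≤ |w.im| := by
        rw [Set.uIcc_eq_union] at ht
        rcases ht with ht | ht <;> rw [Set.mem_Icc] at ht <;>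
          · rw [abs_le]; constructor <;> nlinarith [abs_nonneg w.im, le_abs_self w.im, neg_abs_le w.im]
      have h2 : dist (⟨x', t⟩ : ℂ) z ≤ |w.re| + |t - z.im| := by
        have : dist (⟨x', t⟩ : ℂ) z ≤ dist (⟨x', t⟩ : ℂ) (⟨z.re, t⟩ : ℂ) + dist (⟨z.re, t⟩ : ℂ) z :=
          dist_triangle _ _ _
        refine this.trans ?_
        gcongr
        · rw [Complex.dist_eq]
          have : (⟨x', t⟩ : ℂ) - (⟨z.re, t⟩ : ℂ) = ((w.re : ℝ) : ℂ) := by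
            apply Complex.ext <;> simp [hx']
          rw [this]; simp
        · rw [Complex.dist_eq]
          have : (⟨z.re, t⟩ : ℂ) - z = ((t - z.im) : ℝ) * Complex.I := by
            apply Complex.ext <;> simp
          rw [this, norm_mul, Complex.norm_real, Complex.norm_I, mul_one, Real.norm_eq_abs]
      have h3 : |w.re| ≤ ‖w‖ := Complex.abs_re_le_norm w
      have h4 : |w.im| ≤ ‖w‖ := Complex.abs_im_le_norm w
      rw [Metric.mem_ball]
      calc dist (⟨x', t⟩ : ℂ) z ≤ |w.re| + |t - z.im| := h2
        _ ≤ ‖w‖ + ‖w‖ := by gcongr; exact h1.trans h4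
        _ < δ := by linarith
    have hmemU : ∀ t : ℝ, t ∈ Set.uIcc z.im (z.im + w.im) → (⟨x', t⟩ : ℂ) ∈ U := by
      intro t ht
      exact hball ((Metric.ball_subset_ball (min_le_right δ1 r)) (hmem t ht))
    have hbound : ∀ t ∈ Set.uIcc z.im (z.im + w.im),
        ‖vy (⟨x', t⟩ : ℂ) - vy z‖ ≤ c := by
      intro t ht
      have := hmem t ht
      rw [Metric.mem_ball] at this
      have : dist (⟨x', t⟩ : ℂ) z < δ1 := lt_of_lt_of_le this (min_le_left _ _)
      exact le_of_lt (by simpa [dist_eq_norm] using hδ1P this)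
    have hderiv : ∀ t ∈ Set.uIcc z.im (z.im + w.im),
        HasDerivWithinAt (fun s : ℝ => v (⟨x', s⟩ : ℂ) - s • vy z)
          (vy (⟨x', t⟩ : ℂ) - vy z) (Set.uIcc z.im (z.im + w.im)) t := by
      intro t ht
      have h1 : HasDerivAt (fun s : ℝ => v (⟨x', s⟩ : ℂ)) (vy (⟨x', t⟩ : ℂ)) t := by
        have := hy (⟨x', t⟩ : ℂ) (hmemU t ht)
        simpa using this
      have h2 : HasDerivAt (fun s : ℝ => s • vy z) (vy z) t := by
        simpa using (hasDerivAt_id t).smul_const (vy z)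
      exact (h1.sub h2).hasDerivWithinAt
    have key := Convex.norm_image_sub_le_of_norm_hasDerivWithin_le hderiv hbound
      (convex_uIcc _ _) (Set.left_mem_uIcc) (Set.right_mem_uIcc)
    have e1 : (⟨x', z.im + w.im⟩ : ℂ) = z + w := by apply Complex.ext <;> simp [hx']
    have e2 : (⟨x', z.im⟩ : ℂ) = z + (w.re : ℂ) := by apply Complex.ext <;> simp [hx']
    rw [e1, e2] at key
    calc ‖v (z + w) - v (z + (w.re:ℂ)) - w.im • vy z‖
        = ‖(v (z + w) - (z.im + w.im) • vy z) - (v (z + (w.re:ℂ)) - z.im • vy z)‖ := by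
          congr 1
          have : (z.im + w.im) • vy z = z.im • vy z + w.im • vy z := add_smul _ _ _
          rw [this]; abel
      _ ≤ c * ‖z.im + w.im - z.im‖ := key
      _ = c * |w.im| := by congr 1; simp
      _ ≤ c * ‖w‖ := by gcongr; exact Complex.abs_im_le_norm w
  have := term1.add term2
  apply this.congr' _ (by rfl)
  filter_upwards with w
  rw [heq w]


lemma coreComplex {E : Type} [NormedAddCommGroup E] [NormedSpace ℝ E] [NormedSpace ℂ E]
    [IsScalarTower ℝ ℂ E] [CompleteSpace E]
    (U : Set ℂ) (hUo : IsOpen U) (hUc : IsPreconnected U)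
    (v vx vy : ℂ → E)
    (hx : ∀ z ∈ U, HasDerivAt (fun t : ℝ => v ⟨t, z.im⟩) (vx z) z.re)
    (hy : ∀ z ∈ U, HasDerivAt (fun t : ℝ => v ⟨z.re, t⟩) (vy z) z.im)
    (hcy : ContinuousOn vy U)
    (hCR : ∀ z ∈ U, vy z = Complex.I • vx z)
    (x₀ : ℝ) (hx₀ : ((x₀ : ℂ)) ∈ U)
    (hre : ∀ x : ℝ, ((x : ℂ)) ∈ U → v ((x : ℂ)) = 0) :
    ∀ z ∈ U, v z = 0 := by
  have hdiff : ∀ z ∈ U, HasFDerivAt (𝕜 := ℂ) v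
      (ContinuousLinearMap.smulRight (1 : ℂ →L[ℂ] ℂ) (vx z)) z := by
    intro z hz
    have hreal := coreReal U hUo v vx vy hx hy hcy hz
    apply hasFDerivAt_of_restrictScalars ℝ hreal
    apply ContinuousLinearMap.ext
    intro w
    simp only [ContinuousLinearMap.coe_restrictScalars', ContinuousLinearMap.smulRight_apply,
      ContinuousLinearMap.add_apply, ContinuousLinearMap.one_apply, Complex.reCLM_apply,
      Complex.imCLM_apply]
    rw [hCR z hz]
    nth_rewrite 1 [← Complex.re_add_im w]
    rw [add_smul]
    congr 1
    · exact (algebraMap_smul ℂ w.re (vx z))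
    · rw [show (w.im : ℂ) * Complex.I = w.im • Complex.I by rw [Complex.real_smul]]
      rw [smul_assoc]
  have hdOn : DifferentiableOn ℂ v U := fun z hz =>
    (hdiff z hz).differentiableAt.differentiableWithinAt
  have han : AnalyticOnNhd ℂ v U := hdOn.analyticOnNhd hUo
  have hfreq : ∃ᶠ z in nhdsWithin (x₀ : ℂ) {(x₀:ℂ)}ᶜ, v z = 0 := by
    have htt : Filter.Tendsto (fun n : ℕ => ((x₀ + 1/(n+1) : ℝ) : ℂ)) Filter.atTop
        (nhds ((x₀ : ℂ))) := by
      apply Filter.Tendsto.comp (Complex.continuous_ofReal.tendsto x₀)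
      have := tendsto_one_div_add_atTop_nhds_zero_nat (𝕜 := ℝ)
      have h2 : Filter.Tendsto (fun n : ℕ => x₀ + 1/(n+1 : ℝ)) Filter.atTop (nhds (x₀ + 0)) :=
        tendsto_const_nhds.add (by exact_mod_cast this)
      simpa using h2
    have hne : ∀ n : ℕ, ((x₀ + 1/(n+1) : ℝ) : ℂ) ∈ ({(x₀:ℂ)}ᶜ : Set ℂ) := by
      intro n
      simp only [Set.mem_compl_iff, Set.mem_singleton_iff]
      intro h
      have := Complex.ofReal_injective h
      have hpos : (0:ℝ) < 1/(n+1) := by positivity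
      linarith
    have htt2 : Filter.Tendsto (fun n : ℕ => ((x₀ + 1/(n+1) : ℝ) : ℂ)) Filter.atTop
        (nhdsWithin (x₀ : ℂ) {(x₀:ℂ)}ᶜ) :=
      tendsto_nhdsWithin_of_tendsto_nhds_of_eventually_within _ htt
        (Filter.Eventually.of_forall hne)
    apply htt2.frequently
    have hev : ∀ᶠ n : ℕ in Filter.atTop, ((x₀ + 1/(n+1) : ℝ) : ℂ) ∈ U :=
      htt.eventually (hUo.mem_nhds hx₀)
    apply Filter.Eventually.frequently
    filter_upwards [hev] with n hn
    exact hre _ hn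
  have := han.eqOn_zero_of_preconnected_of_frequently_eq_zero hUc hx₀ hfreq
  intro z hz
  exact this hz

end Core

lemma coe_eq_smul_one (r : ℝ) : (r : ℍ[ℝ]) = r • (1:ℍ[ℝ]) := by
  rw [← Quaternion.coe_mul_eq_smul, mul_one]

lemma slice_mul (z w : ℂ) (L : ℍ[ℝ]) (hLL : L * L = -1) :
    ((((z*w).re : ℝ) : ℍ[ℝ]) + (z*w).im • L) =
      (((z.re : ℝ) : ℍ[ℝ]) + z.im • L) * (((w.re : ℝ) : ℍ[ℝ]) + w.im • L) := by
  have e1 : (z.im • L) * (w.im • L) = (z.im*w.im) • (L*L) := by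
    rw [smul_mul_assoc, mul_smul_comm, smul_smul]
  rw [add_mul, mul_add, mul_add, e1, hLL, Quaternion.coe_mul_eq_smul, mul_coe_eq_smul,
    Complex.mul_re, Complex.mul_im]
  simp only [Quaternion.coe_mul_eq_smul, Quaternion.smul_coe, mul_smul_comm, smul_smul, smul_neg]
  simp only [coe_eq_smul_one]
  module


lemma SpH_star {I : ℍ[ℝ]} (hI : I ∈ SpH) : star I = -I := by ext <;> simp [hI.1]

lemma SpH_normSq {I : ℍ[ℝ]} (hI : I ∈ SpH) : Quaternion.normSq I = 1 := by
  rw [Quaternion.normSq_eq_norm_mul_self, hI.2]; norm_num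

lemma SpH_mul_self {I : ℍ[ℝ]} (hI : I ∈ SpH) : I * I = -1 := by
  have h1 := SpH_star hI
  have := Quaternion.star_mul_self I
  rw [h1, SpH_normSq hI] at this
  have h2 : -(I*I) = 1 := by rw [← neg_mul, this]; norm_num
  linear_combination (norm := noncomm_ring) -h2

lemma SpH_neg {I : ℍ[ℝ]} (hI : I ∈ SpH) : -I ∈ SpH := by
  constructor
  · simp [hI.1]
  · rw [norm_neg]; exact hI.2

lemma norm_slice {L : ℍ[ℝ]} (hL : L ∈ SpH) (z : ℂ) :
    ‖((z.re : ℝ) : ℍ[ℝ]) + z.im • L‖ = ‖z‖ := by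
  have h1 : Quaternion.normSq (((z.re : ℝ) : ℍ[ℝ]) + z.im • L) = z.re^2 + z.im^2 := by
    have hc := SpH_normSq hL
    rw [Quaternion.normSq_def'] at hc ⊢
    have hre := hL.1
    simp only [Quaternion.re_add, Quaternion.imI_add, Quaternion.imJ_add, Quaternion.imK_add,
      Quaternion.re_coe, Quaternion.imI_coe, Quaternion.imJ_coe, Quaternion.imK_coe,
      Quaternion.re_smul, Quaternion.imI_smul, Quaternion.imJ_smul, Quaternion.imK_smul,
      smul_eq_mul, hre, mul_zero, add_zero, zero_add] at hc ⊢
    nlinarith [hc]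
  have h2 : ‖(((z.re : ℝ)) : ℍ[ℝ]) + z.im • L‖ * ‖(((z.re : ℝ)) : ℍ[ℝ]) + z.im • L‖
      = ‖z‖ * ‖z‖ := by
    rw [← Quaternion.normSq_eq_norm_mul_self, h1]
    have := Complex.normSq_eq_norm_sq z
    have h3 := Complex.normSq_apply z
    nlinarith [this, h3, norm_nonneg z]
  nlinarith [norm_nonneg ((((z.re : ℝ)) : ℍ[ℝ]) + z.im • L), norm_nonneg z]

def sliceHom (L : ℍ[ℝ]) (hLL : L * L = -1) : ℂ →+* ℍ[ℝ] where
  toFun z := ((z.re : ℝ) : ℍ[ℝ]) + z.im • L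
  map_one' := by simp
  map_mul' z w := slice_mul z w L hLL
  map_zero' := by simp
  map_add' z w := by
    simp only [Complex.add_re, Complex.add_im]
    push_cast
    rw [add_smul]
    abel

noncomputable def sliceModule (L : ℍ[ℝ]) (hLL : L * L = -1) : Module ℂ ℍ[ℝ] :=
  Module.compHom ℍ[ℝ] (sliceHom L hLL)

lemma sliceModule_smul_def (L : ℍ[ℝ]) (hLL : L * L = -1) (z : ℂ) (q : ℍ[ℝ]) :
    (letI := sliceModule L hLL; z • q) = (((z.re : ℝ) : ℍ[ℝ]) + z.im • L) * q := rfl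

noncomputable def sliceNormedSpace (L : ℍ[ℝ]) (hL : L ∈ SpH) :
    letI := sliceModule L (SpH_mul_self hL); NormedSpace ℂ ℍ[ℝ] :=
  letI := sliceModule L (SpH_mul_self hL)
  { norm_smul_le := by
      intro z q
      rw [sliceModule_smul_def, norm_mul, norm_slice hL]
  }

noncomputable def sliceTower (L : ℍ[ℝ]) (hL : L ∈ SpH) :
    letI := sliceModule L (SpH_mul_self hL); IsScalarTower ℝ ℂ ℍ[ℝ] :=
  letI := sliceModule L (SpH_mul_self hL)
  { smul_assoc := by
      intro r z q
      rw [sliceModule_smul_def, sliceModule_smul_def, ← smul_mul_assoc]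
      congr 1
      simp [Complex.smul_re, Complex.smul_im, Quaternion.smul_coe, smul_smul, smul_add]
  }


lemma cr_solve {P a b : ℍ[ℝ]} (hP : P * P = -1) (h : a + P * b = 0) : b = P * a := by
  have h2 : P * a + (P * P) * b = 0 := by
    have := congrArg (fun w => P * w) h
    simpa [mul_add, mul_assoc] using this
  rw [hP] at h2
  have h3 : P * a - b = 0 := by
    have : (-1 : ℍ[ℝ]) * b = -b := by noncomm_ring
    rw [this] at h2
    simpa [sub_eq_add_neg] using h2
  exact ((sub_eq_zero.mp h3)).symm


lemma rep_formula (Ω : Set ℍ[ℝ]) (hΩ : IsSDomain Ω) (hax : AxSymm Ω)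
    (I : ℍ[ℝ]) (hI : I ∈ SpH)
    (h : ℍ[ℝ] → ℍ[ℝ]) (hreg : SliceRegularOn h Ω)
    (x y : ℝ) (L : ℍ[ℝ]) (hL : L ∈ SpH) (hq : (x : ℍ[ℝ]) + y • L ∈ Ω) :
    h ((x : ℍ[ℝ]) + y • L) = (2:ℝ)⁻¹ •
      ((1 - L*I) * h ((x : ℍ[ℝ]) + y • I) + (1 + L*I) * h ((x : ℍ[ℝ]) + (-y) • I)) := by
  obtain ⟨fxI, fyI, hdxI, hdyI, hcxI, hcyI, hcrI⟩ := hreg I hI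
  obtain ⟨fxL, fyL, hdxL, hdyL, hcxL, hcyL, hcrL⟩ := hreg L hL
  have hII := SpH_mul_self hI
  have hLL := SpH_mul_self hL
  letI := sliceModule L hLL
  letI := sliceNormedSpace L hL
  letI := sliceTower L hL
  have htrans : ∀ (a b : ℝ) (P Q : ℍ[ℝ]), P ∈ SpH → Q ∈ SpH →
      (a : ℍ[ℝ]) + b • P ∈ Ω → (a : ℍ[ℝ]) + b • Q ∈ Ω := fun a b P Q hP hQ hm =>
    hax a b P hP hm Q hQ
  have hneg : ∀ (a b : ℝ), (a : ℍ[ℝ]) + b • I ∈ Ω → (a : ℍ[ℝ]) + (-b) • I ∈ Ω := by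
    intro a b hm
    have := htrans a b I (-I) hI (SpH_neg hI) hm
    rwa [smul_neg, ← neg_smul] at this
  set U : Set ℂ := {z : ℂ | ((z.re : ℝ) : ℍ[ℝ]) + z.im • I ∈ Ω} with hUdef
  have hUL : ∀ z : ℂ, z ∈ U → ((z.re:ℝ) : ℍ[ℝ]) + z.im • L ∈ Ω := fun z hz =>
    htrans _ _ I L hI hL hz
  have hUneg : ∀ z : ℂ, z ∈ U → ((z.re:ℝ) : ℍ[ℝ]) + (-z.im) • I ∈ Ω := fun z hz =>
    hneg _ _ hz
  have hUo : IsOpen U := by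
    have hc : Continuous fun z : ℂ => ((z.re : ℝ) : ℍ[ℝ]) + z.im • I := by
      apply Continuous.add
      · exact Quaternion.continuous_coe.comp Complex.continuous_re
      · exact (Complex.continuous_im).smul continuous_const
    exact hc.isOpen_preimage Ω hΩ.1
  -- connectedness
  have hUconn : IsPreconnected U := by
    have hconn := hΩ.2.2.2 I hI
    have hθc : ∀ (a b : ℝ),
        ((((a:ℍ[ℝ]) + b • I).re : ℝ) : ℂ)
          + ((-((((a:ℍ[ℝ]) + b • I) * I).re) : ℝ) : ℂ) * Complex.I = (⟨a, b⟩ : ℂ) := by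
      intro a b
      have h1 : ((a:ℍ[ℝ]) + b • I).re = a := by
        simp [hI.1]
      have h2 : (((a:ℍ[ℝ]) + b • I) * I).re = -b := by
        rw [add_mul, smul_mul_assoc, hII, Quaternion.coe_mul_eq_smul]
        simp [hI.1]
      rw [h1, h2]
      apply Complex.ext <;> simp
    have hθcont : Continuous (fun q : ℍ[ℝ] =>
        ((q.re : ℝ) : ℂ) + ((-((q * I).re) : ℝ) : ℂ) * Complex.I) := by
      apply Continuous.add
      · exact Complex.continuous_ofReal.comp Quaternion.continuous_re
      · exact (Complex.continuous_ofReal.comp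
          ((Quaternion.continuous_re.comp (continuous_id.mul continuous_const)).neg)).mul
          continuous_const
    have himg : U = (fun q : ℍ[ℝ] =>
        ((q.re : ℝ) : ℂ) + ((-((q * I).re) : ℝ) : ℂ) * Complex.I) '' (Ω ∩ sliceL I) := by
      ext z
      constructor
      · intro hz
        exact ⟨((z.re:ℝ):ℍ[ℝ]) + z.im • I, ⟨hz, ⟨z.re, z.im, rfl⟩⟩, hθc z.re z.im⟩
      · rintro ⟨q, ⟨hqΩ, ⟨a, b, rfl⟩⟩, rfl⟩
        show ((((a:ℍ[ℝ]) + b • I).re : ℝ) : ℂ)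
          + ((-((((a:ℍ[ℝ]) + b • I) * I).re) : ℝ) : ℂ) * Complex.I ∈ U
        rw [hθc a b]
        exact hqΩ
    rw [himg]
    exact (hconn.image _ hθcont.continuousOn).isPreconnected
  -- the function v and its partial derivatives
  set A : ℍ[ℝ] := 1 - L*I with hAdef
  set B : ℍ[ℝ] := 1 + L*I with hBdef
  have hA : L * A = A * I := by
    rw [hAdef]
    calc L * (1 - L*I) = L - (L*L)*I := by noncomm_ring
      _ = L + I := by rw [hLL]; noncomm_ring
      _ = I - L*(I*I) := by rw [hII]; noncomm_ring
      _ = (1 - L*I) * I := by noncomm_ring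
  have hB : L * B = -(B * I) := by
    rw [hBdef]
    calc L * (1 + L*I) = L + (L*L)*I := by noncomm_ring
      _ = L - I := by rw [hLL]; noncomm_ring
      _ = -(I + L*(I*I)) := by rw [hII]; noncomm_ring
      _ = -((1 + L*I) * I) := by noncomm_ring
  set v : ℂ → ℍ[ℝ] := fun z => h (((z.re:ℝ):ℍ[ℝ]) + z.im • L) -
    (2:ℝ)⁻¹ • (A * h (((z.re:ℝ):ℍ[ℝ]) + z.im • I) + B * h (((z.re:ℝ):ℍ[ℝ]) + (-z.im) • I))
    with hvdef
  set vx : ℂ → ℍ[ℝ] := fun z => fxL z.re z.im -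
    (2:ℝ)⁻¹ • (A * fxI z.re z.im + B * fxI z.re (-z.im)) with hvxdef
  set vy : ℂ → ℍ[ℝ] := fun z => fyL z.re z.im -
    (2:ℝ)⁻¹ • (A * fyI z.re z.im + B * (-(fyI z.re (-z.im)))) with hvydef
  have hx : ∀ z ∈ U, HasDerivAt (fun t : ℝ => v ⟨t, z.im⟩) (vx z) z.re := by
    intro z hz
    have mL := hUL z hz
    have mI : ((z.re:ℝ):ℍ[ℝ]) + z.im • I ∈ Ω := hz
    have mI' := hUneg z hz
    have d1 := hdxL z.re z.im mL
    have d2 := hdxI z.re z.im mI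
    have d3 := hdxI z.re (-z.im) mI'
    simp only [hvdef, hvxdef]
    exact d1.sub (((d2.const_mul A).add (d3.const_mul B)).const_smul ((2:ℝ)⁻¹))
  have hy : ∀ z ∈ U, HasDerivAt (fun t : ℝ => v ⟨z.re, t⟩) (vy z) z.im := by
    intro z hz
    have mL := hUL z hz
    have mI : ((z.re:ℝ):ℍ[ℝ]) + z.im • I ∈ Ω := hz
    have mI' := hUneg z hz
    have d1 := hdyL z.re z.im mL
    have d2 := hdyI z.re z.im mI
    have d3 : HasDerivAt (fun t : ℝ => h (((z.re:ℝ):ℍ[ℝ]) + (-t) • I))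
        (-(fyI z.re (-z.im))) z.im := by
      have hneg' : HasDerivAt (fun t : ℝ => -t) (-1 : ℝ) z.im := (hasDerivAt_id z.im).neg
      have base := hdyI z.re (-z.im) mI'
      have comp := HasDerivAt.scomp (g₁ := fun t : ℝ => h (((z.re:ℝ):ℍ[ℝ]) + t • I))
        (x := z.im) base hneg'
      have heqf : (fun t : ℝ => h (((z.re:ℝ):ℍ[ℝ]) + (-t) • I))
          = ((fun t : ℝ => h (((z.re:ℝ):ℍ[ℝ]) + t • I)) ∘ (fun t : ℝ => -t)) := rfl
      rw [heqf]
      exact comp.congr_deriv (by simp)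
    simp only [hvdef, hvydef]
    exact d1.sub (((d2.const_mul A).add (d3.const_mul B)).const_smul ((2:ℝ)⁻¹))
  have hcy : ContinuousOn vy U := by
    have m1 : Continuous fun z : ℂ => (z.re, z.im) :=
      Complex.continuous_re.prodMk Complex.continuous_im
    have m2 : Continuous fun z : ℂ => (z.re, -z.im) :=
      Complex.continuous_re.prodMk Complex.continuous_im.neg
    have c1 : ContinuousOn (fun z : ℂ => fyL z.re z.im) U := by
      refine hcyL.comp m1.continuousOn ?_
      intro z hz
      exact hUL z hz
    have c2 : ContinuousOn (fun z : ℂ => fyI z.re z.im) U := by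
      refine hcyI.comp m1.continuousOn ?_
      intro z hz
      exact hz
    have c3 : ContinuousOn (fun z : ℂ => fyI z.re (-z.im)) U := by
      refine hcyI.comp m2.continuousOn ?_
      intro z hz
      exact hUneg z hz
    exact c1.sub ((((continuousOn_const.mul c2).add
      (continuousOn_const.mul c3.neg))).const_smul ((2:ℝ)⁻¹))
  have hCR : ∀ z ∈ U, vy z = Complex.I • vx z := by
    intro z hz
    have mL := hUL z hz
    have mI : ((z.re:ℝ):ℍ[ℝ]) + z.im • I ∈ Ω := hz
    have mI' := hUneg z hz
    have e1 : fyL z.re z.im = L * fxL z.re z.im := cr_solve hLL (hcrL z.re z.im mL)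
    have e2 : fyI z.re z.im = I * fxI z.re z.im := cr_solve hII (hcrI z.re z.im mI)
    have e3 : fyI z.re (-z.im) = I * fxI z.re (-z.im) := cr_solve hII (hcrI z.re (-z.im) mI')
    have hsmul : Complex.I • vx z = L * vx z := by
      rw [sliceModule_smul_def]
      simp
    rw [hsmul, hvydef, hvxdef]
    simp only
    rw [e1, e2, e3]
    rw [mul_sub, mul_smul_comm]
    congr 1
    have key : L * (A * fxI z.re z.im + B * fxI z.re (-z.im))
        = A * (I * fxI z.re z.im) + B * (-(I * fxI z.re (-z.im))) := by
      calc L * (A * fxI z.re z.im + B * fxI z.re (-z.im))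
          = (L*A) * fxI z.re z.im + (L*B) * fxI z.re (-z.im) := by noncomm_ring
        _ = (A*I) * fxI z.re z.im + (-(B*I)) * fxI z.re (-z.im) := by rw [hA, hB]
        _ = A * (I * fxI z.re z.im) + B * (-(I * fxI z.re (-z.im))) := by noncomm_ring
    rw [key]
  obtain ⟨x₀, hx₀Ω⟩ := hΩ.2.2.1
  have hx₀U : ((x₀ : ℝ) : ℂ) ∈ U := by
    show ((((x₀:ℂ).re : ℝ)) : ℍ[ℝ]) + (x₀:ℂ).im • I ∈ Ω
    simp only [Complex.ofReal_re, Complex.ofReal_im, zero_smul, add_zero]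
    exact hx₀Ω
  have hre : ∀ t : ℝ, ((t : ℝ) : ℂ) ∈ U → v ((t : ℝ) : ℂ) = 0 := by
    intro t ht
    rw [hvdef]
    simp only [Complex.ofReal_re, Complex.ofReal_im, zero_smul, add_zero, neg_zero]
    have e : A * h (t:ℍ[ℝ]) + B * h (t:ℍ[ℝ]) = h (t:ℍ[ℝ]) + h (t:ℍ[ℝ]) := by
      rw [hAdef, hBdef]; noncomm_ring
    rw [e]
    module
  have main := coreComplex U hUo hUconn v vx vy hx hy hcy hCR x₀ hx₀U hre
  have hzU : (⟨x, y⟩ : ℂ) ∈ U := htrans x y L I hL hI hq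
  have hv0 := main ⟨x, y⟩ hzU
  simp only [hvdef] at hv0
  rw [sub_eq_zero] at hv0
  exact hv0


lemma alg (I J L : ℍ[ℝ]) (hII : I*I = -1) (hJJ : J*J = -1) (hIJ : I*J = -(J*I))
    (hLL : L*L = -1)
    (F₁ G₁ F₂ G₂ H₁ K₁ H₂ K₂ : ℍ[ℝ])
    (cF₁ : F₁ * I = I * F₁) (cG₁ : G₁ * I = I * G₁)
    (cF₂ : F₂ * I = I * F₂) (cG₂ : G₂ * I = I * G₂)
    (sH₁ : J * H₁ = star H₁ * J) (sK₁ : J * K₁ = star K₁ * J)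
    (sH₂ : J * H₂ = star H₂ * J) (sK₂ : J * K₂ = star K₂ * J)
    (m : ℍ[ℝ]) (hm : m = (1 - L*I) * (F₁ + G₁*J) + (1 + L*I) * (F₂ + G₂*J)) :
    2 * ((1 - L*I) * ((F₁*H₁ - G₁*star K₂) + (F₁*K₁ + G₁*star H₂)*J)
       + (1 + L*I) * ((F₂*H₂ - G₂*star K₁) + (F₂*K₂ + G₂*star H₁)*J))
    = (m - L*m*I) * (H₁ + K₁*J) + (m + L*m*I) * (H₂ + K₂*J) := by
  have hA : L * (1 - L*I) = (1 - L*I) * I := by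
    calc L * (1 - L*I) = L - (L*L)*I := by noncomm_ring
      _ = L + I := by rw [hLL]; noncomm_ring
      _ = I - L*(I*I) := by rw [hII]; noncomm_ring
      _ = (1 - L*I) * I := by noncomm_ring
  have hB : L * (1 + L*I) = -((1 + L*I) * I) := by
    calc L * (1 + L*I) = L + (L*L)*I := by noncomm_ring
      _ = L - I := by rw [hLL]; noncomm_ring
      _ = -(I + L*(I*I)) := by rw [hII]; noncomm_ring
      _ = -((1 + L*I) * I) := by noncomm_ring
  have hIJI : I*J*I = J := by
    rw [hIJ]
    calc -(J*I)*I = -(J*(I*I)) := by noncomm_ring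
      _ = J := by rw [hII]; noncomm_ring
  have st2 : I*(F₁ + G₁*J)*I = -F₁ + G₁*J := by
    calc I*(F₁ + G₁*J)*I = ((I*F₁)*I) + ((I*G₁)*J)*I := by noncomm_ring
      _ = ((F₁*I)*I) + ((G₁*I)*J)*I := by rw [← cF₁, ← cG₁]
      _ = F₁*(I*I) + G₁*(I*J*I) := by noncomm_ring
      _ = -F₁ + G₁*J := by rw [hII, hIJI]; noncomm_ring
  have st2' : I*(F₂ + G₂*J)*I = -F₂ + G₂*J := by
    calc I*(F₂ + G₂*J)*I = ((I*F₂)*I) + ((I*G₂)*J)*I := by noncomm_ring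
      _ = ((F₂*I)*I) + ((G₂*I)*J)*I := by rw [← cF₂, ← cG₂]
      _ = F₂*(I*I) + G₂*(I*J*I) := by noncomm_ring
      _ = -F₂ + G₂*J := by rw [hII, hIJI]; noncomm_ring
  have st1 : L*m*I = (1 - L*I) * (I*(F₁ + G₁*J)*I) - (1 + L*I) * (I*(F₂ + G₂*J)*I) := by
    rw [hm]
    calc L*((1 - L*I) * (F₁ + G₁*J) + (1 + L*I) * (F₂ + G₂*J))*I
        = ((L*(1 - L*I)) * (F₁ + G₁*J))*I + ((L*(1 + L*I)) * (F₂ + G₂*J))*I := by noncomm_ring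
      _ = (((1 - L*I)*I) * (F₁ + G₁*J))*I + ((-((1 + L*I)*I)) * (F₂ + G₂*J))*I := by
          rw [hA, hB]
      _ = (1 - L*I) * (I*(F₁ + G₁*J)*I) - (1 + L*I) * (I*(F₂ + G₂*J)*I) := by noncomm_ring
  have st3 : m - L*m*I = 2*((1 - L*I)*F₁ + (1 + L*I)*(G₂*J)) := by
    rw [st1, st2, st2', hm]
    noncomm_ring
  have st4 : m + L*m*I = 2*((1 - L*I)*(G₁*J) + (1 + L*I)*F₂) := by
    rw [st1, st2, st2', hm]
    noncomm_ring
  have st5 : J*(H₁ + K₁*J) = star H₁ * J - star K₁ := by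
    calc J*(H₁ + K₁*J) = J*H₁ + (J*K₁)*J := by noncomm_ring
      _ = star H₁ * J + (star K₁ * J)*J := by rw [sH₁, sK₁]
      _ = star H₁ * J + star K₁ * (J*J) := by noncomm_ring
      _ = star H₁ * J - star K₁ := by rw [hJJ]; noncomm_ring
  have st6 : J*(H₂ + K₂*J) = star H₂ * J - star K₂ := by
    calc J*(H₂ + K₂*J) = J*H₂ + (J*K₂)*J := by noncomm_ring
      _ = star H₂ * J + (star K₂ * J)*J := by rw [sH₂, sK₂]
      _ = star H₂ * J + star K₂ * (J*J) := by noncomm_ring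
      _ = star H₂ * J - star K₂ := by rw [hJJ]; noncomm_ring
  calc 2 * ((1 - L*I) * ((F₁*H₁ - G₁*star K₂) + (F₁*K₁ + G₁*star H₂)*J)
       + (1 + L*I) * ((F₂*H₂ - G₂*star K₁) + (F₂*K₂ + G₂*star H₁)*J))
      = 2 * ((1 - L*I) * (F₁*(H₁ + K₁*J))
          + (1 - L*I) * (G₁*(star H₂ * J - star K₂))
          + ((1 + L*I) * (G₂*(star H₁ * J - star K₁))
          + (1 + L*I) * (F₂*(H₂ + K₂*J)))) := by noncomm_ring
    _ = 2 * ((1 - L*I) * (F₁*(H₁ + K₁*J))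
          + (1 - L*I) * (G₁*(J*(H₂ + K₂*J)))
          + ((1 + L*I) * (G₂*(J*(H₁ + K₁*J)))
          + (1 + L*I) * (F₂*(H₂ + K₂*J)))) := by rw [st5, st6]
    _ = (2*((1 - L*I)*F₁ + (1 + L*I)*(G₂*J))) * (H₁ + K₁*J)
        + (2*((1 - L*I)*(G₁*J) + (1 + L*I)*F₂)) * (H₂ + K₂*J) := by noncomm_ring
    _ = (m - L*m*I) * (H₁ + K₁*J) + (m + L*m*I) * (H₂ + K₂*J) := by rw [st3, st4]


lemma re_mul_comm (a b : ℍ[ℝ]) : (a*b).re = (b*a).re := by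
  simp [Quaternion.re_mul]; ring

lemma slice_commI (I : ℍ[ℝ]) (a b : ℝ) :
    ((a:ℍ[ℝ]) + b • I) * I = I * ((a:ℍ[ℝ]) + b • I) := by
  rw [add_mul, mul_add, Quaternion.coe_mul_eq_smul, Quaternion.mul_coe_eq_smul,
    smul_mul_assoc, mul_smul_comm]

lemma star_of_re_zero {p : ℍ[ℝ]} (hp : p.re = 0) : star p = -p := by
  ext <;> simp [hp]

lemma star_slice {I : ℍ[ℝ]} (hsI : star I = -I) (a b : ℝ) :
    star ((a:ℍ[ℝ]) + b • I) = (a:ℍ[ℝ]) + (-b) • I := by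
  rw [star_add, Quaternion.star_smul, hsI, smul_neg, ← neg_smul]
  congr 1
  exact Quaternion.star_coe a

lemma slice_swapJ {I J : ℍ[ℝ]} (hIJ : I*J = -(J*I)) (hsI : star I = -I) (a b : ℝ) :
    J * ((a:ℍ[ℝ]) + b • I) = star ((a:ℍ[ℝ]) + b • I) * J := by
  rw [star_slice hsI, mul_add, add_mul, Quaternion.mul_coe_eq_smul,
    Quaternion.coe_mul_eq_smul, mul_smul_comm, smul_mul_assoc]
  congr 1
  rw [hIJ, smul_neg, neg_smul, neg_neg]

def iq : ℍ[ℝ] := ⟨0,1,0,0⟩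

lemma iq_mem : iq ∈ SpH := by
  constructor
  · rfl
  · have h1 : Quaternion.normSq iq = 1 := by
      rw [Quaternion.normSq_def']; norm_num [iq]
    have h2 := Quaternion.normSq_eq_norm_mul_self iq
    nlinarith [norm_nonneg iq]

lemma decomp (q : ℍ[ℝ]) : ∃ (x y : ℝ) (L : ℍ[ℝ]), L ∈ SpH ∧ q = (x:ℍ[ℝ]) + y • L := by
  by_cases him : q - (q.re : ℍ[ℝ]) = 0
  · exact ⟨q.re, 0, iq, iq_mem, by rw [zero_smul, add_zero]; exact sub_eq_zero.mp him⟩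
  · refine ⟨q.re, ‖q - (q.re:ℍ[ℝ])‖, ‖q - (q.re:ℍ[ℝ])‖⁻¹ • (q - (q.re:ℍ[ℝ])), ⟨?_, ?_⟩, ?_⟩
    · simp [Quaternion.re_smul, Quaternion.re_sub]
    · rw [norm_smul, norm_inv, norm_norm]
      exact inv_mul_cancel₀ (norm_ne_zero_iff.mpr him)
    · rw [smul_smul, mul_inv_cancel₀ (norm_ne_zero_iff.mpr him), one_smul, add_sub_cancel]



/-- `f ∗ g (q) = f(q) g(f(q)⁻¹ q f(q))`. -/
theorem product_formula
    (Ω : Set ℍ[ℝ]) (hΩ : IsSDomain Ω) (hax : AxSymm Ω)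
    (f g : ℍ[ℝ] → ℍ[ℝ]) (hf : SliceRegularOn f Ω) (hg : SliceRegularOn g Ω)
    (I J : ℍ[ℝ]) (hI : I ∈ SpH) (hJ : J ∈ SpH) (hperp : (I * star J).re = 0)
    (F G H K : ℍ[ℝ] → ℍ[ℝ])
    (hF : SliceHolomorphicOn I F (Ω ∩ sliceL I)) (hFm : Set.MapsTo F (Ω ∩ sliceL I) (sliceL I))
    (hG : SliceHolomorphicOn I G (Ω ∩ sliceL I)) (hGm : Set.MapsTo G (Ω ∩ sliceL I) (sliceL I))
    (hH : SliceHolomorphicOn I H (Ω ∩ sliceL I)) (hHm : Set.MapsTo H (Ω ∩ sliceL I) (sliceL I))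
    (hK : SliceHolomorphicOn I K (Ω ∩ sliceL I)) (hKm : Set.MapsTo K (Ω ∩ sliceL I) (sliceL I))
    (hfs : ∀ z ∈ Ω ∩ sliceL I, f z = F z + G z * J)
    (hgs : ∀ z ∈ Ω ∩ sliceL I, g z = H z + K z * J)
    -- `fg` is the regular product `f ∗ g`
    (fg : ℍ[ℝ] → ℍ[ℝ]) (hfgreg : SliceRegularOn fg Ω)
    (hfg : ∀ z ∈ Ω ∩ sliceL I, fg z =
      (F z * H z - G z * star (K (star z))) +
        (F z * K z + G z * star (H (star z))) * J) :
    ∀ q ∈ Ω, (f q ≠ 0 → fg q = f q * g ((f q)⁻¹ * q * f q)) ∧ (f q = 0 → fg q = 0) := by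
  have hII := SpH_mul_self hI
  have hJJ := SpH_mul_self hJ
  have hsI := SpH_star hI
  have hIJ : I*J = -(J*I) := by
    have h0 : (I*J).re = 0 := by
      have hp2 := hperp
      rw [SpH_star hJ, mul_neg, Quaternion.re_neg] at hp2
      linarith
    have h1 : star (I*J) = -(I*J) := star_of_re_zero h0
    rw [star_mul, SpH_star hI, SpH_star hJ] at h1
    have h2 : (-J) * (-I) = J * I := by noncomm_ring
    rw [h2] at h1
    rw [h1, neg_neg]
  intro q hq
  obtain ⟨x, y, L, hL, rfl⟩ := decomp q
  have hLL := SpH_mul_self hL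
  set z : ℍ[ℝ] := (x:ℍ[ℝ]) + y • I with hzdef
  set z' : ℍ[ℝ] := (x:ℍ[ℝ]) + (-y) • I with hz'def
  have hzΩ : z ∈ Ω := hax x y L hL hq I hI
  have hz'Ω : z' ∈ Ω := by
    have := hax x y L hL hq (-I) (SpH_neg hI)
    rwa [smul_neg, ← neg_smul] at this
  have hzs : z ∈ Ω ∩ sliceL I := ⟨hzΩ, ⟨x, y, rfl⟩⟩
  have hz's : z' ∈ Ω ∩ sliceL I := ⟨hz'Ω, ⟨x, -y, rfl⟩⟩
  have hstarz : star z = z' := star_slice hsI x y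
  have hstarz' : star z' = z := by
    rw [hz'def, star_slice hsI x (-y), neg_neg]
  -- coordinates of the splitting functions
  obtain ⟨a1, b1, hF1⟩ := hFm hzs
  obtain ⟨a2, b2, hG1⟩ := hGm hzs
  obtain ⟨a3, b3, hF2⟩ := hFm hz's
  obtain ⟨a4, b4, hG2⟩ := hGm hz's
  obtain ⟨a5, b5, hH1⟩ := hHm hzs
  obtain ⟨a6, b6, hK1⟩ := hKm hzs
  obtain ⟨a7, b7, hH2⟩ := hHm hz's
  obtain ⟨a8, b8, hK2⟩ := hKm hz's
  have cF₁ : F z * I = I * F z := by rw [hF1]; exact slice_commI I a1 b1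
  have cG₁ : G z * I = I * G z := by rw [hG1]; exact slice_commI I a2 b2
  have cF₂ : F z' * I = I * F z' := by rw [hF2]; exact slice_commI I a3 b3
  have cG₂ : G z' * I = I * G z' := by rw [hG2]; exact slice_commI I a4 b4
  have sH₁ : J * H z = star (H z) * J := by rw [hH1]; exact slice_swapJ hIJ hsI a5 b5
  have sK₁ : J * K z = star (K z) * J := by rw [hK1]; exact slice_swapJ hIJ hsI a6 b6
  have sH₂ : J * H z' = star (H z') * J := by rw [hH2]; exact slice_swapJ hIJ hsI a7 b7
  have sK₂ : J * K z' = star (K z') * J := by rw [hK2]; exact slice_swapJ hIJ hsI a8 b8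
  -- representation formulas
  have Rf := rep_formula Ω hΩ hax I hI f hf x y L hL hq
  have Rfg := rep_formula Ω hΩ hax I hI fg hfgreg x y L hL hq
  obtain ⟨m2, hm2def⟩ : ∃ m2 : ℍ[ℝ], m2 = (1 - L*I) * f z + (1 + L*I) * f z' := ⟨_, rfl⟩
  rw [← hm2def] at Rf
  have hm2exp : m2 = (1 - L*I) * (F z + G z * J) + (1 + L*I) * (F z' + G z' * J) := by
    rw [hm2def, hfs z hzs, hfs z' hz's]
  have E1 := alg I J L hII hJJ hIJ hLL (F z) (G z) (F z') (G z') (H z) (K z) (H z') (K z')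
    cF₁ cG₁ cF₂ cG₂ sH₁ sK₁ sH₂ sK₂ m2 hm2exp
  have hfgz : fg z = (F z * H z - G z * star (K z')) + (F z * K z + G z * star (H z')) * J := by
    have := hfg z hzs
    rwa [hstarz] at this
  have hfgz' : fg z' = (F z' * H z' - G z' * star (K z)) + (F z' * K z' + G z' * star (H z)) * J := by
    have := hfg z' hz's
    rwa [hstarz'] at this
  have E1' : 2 * ((1 - L*I) * fg z + (1 + L*I) * fg z')
      = (m2 - L*m2*I) * g z + (m2 + L*m2*I) * g z' := by
    rw [hfgz, hfgz', hgs z hzs, hgs z' hz's]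
    exact E1
  have two_mul_smul : ∀ X : ℍ[ℝ], (2:ℍ[ℝ]) * X = (2:ℝ) • X := by
    intro X
    rw [← Quaternion.coe_mul_eq_smul]
    norm_cast
  constructor
  · -- f q ≠ 0
    intro hfq0
    set u : ℍ[ℝ] := f ((x:ℍ[ℝ]) + y • L) with hudef
    have hp : u⁻¹ * ((x:ℍ[ℝ]) + y • L) * u = (x:ℍ[ℝ]) + y • (u⁻¹ * L * u) := by
      rw [mul_add, add_mul]
      congr 1
      · rw [← Quaternion.coe_commutes, mul_assoc, inv_mul_cancel₀ hfq0, mul_one]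
      · rw [mul_smul_comm, smul_mul_assoc]
    have hL' : u⁻¹ * L * u ∈ SpH := by
      constructor
      · have e1 : (u⁻¹ * L * u).re = (u * (u⁻¹ * L)).re := re_mul_comm _ _
        rw [e1, ← mul_assoc, mul_inv_cancel₀ hfq0, one_mul]
        exact hL.1
      · rw [norm_mul, norm_mul, norm_inv, hL.2, mul_one]
        exact inv_mul_cancel₀ (norm_ne_zero_iff.mpr hfq0)
    have hpΩ : (x:ℍ[ℝ]) + y • (u⁻¹ * L * u) ∈ Ω := hax x y L hL hq _ hL'
    have Rg := rep_formula Ω hΩ hax I hI g hg x y _ hL' hpΩ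
    rw [hp, Rg, Rfg]
    have hcomm : u * (u⁻¹ * L * u) = L * u := by
      rw [← mul_assoc, ← mul_assoc, mul_inv_cancel₀ hfq0, one_mul]
    have e : u * ((1 - (u⁻¹*L*u)*I) * g z + (1 + (u⁻¹*L*u)*I) * g z')
        = (u - L*u*I) * g z + (u + L*u*I) * g z' := by
      calc u * ((1 - (u⁻¹*L*u)*I) * g z + (1 + (u⁻¹*L*u)*I) * g z')
          = (u - (u*(u⁻¹*L*u))*I) * g z + (u + (u*(u⁻¹*L*u))*I) * g z' := by noncomm_ring
        _ = (u - L*u*I) * g z + (u + L*u*I) * g z' := by rw [hcomm]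
    have hu2 : u = (2:ℝ)⁻¹ • m2 := Rf
    have e2 : u - L*u*I = (2:ℝ)⁻¹ • (m2 - L*m2*I) := by
      rw [hu2, mul_smul_comm, smul_mul_assoc, ← smul_sub]
    have e3 : u + L*u*I = (2:ℝ)⁻¹ • (m2 + L*m2*I) := by
      rw [hu2, mul_smul_comm, smul_mul_assoc, ← smul_add]
    rw [mul_smul_comm, e, e2, e3, smul_mul_assoc, smul_mul_assoc, ← smul_add, smul_smul,
      ← E1', two_mul_smul, smul_smul]
    rw [hz'def]
    norm_num [neg_smul]
    exact Or.inl rfl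
  · -- f q = 0
    intro hfq0
    have hm20 : m2 = 0 := by
      have : (0:ℍ[ℝ]) = (2:ℝ)⁻¹ • m2 := by rw [← hfq0]; exact Rf
      have h2 := this.symm
      rcases smul_eq_zero.mp h2 with h | h
      · norm_num at h
      · exact h
    rw [Rfg]
    have hz0 : (1 - L*I) * fg z + (1 + L*I) * fg z' = 0 := by
      have h2 : (2:ℍ[ℝ]) * ((1 - L*I) * fg z + (1 + L*I) * fg z') = 0 := by
        rw [E1', hm20]
        noncomm_ring
      have h3 : (2:ℝ) • ((1 - L*I) * fg z + (1 + L*I) * fg z') = 0 := by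
        rw [← two_mul_smul]
        exact h2
      rcases smul_eq_zero.mp h3 with h | h
      · norm_num at h
      · exact h
    rw [hz0, smul_zero]
end
end
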